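/- arXiv:1011.0495 — 4 statements merged into one kernel-verified Lean document; each statement's English description precedes it below -/
import Mathlib

section
/- Let G = (V, E) be a finite digraph, s, t ∈ V with s ≠ t, let G′ be the split digraph of G with respect to s and t, let P be a set of k pairwise internally node-disjoint directed paths from s to t in G, and let P′ be the corresponding set of k pairwise edge-disjoint s–t paths in G′ (replacing each internal vertex v of a path by the arc (v_1, v_2)). If the residual digraph of G′ with respect to P′ contains a directed path from s to t, then there exists a set of k + 1 pairwise internally node-disjoint directed paths from s to t in G. -/
/-- The list of arcs traversed by a path given as a list of vertices. -/
def pathArcs {V : Type*} (p : List V) : List (V × V) := p.zip p.tail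

/-- `p` is a directed path from `s` to `t` in the digraph with arc set `E`:
a nonempty list of pairwise distinct vertices, starting at `s`, ending at `t`,
with consecutive vertices joined by arcs of `E`. -/
def IsPath {V : Type*} (E : Finset (V × V)) (s t : V) (p : List V) : Prop :=
  p.Nodup ∧ p.Chain' (fun u v => (u, v) ∈ E) ∧ p.head? = some s ∧ p.getLast? = some t

/-- Two paths are edge-disjoint if they share no arc. -/
def EdgeDisjoint {V : Type*} (p q : List V) : Prop :=
  ∀ a : V × V, a ∈ pathArcs p → a ∉ pathArcs q

/-- Two `s`–`t` paths are internally node-disjoint if the only vertices they share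
are `s` and `t`. -/
def IntDisjoint {V : Type*} (s t : V) (p q : List V) : Prop :=
  ∀ v : V, v ∈ p → v ∈ q → v = s ∨ v = t

/-- `P` is a set of pairwise edge-disjoint directed paths from `s` to `t`. -/
def IsEdgeDisjointFamily {V : Type*} (E : Finset (V × V)) (s t : V)
    (P : Finset (List V)) : Prop :=
  (∀ p ∈ P, IsPath E s t p) ∧ (P : Set (List V)).Pairwise EdgeDisjoint

/-- `P` is a set of pairwise internally node-disjoint directed paths from `s` to `t`. -/
def IsNodeDisjointFamily {V : Type*} (E : Finset (V × V)) (s t : V)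
    (P : Finset (List V)) : Prop :=
  (∀ p ∈ P, IsPath E s t p) ∧ (P : Set (List V)).Pairwise (IntDisjoint s t)

/-- The flow-arcs: arcs used by some path of `P`. -/
def flowArcs {V : Type*} [DecidableEq V] (P : Finset (List V)) : Finset (V × V) :=
  P.biUnion (fun p => (pathArcs p).toFinset)

/-- The arc set of the residualArcs digraph of `E` with respect to the path set `P`:
all arcs of `E` that are not flow-arcs, together with the reversals of all flow-arcs. -/
def residualArcs {V : Type*} [DecidableEq V] (E : Finset (V × V)) (P : Finset (List V)) :
    Finset (V × V) :=
  (E \ flowArcs P) ∪ (flowArcs P).image (fun a => (a.2, a.1))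

/-- In the split digraph, the exit node of `v`: internal nodes `v` have exit node
`(v, true)`, while `s` and `t` are their own entry and exit node (represented by
`(s, false)` and `(t, false)`). -/
def exitNode {V : Type*} [DecidableEq V] (s t v : V) : V × Bool :=
  if v = s ∨ v = t then (v, false) else (v, true)

/-- The arc set of the split digraph of `E` with respect to `s` and `t`: every internal
node `v` is replaced by an entry node `(v, false)` and an exit node `(v, true)` joined by
an arc, and every arc `(u, v)` of `E` becomes an arc from the exit node of `u` to the
entry node of `v`; `s` and `t` are not split (their entry and exit node is `(s, false)`,
resp. `(t, false)`). -/
def splitArcs {V : Type*} [Fintype V] [DecidableEq V] (E : Finset (V × V)) (s t : V) :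
    Finset ((V × Bool) × (V × Bool)) :=
  ((Finset.univ : Finset V).filter (fun v => v ≠ s ∧ v ≠ t)).image
      (fun v => ((v, false), (v, true)))
    ∪ E.image (fun a => (exitNode s t a.1, (a.2, false)))

/-- The path of the split digraph corresponding to a path `p` of `G`: each internal
vertex `v` is replaced by its entry node followed by its exit node (i.e. by the arc
`(v₁, v₂)`), while `s` and `t` are kept as single nodes. -/
def splitPath {V : Type*} [DecidableEq V] (s t : V) (p : List V) : List (V × Bool) :=
  p.flatMap (fun v => if v = s ∨ v = t then [(v, false)] else [(v, false), (v, true)])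

set_option linter.unusedSectionVars false

section AuxProof

namespace Aux
variable {V : Type*} {p : List V} {s t u v w : V}

lemma mem_pathArcs {a : V × V} :
    a ∈ pathArcs p ↔ ∃ i : ℕ, ∃ _ : i + 1 < p.length, p[i] = a.1 ∧ p[i+1] = a.2 := by
  unfold pathArcs
  rw [List.mem_iff_getElem]
  constructor
  · rintro ⟨i, h, hg⟩
    have h' := h
    rw [List.length_zip, List.length_tail, Nat.lt_min] at h'
    have hl : i + 1 < p.length := by omega
    rw [List.getElem_zip] at hg
    refine ⟨i, hl, ?_, ?_⟩
    · rw [← hg]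
    · rw [← hg]; exact (List.getElem_tail _).symm
  · rintro ⟨i, hl, h1, h2⟩
    have h : i < (p.zip p.tail).length := by
      rw [List.length_zip, List.length_tail, Nat.lt_min]; omega
    refine ⟨i, h, ?_⟩
    rw [List.getElem_zip, List.getElem_tail]
    exact Prod.ext h1 h2

lemma pathArcs_mem_left (h : (u, v) ∈ pathArcs p) : u ∈ p := by
  rw [mem_pathArcs] at h
  obtain ⟨i, hl, h1, _⟩ := h
  have := List.getElem_mem (l := p) (n := i) (by omega)
  rwa [h1] at this

lemma pathArcs_mem_right (h : (u, v) ∈ pathArcs p) : v ∈ p := by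
  rw [mem_pathArcs] at h
  obtain ⟨i, hl, _, h2⟩ := h
  have := List.getElem_mem (l := p) (n := i+1) hl
  rwa [h2] at this

lemma pathArcs_in_unique (hnd : p.Nodup) (h1 : (u, w) ∈ pathArcs p)
    (h2 : (v, w) ∈ pathArcs p) : u = v := by
  rw [mem_pathArcs] at h1 h2
  obtain ⟨i, hi, hi1, hi2⟩ := h1
  obtain ⟨j, hj, hj1, hj2⟩ := h2
  have : i + 1 = j + 1 := (hnd.getElem_inj_iff (hi := hi) (hj := hj)).mp (hi2.trans hj2.symm)
  have hij : i = j := by omega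
  subst hij
  exact hi1.symm.trans hj1

lemma pathArcs_out_unique (hnd : p.Nodup) (h1 : (w, u) ∈ pathArcs p)
    (h2 : (w, v) ∈ pathArcs p) : u = v := by
  rw [mem_pathArcs] at h1 h2
  obtain ⟨i, hi, hi1, hi2⟩ := h1
  obtain ⟨j, hj, hj1, hj2⟩ := h2
  have hij : i = j := (hnd.getElem_inj_iff (hi := by omega) (hj := by omega)).mp (hi1.trans hj1.symm)
  subst hij
  exact hi2.symm.trans hj2

lemma exists_arc_in (hh : p.head? = some s) (hw : w ∈ p) (hws : w ≠ s) :
    ∃ u, (u, w) ∈ pathArcs p := by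
  obtain ⟨ys, rfl⟩ := List.head?_eq_some_iff.mp hh
  rw [List.mem_iff_getElem] at hw
  obtain ⟨j, hj, hjw⟩ := hw
  match j, hj, hjw with
  | 0, hj, hjw => exact absurd hjw.symm hws
  | (i+1), hj, hjw =>
    refine ⟨(s :: ys)[i], ?_⟩
    rw [mem_pathArcs]
    exact ⟨i, hj, rfl, hjw⟩

lemma exists_arc_out (hl : p.getLast? = some t) (hw : w ∈ p) (hwt : w ≠ t) :
    ∃ u, (w, u) ∈ pathArcs p := by
  rw [List.mem_iff_getElem] at hw
  obtain ⟨j, hj, hjw⟩ := hw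
  obtain ⟨ys, rfl⟩ := List.getLast?_eq_some_iff.mp hl
  have hlen : (ys ++ [t]).length = ys.length + 1 := by simp
  have hjlt : j + 1 < (ys ++ [t]).length := by
    rcases Nat.lt_or_ge (j+1) (ys.length + 1) with h | h
    · omega
    · exfalso
      have hje : j = ys.length := by omega
      have := List.getElem_concat_length hje hj
      rw [hjw] at this
      exact hwt this
  refine ⟨(ys ++ [t])[j+1], ?_⟩
  rw [mem_pathArcs]
  exact ⟨j, hjlt, hjw, rfl⟩

lemma not_arc_in_head (hnd : p.Nodup) (hh : p.head? = some s) : (u, s) ∉ pathArcs p := by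
  intro h
  rw [mem_pathArcs] at h
  obtain ⟨i, hi, _, h2⟩ := h
  obtain ⟨ys, rfl⟩ := List.head?_eq_some_iff.mp hh
  have h0 : (s :: ys)[0]'(by simp) = s := rfl
  have : i + 1 = 0 :=
    (hnd.getElem_inj_iff (hi := hi) (hj := by simp)).mp (h2.trans h0.symm)
  omega

lemma not_arc_out_last (hnd : p.Nodup) (hl : p.getLast? = some t) : (t, u) ∉ pathArcs p := by
  intro h
  rw [mem_pathArcs] at h
  obtain ⟨i, hi, h1, _⟩ := h
  obtain ⟨ys, rfl⟩ := List.getLast?_eq_some_iff.mp hl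
  have h0 : (ys ++ [t])[ys.length]'(by simp) = t := List.getElem_concat_length rfl (by simp)
  have hi' : i = ys.length :=
    (hnd.getElem_inj_iff (hi := by omega) (hj := by simp)).mp (h1.trans h0.symm)
  have : (ys ++ [t]).length = ys.length + 1 := by simp
  omega

lemma chain'_arcs {R : V → V → Prop} (hc : p.Chain' R) (h : (u, v) ∈ pathArcs p) :
    R u v := by
  rw [mem_pathArcs] at h
  obtain ⟨i, hi, h1, h2⟩ := h
  rw [List.Chain', List.isChain_iff_getElem] at hc
  have := hc i (by omega)
  simpa [List.get_eq_getElem, h1, h2] using this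

end Aux

namespace Aux
variable {V : Type*} {p : List V} {s t u : V}

lemma not_arc_self (hnd : p.Nodup) : (u, u) ∉ pathArcs p := by
  intro h
  rw [mem_pathArcs] at h
  obtain ⟨i, hi, h1, h2⟩ := h
  have : i = i + 1 :=
    (hnd.getElem_inj_iff (hi := by omega) (hj := hi)).mp (h1.trans h2.symm)
  omega

lemma head_mem (hh : p.head? = some s) : s ∈ p := by
  obtain ⟨ys, rfl⟩ := List.head?_eq_some_iff.mp hh
  exact List.mem_cons_self

lemma last_mem (hl : p.getLast? = some t) : t ∈ p := by
  obtain ⟨ys, rfl⟩ := List.getLast?_eq_some_iff.mp hl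
  simp

lemma arc_from_head (hnd : p.Nodup) (hh : p.head? = some s)
    (h : (s, u) ∈ pathArcs p) : p.tail.head? = some u := by
  rw [mem_pathArcs] at h
  obtain ⟨i, hi, h1, h2⟩ := h
  obtain ⟨ys, rfl⟩ := List.head?_eq_some_iff.mp hh
  have h0 : (s :: ys)[0]'(by simp) = s := rfl
  have hi0 : i = 0 := (hnd.getElem_inj_iff (hi := by omega) (hj := by simp)).mp (h1.trans h0.symm)
  subst hi0
  simp only [List.length_cons] at hi
  match ys, hi, h2 with
  | a :: l, _, h2 =>
    have : a = u := h2
    rw [List.tail_cons, List.head?_cons, this]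

lemma nodup_head_last_eq {a : V} (hnd : p.Nodup) (hh : p.head? = some a)
    (hl : p.getLast? = some a) : p = [a] := by
  obtain ⟨ys, rfl⟩ := List.head?_eq_some_iff.mp hh
  cases ys with
  | nil => rfl
  | cons b l =>
    exfalso
    have hne : b :: l ≠ [] := by simp
    have : (a :: b :: l).getLast? = (b :: l).getLast? :=
      List.getLast?_append_of_ne_nil [a] hne
    rw [this] at hl
    obtain ⟨zs, hzs⟩ := List.getLast?_eq_some_iff.mp hl
    have : a ∈ b :: l := by rw [hzs]; simp
    rw [List.nodup_cons] at hnd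
    exact hnd.1 this
end Aux

namespace Aux2
open Aux
variable {W : Type*} [DecidableEq W] [Fintype W]

def InA (F : Finset (W × W)) (w : W) : Finset (W × W) := F.filter (fun a => a.2 = w)
def OutA (F : Finset (W × W)) (w : W) : Finset (W × W) := F.filter (fun a => a.1 = w)

lemma mem_InA {F : Finset (W × W)} {w : W} {a : W × W} :
    a ∈ InA F w ↔ a ∈ F ∧ a.2 = w := Finset.mem_filter

lemma mem_OutA {F : Finset (W × W)} {w : W} {a : W × W} :
    a ∈ OutA F w ↔ a ∈ F ∧ a.1 = w := Finset.mem_filter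

def Valid (F : Finset (W × W)) (s t : W) : Prop :=
  InA F s = ∅ ∧ OutA F t = ∅ ∧
  ∀ w, w ≠ s → w ≠ t → (InA F w).card = (OutA F w).card ∧ (InA F w).card ≤ 1

variable {F : Finset (W × W)} {s t : W}

lemma chain'_mem_arcs {p : List W} (hc : p.Chain' (fun u v => (u, v) ∈ F)) {a : W × W}
    (ha : a ∈ pathArcs p) : a ∈ F := by
  obtain ⟨u, v⟩ := a
  exact chain'_arcs hc ha

lemma walk_aux (hV : Valid F s t) :
    ∀ n : ℕ, ∀ (q : List W) (x : W),
    Fintype.card W < n + q.length → q.Nodup →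
    q.Chain' (fun a b => (a, b) ∈ F) → q.head? = some s →
    q.getLast? = some x → (∃ z, (z, x) ∈ F) → x ≠ t → t ∉ q →
    ∃ p, IsPath F s t p := by
  intro n
  induction n with
  | zero =>
    intro q x hlen hnd _ _ _ _ _ _
    exact absurd hnd.length_le_card (by omega)
  | succ n ih =>
    intro q x hlen hnd hch hhd hlast hin hxt htq
    have hq : q ≠ [] := by rintro rfl; simp at hhd
    have hxs : x ≠ s := by
      rintro rfl
      obtain ⟨z, hz⟩ := hin
      have : (z, x) ∈ InA F x := mem_InA.mpr ⟨hz, rfl⟩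
      rw [hV.1] at this
      exact absurd this (Finset.notMem_empty _)
    obtain ⟨hcons, hle⟩ := hV.2.2 x hxs hxt
    have hInpos : 0 < (InA F x).card := by
      obtain ⟨z, hz⟩ := hin
      exact Finset.card_pos.mpr ⟨(z, x), mem_InA.mpr ⟨hz, rfl⟩⟩
    obtain ⟨e, he⟩ := Finset.card_pos.mp (hcons ▸ hInpos)
    rw [mem_OutA] at he
    obtain ⟨heF, he1⟩ := he
    set y := e.2 with hy
    have hxy : (x, y) ∈ F := by
      have heq : e = (x, y) := Prod.ext he1 rfl
      rwa [heq] at heF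
    rcases eq_or_ne y t with rfl | hyt
    · refine ⟨q ++ [y], ?_, ?_, ?_, ?_⟩
      · rw [List.nodup_append]
        exact ⟨hnd, List.nodup_singleton _, by intro a ha b hb; simp at hb; subst hb; exact fun h => htq (h ▸ ha)⟩
      · rw [List.Chain', List.isChain_append]
        refine ⟨hch, List.isChain_singleton _, ?_⟩
        intro a ha b hb
        rw [hlast, Option.mem_some_iff] at ha
        simp only [List.head?_cons, Option.mem_some_iff] at hb
        rw [← ha, ← hb]
        exact hxy
      · rwa [List.head?_append_of_ne_nil _ hq]
      · exact List.getLast?_concat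
    · have hys : y ≠ s := by
        rintro rfl
        have : (x, y) ∈ InA F y := mem_InA.mpr ⟨hxy, rfl⟩
        rw [hV.1] at this
        exact absurd this (Finset.notMem_empty _)
      have hyq : y ∉ q := by
        intro hmem
        obtain ⟨u, hu⟩ := exists_arc_in hhd hmem hys
        have huF : (u, y) ∈ F := chain'_arcs hch hu
        have hux : u ≠ x := by rintro rfl; exact not_arc_out_last hnd hlast hu
        have h2 : 1 < (InA F y).card := by
          refine Finset.one_lt_card.mpr ⟨(u, y), mem_InA.mpr ⟨huF, rfl⟩,
            (x, y), mem_InA.mpr ⟨hxy, rfl⟩, ?_⟩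
          simp [hux]
        have := (hV.2.2 y hys hyt).2
        omega
      refine ih (q ++ [y]) y (by simp; omega) ?_ ?_ ?_ ?_ ⟨x, hxy⟩ hyt ?_
      · rw [List.nodup_append]
        exact ⟨hnd, List.nodup_singleton _, by intro a ha b hb; simp at hb; subst hb; exact fun h => hyq (h ▸ ha)⟩
      · rw [List.Chain', List.isChain_append]
        refine ⟨hch, List.isChain_singleton _, ?_⟩
        intro a ha b hb
        rw [hlast, Option.mem_some_iff] at ha
        simp only [List.head?_cons, Option.mem_some_iff] at hb
        rw [← ha, ← hb]
        exact hxy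
      · rwa [List.head?_append_of_ne_nil _ hq]
      · exact List.getLast?_concat
      · simp only [List.mem_append, List.mem_singleton]
        rintro (h | h)
        · exact htq h
        · exact hyt h.symm

lemma exists_path (hV : Valid F s t) (hst : s ≠ t) {x0 : W} (hx : (s, x0) ∈ F) :
    ∃ p, IsPath F s t p := by
  have hx0s : x0 ≠ s := by
    rintro rfl
    have : (x0, x0) ∈ InA F x0 := mem_InA.mpr ⟨hx, rfl⟩
    rw [hV.1] at this
    exact absurd this (Finset.notMem_empty _)
  rcases eq_or_ne x0 t with rfl | hx0t
  · exact ⟨[s, x0], by simp [hst], by simp [List.Chain', hx], rfl, rfl⟩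
  · refine walk_aux hV (Fintype.card W) [s, x0] x0 (by simp) ?_ ?_ rfl rfl ⟨s, hx⟩ hx0t ?_
    · simp [hx0s.symm]  -- nodup [s, x0] needs s ≠ x0
    · simp [List.Chain', hx]
    · simp [Ne.symm hst, Ne.symm hx0t]
end Aux2

namespace Aux2
open Aux
variable {W : Type*} [DecidableEq W] [Fintype W] {q : List W} {s t w : W}

omit [DecidableEq W] [Fintype W] in
lemma prodeta_mem {e : W × W} {l : List (W × W)} (h : e ∈ l) : (e.1, e.2) ∈ l := by
  rwa [Prod.mk.eta]

lemma pathArcs_InA_le (h : q.Nodup) (w : W) : (InA (pathArcs q).toFinset w).card ≤ 1 := by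
  apply Finset.card_le_one.mpr
  intro e₁ he₁ e₂ he₂
  obtain ⟨h1, h12⟩ := mem_InA.mp he₁
  obtain ⟨h2, h22⟩ := mem_InA.mp he₂
  rw [List.mem_toFinset] at h1 h2
  have h1' : (e₁.1, w) ∈ pathArcs q := by rw [← h12, Prod.mk.eta]; exact h1
  have h2' : (e₂.1, w) ∈ pathArcs q := by rw [← h22, Prod.mk.eta]; exact h2
  have := pathArcs_in_unique h h1' h2'
  exact Prod.ext this (h12.trans h22.symm)

lemma pathArcs_OutA_le (h : q.Nodup) (w : W) : (OutA (pathArcs q).toFinset w).card ≤ 1 := by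
  apply Finset.card_le_one.mpr
  intro e₁ he₁ e₂ he₂
  obtain ⟨h1, h12⟩ := mem_OutA.mp he₁
  obtain ⟨h2, h22⟩ := mem_OutA.mp he₂
  rw [List.mem_toFinset] at h1 h2
  have h1' : (w, e₁.2) ∈ pathArcs q := by rw [← h12, Prod.mk.eta]; exact h1
  have h2' : (w, e₂.2) ∈ pathArcs q := by rw [← h22, Prod.mk.eta]; exact h2
  have := pathArcs_out_unique h h1' h2'
  exact Prod.ext (h12.trans h22.symm) this

lemma pathArcs_InA_head (h : q.Nodup) (hh : q.head? = some s) :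
    InA (pathArcs q).toFinset s = ∅ := by
  apply Finset.eq_empty_iff_forall_notMem.mpr
  intro e he
  obtain ⟨h1, h12⟩ := mem_InA.mp he
  rw [List.mem_toFinset] at h1
  have h1' : (e.1, s) ∈ pathArcs q := by rw [← h12, Prod.mk.eta]; exact h1
  exact not_arc_in_head h hh h1'

lemma pathArcs_OutA_last (h : q.Nodup) (hl : q.getLast? = some t) :
    OutA (pathArcs q).toFinset t = ∅ := by
  apply Finset.eq_empty_iff_forall_notMem.mpr
  intro e he
  obtain ⟨h1, h12⟩ := mem_OutA.mp he
  rw [List.mem_toFinset] at h1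
  have h1' : (t, e.2) ∈ pathArcs q := by rw [← h12, Prod.mk.eta]; exact h1
  exact not_arc_out_last h hl h1'

lemma pathArcs_card_eq (hnd : q.Nodup) (hh : q.head? = some s) (hl : q.getLast? = some t)
    (hws : w ≠ s) (hwt : w ≠ t) :
    (InA (pathArcs q).toFinset w).card = (OutA (pathArcs q).toFinset w).card := by
  have hiff : (InA (pathArcs q).toFinset w).Nonempty ↔
      (OutA (pathArcs q).toFinset w).Nonempty := by
    constructor
    · rintro ⟨e, he⟩
      obtain ⟨h1, h12⟩ := mem_InA.mp he
      rw [List.mem_toFinset] at h1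
      have hwm : w ∈ q := h12 ▸ pathArcs_mem_right (prodeta_mem h1)
      obtain ⟨y, hy⟩ := exists_arc_out hl hwm hwt
      exact ⟨(w, y), mem_OutA.mpr ⟨List.mem_toFinset.mpr hy, rfl⟩⟩
    · rintro ⟨e, he⟩
      obtain ⟨h1, h12⟩ := mem_OutA.mp he
      rw [List.mem_toFinset] at h1
      have hwm : w ∈ q := h12 ▸ pathArcs_mem_left (prodeta_mem h1)
      obtain ⟨y, hy⟩ := exists_arc_in hh hwm hws
      exact ⟨(y, w), mem_InA.mpr ⟨List.mem_toFinset.mpr hy, rfl⟩⟩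
  have h1 := pathArcs_InA_le hnd w
  have h2 := pathArcs_OutA_le hnd w
  rcases (InA (pathArcs q).toFinset w).eq_empty_or_nonempty with h | h
  · rcases (OutA (pathArcs q).toFinset w).eq_empty_or_nonempty with h' | h'
    · rw [h, h']
    · exact absurd (hiff.mpr h') (by rw [h]; simp)
  · have h' := hiff.mp h
    have := Finset.card_pos.mpr h
    have := Finset.card_pos.mpr h'
    omega
end Aux2

namespace Aux2
open Aux
variable {W : Type*} [DecidableEq W] [Fintype W] {F : Finset (W × W)} {s t : W}

lemma InA_sdiff {A : Finset (W × W)} {w : W} :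
    InA (F \ A) w = InA F w \ InA A w := by
  ext a
  simp only [mem_InA, Finset.mem_sdiff, mem_InA]
  tauto

lemma OutA_sdiff {A : Finset (W × W)} {w : W} :
    OutA (F \ A) w = OutA F w \ OutA A w := by
  ext a
  simp only [mem_OutA, Finset.mem_sdiff, mem_OutA]
  tauto

lemma removal (hV : Valid F s t) (hst : s ≠ t) {p : List W} (hp : IsPath F s t p) :
    Valid (F \ (pathArcs p).toFinset) s t ∧
      (OutA (F \ (pathArcs p).toFinset) s).card + 1 = (OutA F s).card := by
  obtain ⟨hnd, hch, hhd, hlast⟩ := hp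
  set A := (pathArcs p).toFinset with hA
  have hAF : A ⊆ F := by
    intro a ha
    rw [hA, List.mem_toFinset] at ha
    exact chain'_mem_arcs hch ha
  have hsp : s ∈ p := by
    obtain ⟨ys, rfl⟩ := List.head?_eq_some_iff.mp hhd
    exact List.mem_cons_self
  -- Valid part
  constructor
  · refine ⟨?_, ?_, ?_⟩
    · rw [InA_sdiff]
      rw [hV.1]
      simp
    · rw [OutA_sdiff]
      rw [hV.2.1]
      simp
    · intro w hws hwt
      by_cases hwp : w ∈ p
      · -- in-arc and out-arc of p at w
        obtain ⟨u, hu⟩ := exists_arc_in hhd hwp hws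
        obtain ⟨u', hu'⟩ := exists_arc_out hlast hwp hwt
        have huF : (u, w) ∈ InA F w := mem_InA.mpr ⟨chain'_arcs hch hu, rfl⟩
        have hu'F : (w, u') ∈ OutA F w := mem_OutA.mpr ⟨chain'_arcs hch hu', rfl⟩
        obtain ⟨hcons, hle⟩ := hV.2.2 w hws hwt
        have hIn1 : InA F w = {(u, w)} := by
          apply Finset.eq_singleton_iff_unique_mem.mpr
          refine ⟨huF, fun a ha => ?_⟩
          by_contra hne
          have : 1 < (InA F w).card := Finset.one_lt_card.mpr ⟨a, ha, _, huF, hne⟩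
          omega
        have hOutle : (OutA F w).card ≤ 1 := by omega
        have hOut1 : OutA F w = {(w, u')} := by
          apply Finset.eq_singleton_iff_unique_mem.mpr
          refine ⟨hu'F, fun a ha => ?_⟩
          by_contra hne
          have : 1 < (OutA F w).card := Finset.one_lt_card.mpr ⟨a, ha, _, hu'F, hne⟩
          omega
        have hInE : InA (F \ A) w = ∅ := by
          rw [InA_sdiff, hIn1]
          apply Finset.sdiff_eq_empty_iff_subset.mpr
          intro a ha
          rw [Finset.mem_singleton] at ha
          subst ha
          exact mem_InA.mpr ⟨List.mem_toFinset.mpr hu, rfl⟩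
        have hOutE : OutA (F \ A) w = ∅ := by
          rw [OutA_sdiff, hOut1]
          apply Finset.sdiff_eq_empty_iff_subset.mpr
          intro a ha
          rw [Finset.mem_singleton] at ha
          subst ha
          exact mem_OutA.mpr ⟨List.mem_toFinset.mpr hu', rfl⟩
        rw [hInE, hOutE]
        simp
      · have hInE : InA A w = ∅ := by
          apply Finset.eq_empty_iff_forall_notMem.mpr
          intro a ha
          obtain ⟨haA, ha2⟩ := mem_InA.mp ha
          rw [List.mem_toFinset] at haA
          obtain ⟨a1, a2⟩ := a
          cases ha2
          exact hwp (pathArcs_mem_right haA)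
        have hOutE : OutA A w = ∅ := by
          apply Finset.eq_empty_iff_forall_notMem.mpr
          intro a ha
          obtain ⟨haA, ha1⟩ := mem_OutA.mp ha
          rw [List.mem_toFinset] at haA
          obtain ⟨a1, a2⟩ := a
          cases ha1
          exact hwp (pathArcs_mem_left haA)
        rw [InA_sdiff, OutA_sdiff, hInE, hOutE]
        simpa using hV.2.2 w hws hwt
  · -- count at s
    obtain ⟨y0, hy0⟩ := exists_arc_out hlast hsp hst
    have hOutA : OutA A s = {(s, y0)} := by
      apply Finset.eq_singleton_iff_unique_mem.mpr
      constructor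
      · exact mem_OutA.mpr ⟨List.mem_toFinset.mpr hy0, rfl⟩
      · intro a ha
        obtain ⟨haA, ha1⟩ := mem_OutA.mp ha
        rw [List.mem_toFinset] at haA
        obtain ⟨a1, a2⟩ := a
        cases ha1
        have := pathArcs_out_unique hnd haA hy0
        rw [this]
    have hsub : OutA A s ⊆ OutA F s := by
      intro a ha
      obtain ⟨haA, ha1⟩ := mem_OutA.mp ha
      exact mem_OutA.mpr ⟨hAF haA, ha1⟩
    rw [OutA_sdiff, Finset.card_sdiff_of_subset hsub, hOutA]
    have : (s, y0) ∈ OutA F s := hsub (hOutA ▸ Finset.mem_singleton_self _)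
    have hpos : 0 < (OutA F s).card := Finset.card_pos.mpr ⟨_, this⟩
    simp only [Finset.card_singleton]
    omega

lemma decomp (hst : s ≠ t) :
    ∀ (m : ℕ) (F : Finset (W × W)), Valid F s t → (OutA F s).card = m →
    ∃ Q : Finset (List W), Q.card = m ∧ (∀ p ∈ Q, IsPath F s t p) ∧
      (Q : Set (List W)).Pairwise (IntDisjoint s t) := by
  intro m
  induction m with
  | zero => exact fun F _ _ => ⟨∅, by simp, by simp, by simp⟩
  | succ m ih =>
    intro F hV hc
    obtain ⟨e, he⟩ := Finset.card_pos.mp (by omega : 0 < (OutA F s).card)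
    obtain ⟨heF, he1⟩ := mem_OutA.mp he
    have hsx : (s, e.2) ∈ F := by
      have : e = (s, e.2) := Prod.ext he1 rfl
      rwa [this] at heF
    obtain ⟨p, hp⟩ := exists_path hV hst hsx
    set F₂ := F \ (pathArcs p).toFinset with hF₂
    obtain ⟨hV₂, hcnt⟩ := removal hV hst hp
    obtain ⟨Q₂, hQc, hQp, hQd⟩ := ih F₂ hV₂ (by simp only [hF₂]; omega)
    have harc : ∀ q ∈ Q₂, ∀ a ∈ pathArcs q, a ∈ F₂ := by
      intro q hq a ha
      exact chain'_mem_arcs (hQp q hq).2.1 ha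
    have hfirst : ∀ q, IsPath F s t q → ∃ y, (s, y) ∈ pathArcs q := by
      intro q hq
      obtain ⟨ys, hys⟩ := List.head?_eq_some_iff.mp hq.2.2.1
      exact exists_arc_out hq.2.2.2 (by rw [hys]; exact List.mem_cons_self) hst
    have hpQ : p ∉ Q₂ := by
      intro hmem
      obtain ⟨y, hy⟩ := hfirst p hp
      have : (s, y) ∈ F₂ := harc p hmem _ hy
      rw [hF₂, Finset.mem_sdiff] at this
      exact this.2 (List.mem_toFinset.mpr hy)
    have hdisj : ∀ q ∈ Q₂, IntDisjoint s t p q := by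
      intro q hq v hvp hvq
      by_contra hcon
      push_neg at hcon
      obtain ⟨hvs, hvt⟩ := hcon
      obtain ⟨u1, hu1⟩ := exists_arc_in hp.2.2.1 hvp hvs
      obtain ⟨u2, hu2⟩ := exists_arc_in (hQp q hq).2.2.1 hvq hvs
      have h1 : (u1, v) ∈ InA F v := mem_InA.mpr ⟨chain'_mem_arcs hp.2.1 hu1, rfl⟩
      have h2F₂ : (u2, v) ∈ F₂ := harc q hq _ hu2
      have h2 : (u2, v) ∈ InA F v := by
        rw [hF₂, Finset.mem_sdiff] at h2F₂
        exact mem_InA.mpr ⟨h2F₂.1, rfl⟩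
      have hne : (u1, v) ≠ (u2, v) := by
        intro heq
        rw [hF₂, Finset.mem_sdiff] at h2F₂
        rw [← heq] at h2F₂
        exact h2F₂.2 (List.mem_toFinset.mpr hu1)
      have : 1 < (InA F v).card := Finset.one_lt_card.mpr ⟨_, h1, _, h2, hne⟩
      have := (hV.2.2 v hvs hvt).2
      omega
    refine ⟨insert p Q₂, ?_, ?_, ?_⟩
    · rw [Finset.card_insert_of_notMem hpQ, hQc]
    · intro q hq
      rcases Finset.mem_insert.mp hq with rfl | hq
      · exact hp
      · obtain ⟨h1, h2, h3, h4⟩ := hQp q hq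
        exact ⟨h1, h2.imp (fun {a b} hab => (Finset.mem_sdiff.mp hab).1), h3, h4⟩
    · rw [Finset.coe_insert]
      refine (@Set.pairwise_insert_of_symmetric _ _ _ _ ⟨?_⟩).mpr ⟨hQd, ?_⟩
      · intro a b hab v hv1 hv2
        rcases hab v hv2 hv1 with h | h
        · exact Or.inl h
        · exact Or.inr h
      · intro q hq _
        exact hdisj q hq
end Aux2

namespace Aux3
open Aux Aux2
variable {V : Type*} [Fintype V] [DecidableEq V] {E : Finset (V × V)} {s t : V}

lemma mem_splitArcs {e : (V × Bool) × (V × Bool)} :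
    e ∈ splitArcs E s t ↔
      (∃ v, (v ≠ s ∧ v ≠ t) ∧ e = ((v, false), (v, true))) ∨
      (∃ a ∈ E, e = (exitNode s t a.1, (a.2, false))) := by
  simp only [splitArcs, Finset.mem_union, Finset.mem_image, Finset.mem_filter,
    Finset.mem_univ, true_and]
  constructor
  · rintro (⟨v, hv, he⟩ | ⟨a, ha, he⟩)
    · exact Or.inl ⟨v, hv, he.symm⟩
    · exact Or.inr ⟨a, ha, he.symm⟩
  · rintro (⟨v, hv, he⟩ | ⟨a, ha, he⟩)
    · exact Or.inl ⟨v, hv, he.symm⟩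
    · exact Or.inr ⟨a, ha, he.symm⟩

lemma exitNode_eq_of_mem {u : V} (h : u = s ∨ u = t) : exitNode s t u = (u, false) := by
  simp [exitNode, h]

lemma exitNode_eq_of_not_mem {u : V} (h : ¬(u = s ∨ u = t)) : exitNode s t u = (u, true) := by
  simp [exitNode, h]

/-- (A) unique arc out of an entry node of an internal vertex -/
lemma S_out_entry {e : (V × Bool) × (V × Bool)} {v : V} (he : e ∈ splitArcs E s t)
    (h1 : e.1 = (v, false)) (hvs : v ≠ s) (hvt : v ≠ t) : e.2 = (v, true) := by
  rcases mem_splitArcs.mp he with ⟨w, hw, hew⟩ | ⟨a, ha, hea⟩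
  · rw [hew] at h1 ⊢
    have : w = v := congrArg Prod.fst h1
    rw [this]
  · exfalso
    rw [hea] at h1
    simp only at h1
    unfold exitNode at h1
    split at h1
    · rename_i hor
      have : a.1 = v := congrArg Prod.fst h1
      rw [this] at hor
      rcases hor with h | h
      · exact hvs h
      · exact hvt h
    · exact Bool.noConfusion (congrArg Prod.snd h1)

/-- (B) unique arc into an exit node, and exit nodes of s,t are untouched as targets -/
lemma S_in_exit {e : (V × Bool) × (V × Bool)} {v : V} (he : e ∈ splitArcs E s t)
    (h2 : e.2 = (v, true)) : e.1 = (v, false) ∧ v ≠ s ∧ v ≠ t := by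
  rcases mem_splitArcs.mp he with ⟨w, hw, hew⟩ | ⟨a, ha, hea⟩
  · rw [hew] at h2 ⊢
    have : w = v := congrArg Prod.fst h2
    subst this
    exact ⟨rfl, hw⟩
  · exfalso
    rw [hea] at h2
    exact Bool.noConfusion (congrArg Prod.snd h2)

/-- (C) structure of arcs out of an exit node -/
lemma S_out_exit {e : (V × Bool) × (V × Bool)} {v : V} (he : e ∈ splitArcs E s t)
    (h1 : e.1 = (v, true)) : v ≠ s ∧ v ≠ t ∧ ∃ w, e.2 = (w, false) ∧ (v, w) ∈ E := by
  rcases mem_splitArcs.mp he with ⟨w, hw, hew⟩ | ⟨a, ha, hea⟩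
  · rw [hew] at h1
    exact Bool.noConfusion (congrArg Prod.snd h1)
  · rw [hea] at h1 ⊢
    simp only at h1 ⊢
    unfold exitNode at h1
    split at h1
    · exact Bool.noConfusion (congrArg Prod.snd h1)
    · rename_i hor
      have hav : a.1 = v := congrArg Prod.fst h1
      push_neg at hor
      rw [hav] at hor
      refine ⟨hor.1, hor.2, a.2, rfl, ?_⟩
      rw [← hav]
      exact ha

/-- (D) arcs between two entry/endpoint nodes -/
lemma S_false_false {e : (V × Bool) × (V × Bool)} {u v : V} (he : e ∈ splitArcs E s t)
    (h1 : e.1 = (u, false)) (h2 : e.2 = (v, false)) : (u = s ∨ u = t) ∧ (u, v) ∈ E := by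
  rcases mem_splitArcs.mp he with ⟨w, hw, hew⟩ | ⟨a, ha, hea⟩
  · rw [hew] at h2
    exact Bool.noConfusion (congrArg Prod.snd h2)
  · rw [hea] at h1 h2
    simp only at h1 h2
    have hav : a.2 = v := congrArg Prod.fst h2
    unfold exitNode at h1
    split at h1
    · rename_i hor
      have hau : a.1 = u := congrArg Prod.fst h1
      rw [hau] at hor
      refine ⟨hor, ?_⟩
      rw [← hau, ← hav]
      exact ha
    · exact absurd (congrArg Prod.snd h1) Bool.noConfusion
end Aux3

def projV {V : Type*} (l : List (V × Bool)) : List V := (l.filter (fun x => !x.2)).map Prod.fst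

namespace Aux4
open Aux Aux2 Aux3
variable {V : Type*} [Fintype V] [DecidableEq V] {E : Finset (V × V)} {s t : V} {p : List V}

def blk (s t v : V) : List (V × Bool) :=
  if v = s ∨ v = t then [(v, false)] else [(v, false), (v, true)]

lemma splitPath_eq : splitPath s t p = p.flatMap (blk s t) := rfl

lemma blk_ne_nil {v : V} : blk s t v ≠ [] := by
  unfold blk; split <;> simp

lemma blk_head {v : V} : (blk s t v).head? = some (v, false) := by
  unfold blk; split <;> rfl

lemma blk_last {v : V} : (blk s t v).getLast? = some (exitNode s t v) := by
  unfold blk exitNode; split <;> simp_all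

lemma mem_blk {v : V} {x : V × Bool} (h : x ∈ blk s t v) : x.1 = v := by
  unfold blk at h
  split at h
  · rw [List.mem_singleton] at h
    rw [h]
  · rcases List.mem_cons.mp h with h | h
    · rw [h]
    · rw [List.mem_singleton] at h
      rw [h]

lemma sp_fst_mem {x : V × Bool} (h : x ∈ splitPath s t p) : x.1 ∈ p := by
  rw [splitPath_eq, List.mem_flatMap] at h
  obtain ⟨v, hv, hx⟩ := h
  rw [mem_blk hx]
  exact hv

lemma sp_mem_false {v : V} (h : v ∈ p) : (v, false) ∈ splitPath s t p := by
  rw [splitPath_eq, List.mem_flatMap]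
  refine ⟨v, h, ?_⟩
  unfold blk; split <;> simp

lemma sp_true_not {v : V} (h : (v, true) ∈ splitPath s t p) : ¬(v = s ∨ v = t) := by
  rw [splitPath_eq, List.mem_flatMap] at h
  obtain ⟨w, hw, hx⟩ := h
  unfold blk at hx
  split at hx
  · simp at hx
  · rename_i hor
    simp only [List.mem_cons, List.mem_singleton] at hx
    rcases hx with hx | hx
    · exact Bool.noConfusion (congrArg Prod.snd hx)
    · rcases hx with hx | hx
      · rw [show v = w from congrArg Prod.fst hx]
        exact hor
      · simp at hx

lemma sp_head {v : V} (h : p.head? = some v) :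
    (splitPath s t p).head? = some (v, false) := by
  obtain ⟨ys, rfl⟩ := List.head?_eq_some_iff.mp h
  rw [splitPath_eq, List.flatMap_cons, List.head?_append_of_ne_nil _ blk_ne_nil]
  exact blk_head

lemma sp_last {v : V} (h : p.getLast? = some v) :
    (splitPath s t p).getLast? = some (exitNode s t v) := by
  obtain ⟨ys, rfl⟩ := List.getLast?_eq_some_iff.mp h
  rw [splitPath_eq, List.flatMap_append, List.flatMap_cons, List.flatMap_nil,
    List.append_nil, List.getLast?_append_of_ne_nil _ blk_ne_nil]
  exact blk_last

lemma sp_nodup (h : p.Nodup) : (splitPath s t p).Nodup := by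
  induction p with
  | nil => simp [splitPath_eq]
  | cons v q ih =>
    rw [splitPath_eq, List.flatMap_cons, List.nodup_append]
    rw [List.nodup_cons] at h
    refine ⟨?_, ih h.2, ?_⟩
    · unfold blk; split <;> simp
    · intro x hx x'' hx' hxx
      subst hxx
      have h1 := mem_blk hx
      have h2 := sp_fst_mem (p := q) (x := x) (by rw [splitPath_eq]; exact hx')
      rw [h1] at h2
      exact h.1 h2

lemma sp_chain (h : p.Chain' (fun u v => (u, v) ∈ E)) :
    (splitPath s t p).Chain' (fun a b => (a, b) ∈ splitArcs E s t) := by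
  induction p with
  | nil => simp [splitPath_eq, List.Chain']
  | cons v q ih =>
    rw [splitPath_eq, List.flatMap_cons, List.Chain', List.isChain_append]
    refine ⟨?_, ?_, ?_⟩
    · unfold blk
      split
      · simp
      · rename_i hor
        push_neg at hor
        refine List.isChain_pair.mpr ?_
        exact mem_splitArcs.mpr (Or.inl ⟨v, hor, rfl⟩)
    · exact ih ((List.isChain_cons.mp h).2)
    · intro x hx y hy
      rw [blk_last, Option.mem_some_iff] at hx
      cases q with
      | nil => simp [splitPath_eq] at hy
      | cons w l =>
        rw [show (w :: l).flatMap (blk s t) = splitPath s t (w :: l) from rfl,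
          sp_head (p := w :: l) (v := w) rfl, Option.mem_some_iff] at hy
        have hvw : (v, w) ∈ E := (List.isChain_cons_cons.mp h).1
        rw [← hx, ← hy]
        exact mem_splitArcs.mpr (Or.inr ⟨(v, w), hvw, rfl⟩)

lemma projV_splitPath : projV (splitPath s t p) = p := by
  induction p with
  | nil => simp [splitPath_eq, projV]
  | cons v q ih =>
    rw [splitPath_eq, List.flatMap_cons, ← splitPath_eq]
    unfold projV at ih ⊢
    rw [List.filter_append, List.map_append, ih]
    congr 1
    unfold blk
    split <;> simp

lemma splitPath_isPath (hst : s ≠ t) (hp : IsPath E s t p) :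
    IsPath (splitArcs E s t) (s, false) (t, false) (splitPath s t p) := by
  obtain ⟨h1, h2, h3, h4⟩ := hp
  refine ⟨sp_nodup h1, sp_chain h2, sp_head h3, ?_⟩
  rw [sp_last h4, exitNode_eq_of_mem (Or.inr rfl)]
end Aux4

namespace Aux5
open Aux Aux2 Aux3 Aux4
variable {V : Type*} [Fintype V] [DecidableEq V] {E : Finset (V × V)} {s t : V}
  {P : Finset (List V)}

lemma mem_flow {e : (V × Bool) × (V × Bool)} :
    e ∈ flowArcs (P.image (splitPath s t)) ↔
      ∃ p ∈ P, e ∈ pathArcs (splitPath s t p) := by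
  simp only [flowArcs, Finset.mem_biUnion, Finset.mem_image, List.mem_toFinset]
  constructor
  · rintro ⟨q, ⟨p, hp, rfl⟩, he⟩
    exact ⟨p, hp, he⟩
  · rintro ⟨p, hp, he⟩
    exact ⟨splitPath s t p, ⟨p, hp, rfl⟩, he⟩

lemma flow_sub_S (hPp : ∀ p ∈ P, IsPath E s t p) :
    ∀ e ∈ flowArcs (P.image (splitPath s t)), e ∈ splitArcs E s t := by
  intro e he
  obtain ⟨p, hp, hep⟩ := mem_flow.mp he
  obtain ⟨a, b⟩ := e
  exact chain'_arcs (sp_chain (hPp p hp).2.1) hep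

lemma flow_in_empty (hst : s ≠ t) (hPp : ∀ p ∈ P, IsPath E s t p) :
    InA (flowArcs (P.image (splitPath s t))) (s, false) = ∅ := by
  apply Finset.eq_empty_iff_forall_notMem.mpr
  intro e he
  obtain ⟨heF, he2⟩ := mem_InA.mp he
  obtain ⟨p, hp, hep⟩ := mem_flow.mp heF
  obtain ⟨a, b⟩ := e
  cases he2
  exact not_arc_in_head (sp_nodup (hPp p hp).1) (sp_head (hPp p hp).2.2.1) hep

lemma flow_out_empty (hst : s ≠ t) (hPp : ∀ p ∈ P, IsPath E s t p) :
    OutA (flowArcs (P.image (splitPath s t))) (t, false) = ∅ := by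
  apply Finset.eq_empty_iff_forall_notMem.mpr
  intro e he
  obtain ⟨heF, he1⟩ := mem_OutA.mp he
  obtain ⟨p, hp, hep⟩ := mem_flow.mp heF
  obtain ⟨a, b⟩ := e
  cases he1
  have hlast : (splitPath s t p).getLast? = some (t, false) := by
    rw [sp_last (hPp p hp).2.2.2, exitNode_eq_of_mem (Or.inr rfl)]
  exact not_arc_out_last (sp_nodup (hPp p hp).1) hlast hep

lemma internal_unique (hPd : (P : Set (List V)).Pairwise (IntDisjoint s t))
    {p₁ p₂ : List V} (h₁ : p₁ ∈ P) (h₂ : p₂ ∈ P) {w : V × Bool}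
    (hws : w ≠ (s, false)) (hwt : w ≠ (t, false))
    (hw1 : w ∈ splitPath s t p₁) (hw2 : w ∈ splitPath s t p₂) : p₁ = p₂ := by
  by_contra hne
  have hv := hPd h₁ h₂ hne w.1 (sp_fst_mem hw1) (sp_fst_mem hw2)
  obtain ⟨v, b⟩ := w
  cases b
  · rcases hv with rfl | rfl
    · exact hws rfl
    · exact hwt rfl
  · exact sp_true_not hw1 hv

lemma flow_in_card (hst : s ≠ t) (hPp : ∀ p ∈ P, IsPath E s t p)
    (hPd : (P : Set (List V)).Pairwise (IntDisjoint s t)) :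
    ∀ w, w ≠ (s, false) → w ≠ (t, false) →
      (InA (flowArcs (P.image (splitPath s t))) w).card ≤ 1 ∧
      (InA (flowArcs (P.image (splitPath s t))) w).card =
        (OutA (flowArcs (P.image (splitPath s t))) w).card := by
  intro w hws hwt
  set F := flowArcs (P.image (splitPath s t)) with hF
  have hInle : (InA F w).card ≤ 1 := by
    apply Finset.card_le_one.mpr
    intro e₁ he₁ e₂ he₂
    obtain ⟨h1F, h11⟩ := mem_InA.mp he₁
    obtain ⟨h2F, h21⟩ := mem_InA.mp he₂
    obtain ⟨p₁, hp₁, hep₁⟩ := mem_flow.mp h1F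
    obtain ⟨p₂, hp₂, hep₂⟩ := mem_flow.mp h2F
    obtain ⟨a₁, b₁⟩ := e₁
    obtain ⟨a₂, b₂⟩ := e₂
    cases h11; cases h21
    have hpp : p₁ = p₂ :=
      internal_unique hPd hp₁ hp₂ hws hwt (pathArcs_mem_right hep₁) (pathArcs_mem_right hep₂)
    subst hpp
    rw [pathArcs_in_unique (sp_nodup (hPp p₁ hp₁).1) hep₁ hep₂]
  have hOutle : (OutA F w).card ≤ 1 := by
    apply Finset.card_le_one.mpr
    intro e₁ he₁ e₂ he₂
    obtain ⟨h1F, h11⟩ := mem_OutA.mp he₁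
    obtain ⟨h2F, h21⟩ := mem_OutA.mp he₂
    obtain ⟨p₁, hp₁, hep₁⟩ := mem_flow.mp h1F
    obtain ⟨p₂, hp₂, hep₂⟩ := mem_flow.mp h2F
    obtain ⟨a₁, b₁⟩ := e₁
    obtain ⟨a₂, b₂⟩ := e₂
    cases h11; cases h21
    have hpp : p₁ = p₂ :=
      internal_unique hPd hp₁ hp₂ hws hwt (pathArcs_mem_left hep₁) (pathArcs_mem_left hep₂)
    subst hpp
    rw [pathArcs_out_unique (sp_nodup (hPp p₁ hp₁).1) hep₁ hep₂]
  refine ⟨hInle, ?_⟩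
  have hiff : (InA F w).Nonempty ↔ (OutA F w).Nonempty := by
    constructor
    · rintro ⟨e, he⟩
      obtain ⟨heF, he2⟩ := mem_InA.mp he
      obtain ⟨p, hp, hep⟩ := mem_flow.mp heF
      have hep' : (e.1, e.2) ∈ pathArcs (splitPath s t p) := by rwa [Prod.mk.eta]
      have hwm : w ∈ splitPath s t p := he2 ▸ pathArcs_mem_right hep'
      have hlast : (splitPath s t p).getLast? = some (t, false) := by
        rw [sp_last (hPp p hp).2.2.2, exitNode_eq_of_mem (Or.inr rfl)]
      obtain ⟨y, hy⟩ := exists_arc_out hlast hwm hwt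
      exact ⟨(w, y), mem_OutA.mpr ⟨mem_flow.mpr ⟨p, hp, hy⟩, rfl⟩⟩
    · rintro ⟨e, he⟩
      obtain ⟨heF, he1⟩ := mem_OutA.mp he
      obtain ⟨p, hp, hep⟩ := mem_flow.mp heF
      have hep' : (e.1, e.2) ∈ pathArcs (splitPath s t p) := by rwa [Prod.mk.eta]
      have hwm : w ∈ splitPath s t p := he1 ▸ pathArcs_mem_left hep'
      obtain ⟨y, hy⟩ := exists_arc_in (sp_head (hPp p hp).2.2.1) hwm hws
      exact ⟨(y, w), mem_InA.mpr ⟨mem_flow.mpr ⟨p, hp, hy⟩, rfl⟩⟩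
  rcases (InA F w).eq_empty_or_nonempty with h | h
  · rcases (OutA F w).eq_empty_or_nonempty with h' | h'
    · rw [h, h']
    · exact absurd (hiff.mpr h') (by rw [h]; simp [Finset.not_nonempty_empty])
  · have h' := hiff.mp h
    have := Finset.card_pos.mpr h
    have := Finset.card_pos.mpr h'
    omega

lemma flow_out_card_ge (hst : s ≠ t) (hPp : ∀ p ∈ P, IsPath E s t p)
    (hPd : (P : Set (List V)).Pairwise (IntDisjoint s t)) :
    P.card ≤ (OutA (flowArcs (P.image (splitPath s t))) (s, false)).card := by
  set F := flowArcs (P.image (splitPath s t)) with hF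
  apply Finset.card_le_card_of_injOn
    (fun p => ((s, false), ((splitPath s t p).tail.head?).getD (t, false)))
  · -- maps into OutA F s̄
    intro p hp
    have hsp := hPp p hp
    have hhd := sp_head (s := s) (t := t) hsp.2.2.1
    have hlast : (splitPath s t p).getLast? = some (t, false) := by
      rw [sp_last hsp.2.2.2, exitNode_eq_of_mem (Or.inr rfl)]
    obtain ⟨y, hy⟩ := exists_arc_out hlast (head_mem hhd) (by
      intro h
      exact hst (congrArg Prod.fst h))
    have hth := arc_from_head (sp_nodup hsp.1) hhd hy
    dsimp only
    rw [hth]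
    exact mem_OutA.mpr ⟨mem_flow.mpr ⟨p, hp, hy⟩, rfl⟩
  · -- injective on P
    intro p₁ hp₁ p₂ hp₂ heq
    simp only [Finset.mem_coe] at hp₁ hp₂
    have hsp₁ := hPp p₁ hp₁
    have hsp₂ := hPp p₂ hp₂
    have hhd₁ := sp_head (s := s) (t := t) hsp₁.2.2.1
    have hhd₂ := sp_head (s := s) (t := t) hsp₂.2.2.1
    have hlast₁ : (splitPath s t p₁).getLast? = some (t, false) := by
      rw [sp_last hsp₁.2.2.2, exitNode_eq_of_mem (Or.inr rfl)]
    have hlast₂ : (splitPath s t p₂).getLast? = some (t, false) := by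
      rw [sp_last hsp₂.2.2.2, exitNode_eq_of_mem (Or.inr rfl)]
    obtain ⟨y₁, hy₁⟩ := exists_arc_out hlast₁ (head_mem hhd₁)
      (by intro h; exact hst (congrArg Prod.fst h))
    obtain ⟨y₂, hy₂⟩ := exists_arc_out hlast₂ (head_mem hhd₂)
      (by intro h; exact hst (congrArg Prod.fst h))
    have hth₁ := arc_from_head (sp_nodup hsp₁.1) hhd₁ hy₁
    have hth₂ := arc_from_head (sp_nodup hsp₂.1) hhd₂ hy₂
    have hyy : y₁ = y₂ := by
      have := congrArg Prod.snd heq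
      simp only at this
      rw [hth₁, hth₂] at this
      simpa using this
    subst hyy
    -- y₁ is in both split paths
    have hm₁ : y₁ ∈ splitPath s t p₁ := pathArcs_mem_right hy₁
    have hm₂ : y₁ ∈ splitPath s t p₂ := pathArcs_mem_right hy₂
    have hys : y₁ ≠ (s, false) := by
      rintro rfl
      exact not_arc_self (sp_nodup hsp₁.1) hy₁
    rcases eq_or_ne y₁ (t, false) with rfl | hyt
    · -- both split paths are [s̄, t̄]
      have key : ∀ p, p ∈ P → (splitPath s t p).tail.head? = some ((t, false) : V × Bool) →
          p = [s, t] := by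
        intro p hp hth
        have hsp := hPp p hp
        have hhd := sp_head (s := s) (t := t) hsp.2.2.1
        obtain ⟨ys, hys⟩ := List.head?_eq_some_iff.mp hhd
        have hysne : ys ≠ [] := by
          intro h
          rw [hys, h] at hth
          simp at hth
        have hlastp : (splitPath s t p).getLast? = some (t, false) := by
          rw [sp_last hsp.2.2.2, exitNode_eq_of_mem (Or.inr rfl)]
        have hrl : ys.getLast? = some (t, false) := by
          rw [hys, show ((s, false) : V × Bool) :: ys = [(s, false)] ++ ys from rfl,
            List.getLast?_append_of_ne_nil _ hysne] at hlastp
          exact hlastp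
        have hrh : ys.head? = some (t, false) := by
          rw [hys] at hth
          exact hth
        have hnd : ys.Nodup := by
          have := sp_nodup (s := s) (t := t) hsp.1
          rw [hys] at this
          exact (List.nodup_cons.mp this).2
        have hys1 : ys = [(t, false)] := nodup_head_last_eq hnd hrh hrl
        have hspeq : splitPath s t p = [(s, false), (t, false)] := by rw [hys, hys1]
        have hproj := projV_splitPath (p := p) (s := s) (t := t)
        rw [hspeq] at hproj
        simpa [projV] using hproj.symm
      rw [key p₁ hp₁ hth₁, key p₂ hp₂ hth₂]
    · exact internal_unique hPd hp₁ hp₂ hys hyt hm₁ hm₂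
end Aux5

namespace Aux5
open Aux Aux2 Aux3 Aux4
variable {V : Type*} [Fintype V] [DecidableEq V] {E : Finset (V × V)} {s t : V}
  {P : Finset (List V)}

theorem augment (hst : s ≠ t) (hPp : ∀ p ∈ P, IsPath E s t p)
    (hPd : (P : Set (List V)).Pairwise (IntDisjoint s t))
    {α : List (V × Bool)}
    (hα : IsPath (residualArcs (splitArcs E s t) (P.image (splitPath s t)))
      (s, false) (t, false) α) :
    ∃ F' : Finset ((V × Bool) × (V × Bool)),
      (∀ e ∈ F', e ∈ splitArcs E s t) ∧ Valid F' (s, false) (t, false) ∧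
      P.card + 1 ≤ (OutA F' (s, false)).card := by
  classical
  obtain ⟨hand, hach, hahd, halast⟩ := hα
  have hsne : ((s, false) : V × Bool) ≠ (t, false) := fun h => hst (congrArg Prod.fst h)
  set F := flowArcs (P.image (splitPath s t)) with hF
  set A := (pathArcs α).toFinset with hA
  have hswapmem : ∀ (X : Finset ((V × Bool) × (V × Bool))) (e : (V × Bool) × (V × Bool)),
      (e ∈ X.image (fun a => (a.2, a.1))) = ((e.2, e.1) ∈ X) := by
    intro X e
    apply propext
    simp only [Finset.mem_image]
    constructor
    · rintro ⟨a, ha, rfl⟩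
      simpa using ha
    · intro h
      exact ⟨(e.2, e.1), h, by simp⟩
  have hAres : ∀ e ∈ A, e ∈ (splitArcs E s t \ F) ∪ F.image (fun a => (a.2, a.1)) := by
    intro e he
    rw [hA, List.mem_toFinset] at he
    have h2 := chain'_arcs hach (prodeta_mem he)
    unfold residualArcs at h2
    rw [← hF] at h2
    rwa [Prod.mk.eta] at h2
  have hpush : ∀ e ∈ A, (e.2, e.1) ∉ F → e ∈ splitArcs E s t ∧ e ∉ F := by
    intro e he hne
    rcases Finset.mem_union.mp (hAres e he) with h | h
    · exact ⟨(Finset.mem_sdiff.mp h).1, (Finset.mem_sdiff.mp h).2⟩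
    · rw [hswapmem] at h
      exact absurd h hne
  -- flow facts
  have hFS := flow_sub_S (s := s) (t := t) hPp
  rw [← hF] at hFS
  have hFsE := flow_in_empty hst hPp
  rw [← hF] at hFsE
  have hFtE := flow_out_empty hst hPp
  rw [← hF] at hFtE
  have hFcard := flow_in_card hst hPp hPd
  rw [← hF] at hFcard
  have hge := flow_out_card_ge hst hPp hPd
  rw [← hF] at hge
  -- augmenting path facts
  have hAInle : ∀ w, (InA A w).card ≤ 1 := fun w => by
    rw [hA]; exact pathArcs_InA_le hand w
  have hAOutle : ∀ w, (OutA A w).card ≤ 1 := fun w => by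
    rw [hA]; exact pathArcs_OutA_le hand w
  have hAsE : InA A (s, false) = ∅ := by rw [hA]; exact pathArcs_InA_head hand hahd
  have hAtE : OutA A (t, false) = ∅ := by rw [hA]; exact pathArcs_OutA_last hand halast
  have hAcons : ∀ w, w ≠ (s, false) → w ≠ (t, false) →
      (InA A w).card = (OutA A w).card := fun w h1 h2 => by
    rw [hA]; exact pathArcs_card_eq hand hahd halast h1 h2
  set F' := (F \ A.image (fun a => (a.2, a.1))) ∪ A.filter (fun e => (e.2, e.1) ∉ F)
    with hF'
  have hmemF' : ∀ e : (V × Bool) × (V × Bool),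
      e ∈ F' ↔ ((e ∈ F ∧ (e.2, e.1) ∉ A) ∨ (e ∈ A ∧ (e.2, e.1) ∉ F)) := by
    intro e
    rw [hF']
    simp only [Finset.mem_union, Finset.mem_sdiff, Finset.mem_filter, hswapmem]
  refine ⟨F', ?_, ⟨?_, ?_, ?_⟩, ?_⟩
  · -- F' ⊆ S
    intro e he
    rcases (hmemF' e).mp he with ⟨h1, _⟩ | ⟨h1, h2⟩
    · exact hFS e h1
    · exact (hpush e h1 h2).1
  · -- no arcs into s
    apply Finset.eq_empty_iff_forall_notMem.mpr
    intro e he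
    obtain ⟨heF', he2⟩ := mem_InA.mp he
    rcases (hmemF' e).mp heF' with ⟨h1, _⟩ | ⟨h1, _⟩
    · have : e ∈ InA F (s, false) := mem_InA.mpr ⟨h1, he2⟩
      rw [hFsE] at this
      exact absurd this (Finset.notMem_empty _)
    · have : e ∈ InA A (s, false) := mem_InA.mpr ⟨h1, he2⟩
      rw [hAsE] at this
      exact absurd this (Finset.notMem_empty _)
  · -- no arcs out of t
    apply Finset.eq_empty_iff_forall_notMem.mpr
    intro e he
    obtain ⟨heF', he1⟩ := mem_OutA.mp he
    rcases (hmemF' e).mp heF' with ⟨h1, _⟩ | ⟨h1, _⟩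
    · have : e ∈ OutA F (t, false) := mem_OutA.mpr ⟨h1, he1⟩
      rw [hFtE] at this
      exact absurd this (Finset.notMem_empty _)
    · have : e ∈ OutA A (t, false) := mem_OutA.mpr ⟨h1, he1⟩
      rw [hAtE] at this
      exact absurd this (Finset.notMem_empty _)
  · -- conservation and capacity
    intro w hws hwt
    have hInF' : InA F' w = ((InA F w).filter (fun e => ¬(e.2, e.1) ∈ A)) ∪
        ((InA A w).filter (fun e => ¬(e.2, e.1) ∈ F)) := by
      ext e
      simp only [mem_InA, Finset.mem_union, Finset.mem_filter, mem_InA, hmemF' e]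
      tauto
    have hOutF' : OutA F' w = ((OutA F w).filter (fun e => ¬(e.2, e.1) ∈ A)) ∪
        ((OutA A w).filter (fun e => ¬(e.2, e.1) ∈ F)) := by
      ext e
      simp only [mem_OutA, Finset.mem_union, Finset.mem_filter, mem_OutA, hmemF' e]
      tauto
    have hdis1 : Disjoint ((InA F w).filter (fun e => ¬(e.2, e.1) ∈ A))
        ((InA A w).filter (fun e => ¬(e.2, e.1) ∈ F)) := by
      rw [Finset.disjoint_left]
      intro e h1 h2
      obtain ⟨h2a, h2b⟩ := Finset.mem_filter.mp h2
      exact (hpush e (mem_InA.mp h2a).1 h2b).2 (mem_InA.mp (Finset.mem_filter.mp h1).1).1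
    have hdis2 : Disjoint ((OutA F w).filter (fun e => ¬(e.2, e.1) ∈ A))
        ((OutA A w).filter (fun e => ¬(e.2, e.1) ∈ F)) := by
      rw [Finset.disjoint_left]
      intro e h1 h2
      obtain ⟨h2a, h2b⟩ := Finset.mem_filter.mp h2
      exact (hpush e (mem_OutA.mp h2a).1 h2b).2 (mem_OutA.mp (Finset.mem_filter.mp h1).1).1
    have e1 : (InA F' w).card = ((InA F w).filter (fun e => ¬(e.2, e.1) ∈ A)).card +
        ((InA A w).filter (fun e => ¬(e.2, e.1) ∈ F)).card := by
      rw [hInF', Finset.card_union_of_disjoint hdis1]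
    have e9 : (OutA F' w).card = ((OutA F w).filter (fun e => ¬(e.2, e.1) ∈ A)).card +
        ((OutA A w).filter (fun e => ¬(e.2, e.1) ∈ F)).card := by
      rw [hOutF', Finset.card_union_of_disjoint hdis2]
    have e2 := Finset.card_filter_add_card_filter_not
      (s := InA F w) (p := fun e => (e.2, e.1) ∈ A)
    have e10 := Finset.card_filter_add_card_filter_not
      (s := OutA F w) (p := fun e => (e.2, e.1) ∈ A)
    have e5 := Finset.card_filter_add_card_filter_not
      (s := OutA A w) (p := fun e => (e.2, e.1) ∈ F)
    have e6 := Finset.card_filter_add_card_filter_not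
      (s := InA A w) (p := fun e => (e.2, e.1) ∈ F)
    have e3 : ((InA F w).filter (fun e => (e.2, e.1) ∈ A)).card =
        ((OutA A w).filter (fun e => (e.2, e.1) ∈ F)).card := by
      apply Finset.card_bij (fun e _ => (e.2, e.1))
      · intro e he
        obtain ⟨he1, he2⟩ := Finset.mem_filter.mp he
        obtain ⟨heF, hew⟩ := mem_InA.mp he1
        refine Finset.mem_filter.mpr ⟨mem_OutA.mpr ⟨he2, hew⟩, ?_⟩
        simpa using heF
      · intro a _ b _ hab
        have h1 := congrArg Prod.snd hab
        have h2 := congrArg Prod.fst hab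
        exact Prod.ext h1 h2
      · intro e he
        obtain ⟨he1, he2⟩ := Finset.mem_filter.mp he
        obtain ⟨heA, hew⟩ := mem_OutA.mp he1
        refine ⟨(e.2, e.1), Finset.mem_filter.mpr ⟨mem_InA.mpr ⟨he2, hew⟩, ?_⟩, by simp⟩
        simpa using heA
    have e4 : ((OutA F w).filter (fun e => (e.2, e.1) ∈ A)).card =
        ((InA A w).filter (fun e => (e.2, e.1) ∈ F)).card := by
      apply Finset.card_bij (fun e _ => (e.2, e.1))
      · intro e he
        obtain ⟨he1, he2⟩ := Finset.mem_filter.mp he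
        obtain ⟨heF, hew⟩ := mem_OutA.mp he1
        refine Finset.mem_filter.mpr ⟨mem_InA.mpr ⟨he2, hew⟩, ?_⟩
        simpa using heF
      · intro a _ b _ hab
        have h1 := congrArg Prod.snd hab
        have h2 := congrArg Prod.fst hab
        exact Prod.ext h1 h2
      · intro e he
        obtain ⟨he1, he2⟩ := Finset.mem_filter.mp he
        obtain ⟨heA, hew⟩ := mem_InA.mp he1
        refine ⟨(e.2, e.1), Finset.mem_filter.mpr ⟨mem_OutA.mpr ⟨he2, hew⟩, ?_⟩, by simp⟩
        simpa using heA
    have e7 := hAcons w hws hwt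
    obtain ⟨hFle, e8⟩ := hFcard w hws hwt
    refine ⟨by omega, ?_⟩
    -- capacity : (InA F' w).card ≤ 1
    have hAInlew := hAInle w
    have hAOutlew := hAOutle w
    rcases Nat.eq_zero_or_pos ((InA A w).filter (fun e => ¬(e.2, e.1) ∈ F)).card
      with hp0 | hppos
    · have := Finset.card_filter_le (InA F w) (fun e => ¬(e.2, e.1) ∈ A)
      omega
    · obtain ⟨e_in, hein⟩ := Finset.card_pos.mp hppos
      obtain ⟨heinA, heinF⟩ := Finset.mem_filter.mp hein
      obtain ⟨heinA', hew⟩ := mem_InA.mp heinA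
      rcases Nat.eq_zero_or_pos (InA F w).card with hf0 | hfpos
      · have := Finset.card_filter_le (InA F w) (fun e => ¬(e.2, e.1) ∈ A)
        have := Finset.card_filter_le (InA A w) (fun e => ¬(e.2, e.1) ∈ F)
        omega
      · have hain : 0 < (InA A w).card := Finset.card_pos.mpr ⟨e_in, heinA⟩
        have haout : 0 < (OutA A w).card := by omega
        obtain ⟨e_out, heout⟩ := Finset.card_pos.mp haout
        obtain ⟨heoutA, heo1⟩ := mem_OutA.mp heout
        have hkey : (e_out.2, e_out.1) ∈ F := by
          by_contra hno
          obtain ⟨heoS, heoF⟩ := hpush e_out heoutA hno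
          obtain ⟨v, b⟩ := w
          cases b
          · have hvs : v ≠ s := fun h => hws (by rw [h])
            have hvt : v ≠ t := fun h => hwt (by rw [h])
            have hOutFpos : 0 < (OutA F (v, false)).card := by omega
            obtain ⟨f, hf⟩ := Finset.card_pos.mp hOutFpos
            obtain ⟨hfF, hf1⟩ := mem_OutA.mp hf
            have hfS := hFS f hfF
            have hf2 : f.2 = (v, true) := S_out_entry hfS hf1 hvs hvt
            have heo2 : e_out.2 = (v, true) := S_out_entry heoS heo1 hvs hvt
            have : e_out = f := Prod.ext (heo1.trans hf1.symm) (heo2.trans hf2.symm)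
            exact heoF (this ▸ hfF)
          · obtain ⟨f, hf⟩ := Finset.card_pos.mp hfpos
            obtain ⟨hfF, hf2⟩ := mem_InA.mp hf
            have hfS := hFS f hfF
            obtain ⟨hf1, -, -⟩ := S_in_exit hfS hf2
            obtain ⟨heiS, heiF⟩ := hpush e_in heinA' heinF
            obtain ⟨hei1, -, -⟩ := S_in_exit heiS hew
            have : e_in = f := Prod.ext (hei1.trans hf1.symm) (hew.trans hf2.symm)
            exact heiF (this ▸ hfF)
        have hc1pos : 0 < ((OutA A w).filter (fun e => (e.2, e.1) ∈ F)).card :=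
          Finset.card_pos.mpr ⟨e_out, Finset.mem_filter.mpr ⟨heout, hkey⟩⟩
        have := Finset.card_filter_le (InA A w) (fun e => ¬(e.2, e.1) ∈ F)
        omega
  · -- count at s
    obtain ⟨y, hy⟩ := exists_arc_out halast (head_mem hahd) hsne
    have he0A : (((s, false) : V × Bool), y) ∈ A := by
      rw [hA]; exact List.mem_toFinset.mpr hy
    have hswap0 : ((y, ((s, false) : V × Bool)) : _) ∉ F := by
      intro h
      have : (y, ((s, false) : V × Bool)) ∈ InA F (s, false) := mem_InA.mpr ⟨h, rfl⟩
      rw [hFsE] at this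
      exact absurd this (Finset.notMem_empty _)
    have he0F' : (((s, false) : V × Bool), y) ∈ F' :=
      (hmemF' _).mpr (Or.inr ⟨he0A, hswap0⟩)
    have he0notF : (((s, false) : V × Bool), y) ∉ F := (hpush _ he0A hswap0).2
    have hsub : insert ((s, false), y) (OutA F (s, false)) ⊆ OutA F' (s, false) := by
      intro e he
      rcases Finset.mem_insert.mp he with rfl | he
      · exact mem_OutA.mpr ⟨he0F', rfl⟩
      · obtain ⟨heF, he1⟩ := mem_OutA.mp he
        have hnA : (e.2, e.1) ∉ A := by
          intro hc
          have : (e.2, e.1) ∈ InA A (s, false) := mem_InA.mpr ⟨hc, he1⟩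
          rw [hAsE] at this
          exact absurd this (Finset.notMem_empty _)
        exact mem_OutA.mpr ⟨(hmemF' e).mpr (Or.inl ⟨heF, hnA⟩), he1⟩
    have hcard1 : (insert ((s, false), y) (OutA F (s, false))).card =
        (OutA F (s, false)).card + 1 :=
      Finset.card_insert_of_notMem (fun hc => he0notF (mem_OutA.mp hc).1)
    have hcle := Finset.card_le_card hsub
    omega
end Aux5

namespace Aux6
open Aux Aux2 Aux3 Aux4
variable {V : Type*} [Fintype V] [DecidableEq V] {E : Finset (V × V)} {s t : V}

lemma projV_cons_false {l : List (V × Bool)} {u : V} :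
    projV ((u, false) :: l) = u :: projV l := by simp [projV]

lemma projV_cons_true {l : List (V × Bool)} {u : V} :
    projV ((u, true) :: l) = projV l := by simp [projV]

lemma projV_mem {l : List (V × Bool)} {v : V} : v ∈ projV l ↔ (v, false) ∈ l := by
  simp only [projV, List.mem_map, List.mem_filter]
  constructor
  · rintro ⟨⟨x1, x2⟩, ⟨hx, hx2⟩, rfl⟩
    simp only [Bool.not_eq_eq_eq_not, Bool.not_true] at hx2
    rwa [show x2 = false from by simpa using hx2] at hx
  · intro h
    exact ⟨(v, false), ⟨h, by simp⟩, rfl⟩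

lemma projV_nodup {l : List (V × Bool)} (h : l.Nodup) : (projV l).Nodup := by
  apply List.Nodup.map_on ?_ (h.filter _)
  intro x hx y hy hxy
  rw [List.mem_filter] at hx hy
  have hx2 : x.2 = false := by simpa using hx.2
  have hy2 : y.2 = false := by simpa using hy.2
  exact Prod.ext hxy (hx2.trans hy2.symm)

lemma proj_ind : ∀ (n : ℕ) (β : List (V × Bool)) (u : V), β.length ≤ n →
    β.Chain' (fun a b => (a, b) ∈ splitArcs E s t) → β.head? = some (u, false) →
    (projV β).Chain' (fun a b => (a, b) ∈ E) ∧ (projV β).head? = some u ∧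
    ∀ z, β.getLast? = some z → (projV β).getLast? = some z.1 := by
  intro n
  induction n with
  | zero =>
    intro β u hlen hch hhd
    rw [List.length_eq_zero_iff.mp (Nat.le_zero.mp hlen)] at hhd
    simp at hhd
  | succ n ih =>
    intro β u hlen hch hhd
    obtain ⟨rest, rfl⟩ := List.head?_eq_some_iff.mp hhd
    cases rest with
    | nil =>
      refine ⟨by simp [projV, List.Chain'], by simp [projV], ?_⟩
      intro z hz
      simp only [List.getLast?_singleton, Option.some_inj] at hz
      rw [← hz, projV_cons_false]
      simp [projV]
    | cons x rest2 =>
      have harc : (((u, false) : V × Bool), x) ∈ splitArcs E s t := (List.isChain_cons_cons.mp hch).1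
      have hch2 := (List.isChain_cons_cons.mp hch).2
      obtain ⟨x1, x2⟩ := x
      cases x2
      · obtain ⟨-, hE⟩ := S_false_false harc rfl rfl
        obtain ⟨ihc, ihh, ihl⟩ := ih ((x1, false) :: rest2) x1
          (by simp only [List.length_cons] at hlen ⊢; omega) hch2 rfl
        have hne : projV ((x1, false) :: rest2) ≠ [] := by
          intro h
          rw [h] at ihh
          simp at ihh
        refine ⟨?_, ?_, ?_⟩
        · rw [projV_cons_false]
          refine List.isChain_cons.mpr ⟨?_, ihc⟩
          intro h hh
          rw [ihh, Option.mem_some_iff] at hh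
          rw [← hh]
          exact hE
        · rw [projV_cons_false]
          simp
        · intro z hz
          rw [List.getLast?_cons_cons] at hz
          have := ihl z hz
          rw [projV_cons_false, show u :: projV ((x1, false) :: rest2) =
            [u] ++ projV ((x1, false) :: rest2) from rfl,
            List.getLast?_append_of_ne_nil _ hne]
          exact this
      · obtain ⟨h1, -, -⟩ := S_in_exit harc rfl
        obtain rfl : x1 = u := (congrArg Prod.fst h1).symm
        cases rest2 with
        | nil =>
          refine ⟨?_, ?_, ?_⟩
          · rw [projV_cons_false, projV_cons_true]
            simp [projV, List.Chain']
          · rw [projV_cons_false]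
            simp
          · intro z hz
            rw [List.getLast?_cons_cons, List.getLast?_singleton, Option.some_inj] at hz
            rw [projV_cons_false, projV_cons_true, ← hz]
            simp [projV]
        | cons x' rest3 =>
          have harc2 : (((x1, true) : V × Bool), x') ∈ splitArcs E s t :=
            (List.isChain_cons_cons.mp hch2).1
          obtain ⟨-, -, w1, hx'eq, hE⟩ := S_out_exit harc2 rfl
          have hx' : x' = (w1, false) := hx'eq
          subst hx'
          obtain ⟨ihc, ihh, ihl⟩ := ih ((w1, false) :: rest3) w1
            (by simp only [List.length_cons] at hlen ⊢; omega)
            ((List.isChain_cons_cons.mp hch2).2) rfl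
          have hne : projV ((w1, false) :: rest3) ≠ [] := by
            intro h
            rw [h] at ihh
            simp at ihh
          refine ⟨?_, ?_, ?_⟩
          · rw [projV_cons_false, projV_cons_true]
            refine List.isChain_cons.mpr ⟨?_, ihc⟩
            intro h hh
            rw [ihh, Option.mem_some_iff] at hh
            rw [← hh]
            exact hE
          · rw [projV_cons_false, projV_cons_true]
            simp
          · intro z hz
            rw [List.getLast?_cons_cons, List.getLast?_cons_cons] at hz
            have := ihl z hz
            rw [projV_cons_false, projV_cons_true,
              show x1 :: projV ((w1, false) :: rest3) =
                [x1] ++ projV ((w1, false) :: rest3) from rfl,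
              List.getLast?_append_of_ne_nil _ hne]
            exact this

lemma proj_isPath (hst : s ≠ t) {β : List (V × Bool)}
    (hβ : IsPath (splitArcs E s t) (s, false) (t, false) β) :
    IsPath E s t (projV β) := by
  obtain ⟨hnd, hch, hhd, hlast⟩ := hβ
  obtain ⟨hc, hh, hl⟩ := proj_ind β.length β s le_rfl hch hhd
  exact ⟨projV_nodup hnd, hc, hh, hl _ hlast⟩

lemma proj_eq_st {β : List (V × Bool)} (hst : s ≠ t)
    (hβ : IsPath (splitArcs E s t) (s, false) (t, false) β)
    (hproj : projV β = [s, t]) : β = [(s, false), (t, false)] := by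
  obtain ⟨hnd, hch, hhd, hlast⟩ := hβ
  -- no true-node occurs in β
  have hnotrue : ∀ v : V, (v, true) ∉ β := by
    intro v hv
    have hne : ((v, true) : V × Bool) ≠ (s, false) := fun h => Bool.noConfusion (congrArg Prod.snd h)
    obtain ⟨y, hy⟩ := exists_arc_in hhd hv hne
    have harc : ((y, (v, true)) : _) ∈ splitArcs E s t := chain'_arcs hch hy
    obtain ⟨h1, hvs, hvt⟩ := S_in_exit harc rfl
    have : (v, false) ∈ β := by
      have := pathArcs_mem_left hy
      rwa [show y = (v, false) from h1] at this
    have : v ∈ projV β := projV_mem.mpr this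
    rw [hproj] at this
    rcases List.mem_cons.mp this with h | h
    · exact hvs h
    · exact hvt (by simpa using h)
  have hallfalse : ∀ x ∈ β, x.2 = false := by
    intro x hx
    obtain ⟨x1, x2⟩ := x
    cases x2
    · rfl
    · exact absurd hx (hnotrue x1)
  have hfilter : β.filter (fun x => !x.2) = β := by
    apply List.filter_eq_self.mpr
    intro x hx
    rw [hallfalse x hx]
    rfl
  have hmap : β.map Prod.fst = [s, t] := by
    rw [← hproj]
    unfold projV
    rw [hfilter]
  match β, hmap, hallfalse with
  | [a, b], hmap, hallfalse =>
    obtain ⟨a1, a2⟩ := a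
    obtain ⟨b1, b2⟩ := b
    simp only [List.map_cons, List.map_nil, List.cons.injEq, and_true] at hmap
    obtain ⟨ha, hb⟩ := hmap
    have ha2 : a2 = false := hallfalse (a1, a2) (by simp)
    have hb2 : b2 = false := hallfalse (b1, b2) (by simp)
    rw [ha, hb, ha2, hb2]

lemma list_st {l : List V} (hst : s ≠ t) (hnd : l.Nodup) (hh : l.head? = some s)
    (hl : l.getLast? = some t) (hall : ∀ v ∈ l, v = s ∨ v = t) : l = [s, t] := by
  obtain ⟨l2, rfl⟩ := List.head?_eq_some_iff.mp hh
  cases l2 with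
  | nil =>
    exfalso
    simp only [List.getLast?_singleton, Option.some_inj] at hl
    exact hst hl
  | cons a l3 =>
    have hal : a ∈ s :: a :: l3 := by simp
    have hanes : a ≠ s := by
      intro h
      rw [List.nodup_cons] at hnd
      exact hnd.1 (by simp [h])
    have hat : a = t := by
      rcases hall a hal with h | h
      · exact absurd h hanes
      · exact h
    subst hat
    have hnd2 : (a :: l3).Nodup := (List.nodup_cons.mp hnd).2
    have hl2 : (a :: l3).getLast? = some a := by
      rw [List.getLast?_cons_cons] at hl
      exact hl
    have := nodup_head_last_eq hnd2 rfl hl2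
    rw [this]
end Aux6

end AuxProof

open Aux Aux2 Aux3 Aux4 Aux5 Aux6

/-- If `P` is a set of `k` pairwise internally node-disjoint `s`–`t` paths of `G`, `P′`
the corresponding set of pairwise edge-disjoint paths in the split digraph `G′`, and the
residual digraph of `G′` with respect to `P′` contains a directed path from `s` to `t`,
then `G` has a set of `k + 1` pairwise internally node-disjoint `s`–`t` paths. -/
theorem split_augmenting_path_gives_larger_node_disjoint_family
    {V : Type*} [Fintype V] [DecidableEq V]
    (E : Finset (V × V)) (s t : V) (hst : s ≠ t)
    (P : Finset (List V)) (k : ℕ) (hcard : P.card = k)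
    (hP : IsNodeDisjointFamily E s t P)
    (haug : ∃ α : List (V × Bool),
      IsPath (residualArcs (splitArcs E s t) (P.image (splitPath s t)))
        (s, false) (t, false) α) :
    ∃ Q : Finset (List V), Q.card = k + 1 ∧ IsNodeDisjointFamily E s t Q := by
  obtain ⟨α, hα⟩ := haug
  obtain ⟨hPp, hPd⟩ := hP
  have hsne : ((s, false) : V × Bool) ≠ (t, false) := fun h => hst (congrArg Prod.fst h)
  obtain ⟨F', hFS', hValid, hge⟩ := augment hst hPp hPd hα
  obtain ⟨Q', hQc, hQp, hQd⟩ := decomp hsne ((OutA F' (s, false)).card) F' hValid rfl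
  have hk1 : k + 1 ≤ Q'.card := by rw [hQc]; omega
  obtain ⟨Q'', hsub, hQ''c⟩ := Finset.exists_subset_card_eq hk1
  have hQ''p : ∀ β ∈ Q'', IsPath (splitArcs E s t) (s, false) (t, false) β := by
    intro β hβ
    obtain ⟨h1, h2, h3, h4⟩ := hQp β (hsub hβ)
    exact ⟨h1, h2.imp (fun {a b} h => hFS' (a, b) h), h3, h4⟩
  have hQ''d : (Q'' : Set (List (V × Bool))).Pairwise
      (IntDisjoint ((s, false) : V × Bool) (t, false)) :=
    hQd.mono (Finset.coe_subset.mpr hsub)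
  refine ⟨Q''.image projV, ?_, ?_, ?_⟩
  · rw [Finset.card_image_of_injOn, hQ''c]
    intro β₁ h₁ β₂ h₂ heq
    simp only [Finset.mem_coe] at h₁ h₂
    by_contra hne
    have hdisj := hQ''d h₁ h₂ hne
    by_cases hall : ∀ v ∈ projV β₁, v = s ∨ v = t
    · have hp1 := hQ''p β₁ h₁
      have hp2 := hQ''p β₂ h₂
      have hip1 := proj_isPath hst hp1
      have hproj1 : projV β₁ = [s, t] :=
        list_st hst hip1.1 hip1.2.2.1 hip1.2.2.2 hall
      have hβ1 := proj_eq_st hst hp1 hproj1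
      have hβ2 := proj_eq_st hst hp2 (heq ▸ hproj1)
      exact hne (hβ1.trans hβ2.symm)
    · push_neg at hall
      obtain ⟨v, hv, hvs, hvt⟩ := hall
      have h1m : (v, false) ∈ β₁ := projV_mem.mp hv
      have h2m : (v, false) ∈ β₂ := projV_mem.mp (heq ▸ hv)
      rcases hdisj (v, false) h1m h2m with h | h
      · exact hvs (congrArg Prod.fst h)
      · exact hvt (congrArg Prod.fst h)
  · intro q hq
    obtain ⟨β, hβ, rfl⟩ := Finset.mem_image.mp hq
    exact proj_isPath hst (hQ''p β hβ)
  · intro q₁ h₁ q₂ h₂ hne v hv1 hv2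
    simp only [Finset.coe_image, Set.mem_image, Finset.mem_coe] at h₁ h₂
    obtain ⟨β₁, hβ₁, rfl⟩ := h₁
    obtain ⟨β₂, hβ₂, rfl⟩ := h₂
    have hβne : β₁ ≠ β₂ := fun h => hne (by rw [h])
    have hdisj := hQ''d hβ₁ hβ₂ hβne
    rcases hdisj (v, false) (projV_mem.mp hv1) (projV_mem.mp hv2) with h | h
    · exact Or.inl (congrArg Prod.fst h)
    · exact Or.inr (congrArg Prod.fst h)
end

section
/- Let G = (V, E) be a finite digraph, s, t ∈ V with s ≠ t, and let F ⊆ E be a set of arcs such that every vertex v ∈ V \ {s, t} has equally many incoming and outgoing arcs in F, s has no incoming arcs in F, and t has no outgoing arcs in F. Let k be the number of arcs of F leaving s. Then there exists a set of k pairwise edge-disjoint directed paths from s to t all of whose arcs belong to F. -/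
namespace FlowAux
variable {V : Type*}

theorem pathArcs_nil : pathArcs ([] : List V) = [] := rfl
theorem pathArcs_single (x : V) : pathArcs [x] = [] := rfl
theorem pathArcs_cons₂ (x y : V) (l : List V) :
    pathArcs (x :: y :: l) = (x, y) :: pathArcs (y :: l) := rfl

theorem chain'_iff_pathArcs (R : V → V → Prop) :
    ∀ l : List V, l.Chain' R ↔ ∀ a ∈ pathArcs l, R a.1 a.2
  | [] => by simp [pathArcs_nil, List.Chain']
  | [x] => by simp [pathArcs_single, List.Chain']
  | x :: y :: l => by
    show List.IsChain R (x :: y :: l) ↔ _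
    rw [List.isChain_cons_cons, show List.IsChain R (y :: l) ↔ _ from chain'_iff_pathArcs R (y :: l), pathArcs_cons₂]
    simp

theorem pathArcs_map_fst : ∀ l : List V, (pathArcs l).map Prod.fst = l.dropLast
  | [] => rfl
  | [x] => rfl
  | x :: y :: l => by
    rw [pathArcs_cons₂, List.map_cons, pathArcs_map_fst (y :: l)]
    rfl

theorem pathArcs_map_snd : ∀ l : List V, (pathArcs l).map Prod.snd = l.tail
  | [] => rfl
  | [x] => rfl
  | x :: y :: l => by
    rw [pathArcs_cons₂, List.map_cons, pathArcs_map_snd (y :: l)]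
    rfl

theorem pathArcs_nodup {l : List V} (h : l.Nodup) : (pathArcs l).Nodup := by
  apply List.Nodup.of_map Prod.fst
  rw [pathArcs_map_fst]
  exact h.sublist (List.dropLast_sublist l)

theorem countP_snd [DecidableEq V] (v : V) (l : List V) :
    (pathArcs l).countP (fun a => a.2 = v) = l.tail.countP (fun u => u = v) := by
  rw [← pathArcs_map_snd l, List.countP_map]
  rfl

theorem countP_fst [DecidableEq V] (v : V) (l : List V) :
    (pathArcs l).countP (fun a => a.1 = v) = l.dropLast.countP (fun u => u = v) := by
  rw [← pathArcs_map_fst l, List.countP_map]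
  rfl

theorem pathArcs_subset_cons (x : V) (l : List V) : ∀ a ∈ pathArcs l, a ∈ pathArcs (x :: l) := by
  cases l with
  | nil => simp [pathArcs_nil]
  | cons y l => intro a ha; rw [pathArcs_cons₂]; exact List.mem_cons_of_mem _ ha

theorem pathArcs_append_left : ∀ (pre l : List V), ∀ a ∈ pathArcs l, a ∈ pathArcs (pre ++ l)
  | [], _ => by simp
  | x :: pre, l => fun a ha =>
    pathArcs_subset_cons x _ a (pathArcs_append_left pre l a ha)

theorem pathArcs_suffix {l m : List V} (h : m <:+ l) : ∀ a ∈ pathArcs m, a ∈ pathArcs l := by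
  obtain ⟨pre, rfl⟩ := h
  exact pathArcs_append_left pre m

theorem pathArcs_append_single :
    ∀ (l : List V) (h : l ≠ []) (u : V),
      pathArcs (l ++ [u]) = pathArcs l ++ [(l.getLast h, u)]
  | [], h, _ => absurd rfl h
  | [x], _, u => rfl
  | x :: y :: l, _, u => by
    have : (x :: y :: l) ++ [u] = x :: ((y :: l) ++ [u]) := rfl
    rw [this, pathArcs_cons₂]
    have hne : (y :: l) ++ [u] ≠ [] := by simp
    have h2 : (y :: l) ≠ [] := by simp
    rw [show pathArcs (x :: ((y::l) ++ [u])) = (x, y) :: pathArcs ((y::l) ++ [u]) from rfl]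
    rw [pathArcs_append_single (y :: l) h2 u]
    simp [List.getLast_cons h2]

theorem card_filter_toFinset {V' : Type*} [DecidableEq V'] {A : List V'} (h : A.Nodup)
    (pr : V' → Prop) [DecidablePred pr] :
    (A.toFinset.filter pr).card = A.countP (fun a => decide (pr a)) := by
  have := List.toFinset_filter A (fun a => decide (pr a))
  rw [List.countP_eq_length_filter, ← List.toFinset_card_of_nodup (h.filter _)]
  rw [this]
  apply congrArg
  simp


theorem extract_path {R : V → V → Prop} :
    ∀ (n : ℕ) (w : List V), w.length ≤ n → w.Chain' R → ∀ {s t : V},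
      w.head? = some s → w.getLast? = some t →
      ∃ p : List V, p.Nodup ∧ p.Chain' R ∧ p.head? = some s ∧ p.getLast? = some t ∧
        (∀ a ∈ pathArcs p, a ∈ pathArcs w) ∧ (∀ v ∈ p, v ∈ w) := by
  intro n
  induction n with
  | zero =>
    intro w hlen _ s t hh _
    have : w = [] := List.length_eq_zero_iff.1 (Nat.le_zero.1 hlen)
    subst this; simp at hh
  | succ n ih =>
    intro w hlen hchain s t hh hl
    classical
    cases w with
    | nil => simp at hh
    | cons x rest =>
      have hxs : x = s := by simpa using hh
      subst hxs
      by_cases hx : x ∈ rest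
      · obtain ⟨b, c, hbc⟩ := List.append_of_mem hx
        have hw : x :: rest = (x :: b) ++ (x :: c) := by simp [hbc]
        have hsuf : (x :: c) <:+ (x :: rest) := ⟨x :: b, hw.symm⟩
        have hlen' : (x :: c).length ≤ n := by
          have := hlen
          rw [hw] at this
          simp at this ⊢
          omega
        have hlast : (x :: c).getLast? = some t := by
          rw [hw] at hl
          rw [List.getLast?_append] at hl
          simpa using hl
        obtain ⟨p, h1, h2, h3, h4, h5, h6⟩ :=
          ih (x :: c) hlen' (hchain.suffix hsuf) (s := x) (t := t) (by simp) hlast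
        exact ⟨p, h1, h2, h3, h4,
          fun a ha => pathArcs_suffix hsuf a (h5 a ha),
          fun v hv => (hsuf.subset) (h6 v hv)⟩
      · cases rest with
        | nil =>
          refine ⟨[x], by simp, by simp [List.Chain'], by simp, ?_, by simp [pathArcs_single], by simp⟩
          simpa using hl
        | cons y rs =>
          have hlen' : (y :: rs).length ≤ n := by simp at hlen ⊢; omega
          have hlast : (y :: rs).getLast? = some t := by
            rwa [List.getLast?_cons_cons] at hl
          obtain ⟨p, h1, h2, h3, h4, h5, h6⟩ :=
            ih (y :: rs) hlen' hchain.tail (s := y) (t := t) (by simp) hlast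
          obtain ⟨p', rfl⟩ : ∃ p', p = y :: p' := by
            cases p with
            | nil => simp at h3
            | cons z p' =>
              have : z = y := by simpa using h3
              exact ⟨p', by rw [this]⟩
          have hxp : x ∉ y :: p' := fun hmem => hx (h6 x hmem)
          refine ⟨x :: y :: p', ?_, ?_, by simp, ?_, ?_, ?_⟩
          · exact List.nodup_cons.2 ⟨hxp, h1⟩
          · show List.IsChain _ _
            rw [List.isChain_cons_cons]
            exact ⟨(List.isChain_cons_cons.1 hchain).1, h2⟩
          · rw [List.getLast?_cons_cons]
            exact h4
          · intro a ha
            rw [pathArcs_cons₂] at ha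
            rcases List.mem_cons.1 ha with h | h
            · subst h; rw [pathArcs_cons₂]; exact List.mem_cons_self
            · exact pathArcs_subset_cons x _ a (h5 a h)
          · intro v hv
            rcases List.mem_cons.1 hv with h | h
            · simp [h]
            · exact List.mem_cons_of_mem _ (h6 v h)


variable [DecidableEq V]

theorem step_lemma (F : Finset (V × V)) (s t : V)
    (hcons : ∀ v : V, v ≠ s → v ≠ t →
      (F.filter (fun a => a.2 = v)).card = (F.filter (fun a => a.1 = v)).card)
    (hs : ∀ a ∈ F, a.2 ≠ s)
    (y : V) (l : List V)
    (hchain : (s :: y :: l).Chain' (fun u v => (u, v) ∈ F))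
    (hnd : (pathArcs (s :: y :: l)).Nodup)
    (hvt : (s :: y :: l).getLast (by simp) ≠ t) :
    ∃ u : V, ((s :: y :: l).getLast (by simp), u) ∈ F ∧
      ((s :: y :: l).getLast (by simp), u) ∉ pathArcs (s :: y :: l) := by
  set w : List V := s :: y :: l with hw
  set v : V := w.getLast (by simp [hw]) with hv
  have harcF : ∀ a ∈ pathArcs w, a ∈ F := by
    intro a ha
    have := (chain'_iff_pathArcs _ w).1 hchain a ha
    simpa using this
  have hvtail : v ∈ w.tail := by
    have h1 : v = (y :: l).getLast (by simp) := List.getLast_cons (by simp)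
    rw [h1]
    exact List.getLast_mem _
  have hvs : v ≠ s := by
    have : v ∈ (pathArcs w).map Prod.snd := by rw [pathArcs_map_snd]; exact hvtail
    obtain ⟨a, haw, ha2⟩ := List.mem_map.1 this
    exact ha2 ▸ hs a (harcF a haw)
  -- counting
  have hcount : (pathArcs w).countP (fun a => a.2 = v)
      = (pathArcs w).countP (fun a => a.1 = v) + 1 := by
    rw [countP_snd, countP_fst]
    have hddl : w = w.dropLast ++ [v] := (List.dropLast_append_getLast (by simp [hw])).symm
    have h1 : w.countP (fun u => u = v) = w.dropLast.countP (fun u => u = v) + 1 := by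
      conv_lhs => rw [hddl]
      rw [List.countP_append]
      simp
    have h2 : w.countP (fun u => u = v) = w.tail.countP (fun u => u = v) := by
      rw [hw]
      rw [show (s :: y :: l).tail = y :: l from rfl]
      rw [List.countP_cons]
      simp [hvs.symm]
    omega
  have hsubF : (pathArcs w).toFinset ⊆ F := fun a ha => harcF a (List.mem_toFinset.1 ha)
  have hcard_in : ((pathArcs w).toFinset.filter (fun a => a.2 = v)).card
      = (pathArcs w).countP (fun a => decide (a.2 = v)) := card_filter_toFinset hnd _
  have hcard_out : ((pathArcs w).toFinset.filter (fun a => a.1 = v)).card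
      = (pathArcs w).countP (fun a => decide (a.1 = v)) := card_filter_toFinset hnd _
  have hin_le : ((pathArcs w).toFinset.filter (fun a => a.2 = v)).card
      ≤ (F.filter (fun a => a.2 = v)).card :=
    Finset.card_le_card (Finset.filter_subset_filter _ hsubF)
  have hvt' : v ≠ t := hvt
  have hdeg := hcons v hvs hvt'
  have hout_lt : ((pathArcs w).toFinset.filter (fun a => a.1 = v)).card
      < (F.filter (fun a => a.1 = v)).card := by
    omega
  obtain ⟨a, haF, haA⟩ : ∃ a, a ∈ F.filter (fun a => a.1 = v) ∧
      a ∉ (pathArcs w).toFinset.filter (fun a => a.1 = v) := by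
    by_contra hcon
    push_neg at hcon
    have hsub2 : F.filter (fun a => a.1 = v) ⊆ (pathArcs w).toFinset.filter (fun a => a.1 = v) :=
      fun a ha => hcon a ha
    exact absurd (Finset.card_le_card hsub2) (by omega)
  obtain ⟨haF', ha1⟩ := Finset.mem_filter.1 haF
  refine ⟨a.2, ?_, ?_⟩
  · rwa [show (v, a.2) = a from by rw [← ha1]]
  · intro hmem
    exact haA (Finset.mem_filter.2 ⟨List.mem_toFinset.2
      (by rwa [show (v, a.2) = a from by rw [← ha1]] at hmem), ha1⟩)

theorem walk_aux (F : Finset (V × V)) (s t : V)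
    (hcons : ∀ v : V, v ≠ s → v ≠ t →
      (F.filter (fun a => a.2 = v)).card = (F.filter (fun a => a.1 = v)).card)
    (hs : ∀ a ∈ F, a.2 ≠ s) :
    ∀ (n : ℕ) (y : V) (l : List V),
      (s :: y :: l).Chain' (fun u v => (u, v) ∈ F) →
      (pathArcs (s :: y :: l)).Nodup →
      (F \ (pathArcs (s :: y :: l)).toFinset).card ≤ n →
      ∃ w' : List V, w'.Chain' (fun u v => (u, v) ∈ F) ∧
        w'.head? = some s ∧ w'.getLast? = some t := by
  intro n
  induction n with
  | zero =>
    intro y l hchain hnd hm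
    by_cases hvt : (s :: y :: l).getLast (by simp) = t
    · exact ⟨s :: y :: l, hchain, by simp,
        by rw [List.getLast?_eq_getLast (l := s :: y :: l) (by simp), hvt]⟩
    · obtain ⟨u, huF, huA⟩ := step_lemma F s t hcons hs y l hchain hnd hvt
      exfalso
      have : ((s :: y :: l).getLast (by simp), u) ∈ F \ (pathArcs (s :: y :: l)).toFinset :=
        Finset.mem_sdiff.2 ⟨huF, fun h => huA (List.mem_toFinset.1 h)⟩
      have := Finset.card_pos.2 ⟨_, this⟩
      omega
  | succ n ih =>
    intro y l hchain hnd hm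
    by_cases hvt : (s :: y :: l).getLast (by simp) = t
    · exact ⟨s :: y :: l, hchain, by simp,
        by rw [List.getLast?_eq_getLast (l := s :: y :: l) (by simp), hvt]⟩
    · obtain ⟨u, huF, huA⟩ := step_lemma F s t hcons hs y l hchain hnd hvt
      set w : List V := s :: y :: l with hw
      set v : V := w.getLast (by simp [hw]) with hv
      have hw' : w ++ [u] = s :: y :: (l ++ [u]) := by simp [hw]
      have harcs : pathArcs (w ++ [u]) = pathArcs w ++ [(v, u)] :=
        pathArcs_append_single w (by simp [hw]) u
      have hchain' : (s :: y :: (l ++ [u])).Chain' (fun a b => (a, b) ∈ F) := by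
        rw [← hw']
        refine hchain.append (by simp) ?_
        intro a ha b hb
        rw [List.getLast?_eq_getLast (l := w) (by simp [hw])] at ha
        simp at ha hb
        subst ha
        subst hb
        exact huF
      have hnd' : (pathArcs (s :: y :: (l ++ [u]))).Nodup := by
        rw [← hw', harcs]
        simp [List.nodup_append, hnd, huA]
        intro a b hab hav hbu
        subst hav
        subst hbu
        exact huA hab
      apply ih y (l ++ [u]) hchain' hnd'
      have hmem : (v, u) ∈ F \ (pathArcs w).toFinset :=
        Finset.mem_sdiff.2 ⟨huF, fun h => huA (List.mem_toFinset.1 h)⟩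
      have hset : (pathArcs (s :: y :: (l ++ [u]))).toFinset
          = insert (v, u) (pathArcs w).toFinset := by
        rw [← hw', harcs]
        simp [List.toFinset_append]
      rw [hset]
      have : F \ insert (v, u) (pathArcs w).toFinset
          = (F \ (pathArcs w).toFinset).erase (v, u) := by
        ext a
        simp [Finset.mem_sdiff, Finset.mem_erase, and_comm, or_comm]
        tauto
      rw [this]
      rw [Finset.card_erase_of_mem hmem]
      have := Finset.card_pos.2 ⟨_, hmem⟩
      omega

theorem walk_exists (F : Finset (V × V)) (s t : V)
    (hcons : ∀ v : V, v ≠ s → v ≠ t →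
      (F.filter (fun a => a.2 = v)).card = (F.filter (fun a => a.1 = v)).card)
    (hs : ∀ a ∈ F, a.2 ≠ s) {x : V} (hx : (s, x) ∈ F) :
    ∃ w : List V, w.Chain' (fun u v => (u, v) ∈ F) ∧
      w.head? = some s ∧ w.getLast? = some t := by
  apply walk_aux F s t hcons hs (F \ (pathArcs [s, x]).toFinset).card x []
  · simp [List.Chain', List.isChain_cons_cons, hx]
  · simp [pathArcs_cons₂, pathArcs_single]
  · exact le_refl _


theorem filter_sdiff_card {α : Type*} [DecidableEq α] {F S : Finset α} (hSF : S ⊆ F)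
    (pr : α → Prop) [DecidablePred pr] :
    ((F \ S).filter pr).card = (F.filter pr).card - (S.filter pr).card ∧
      (S.filter pr).card ≤ (F.filter pr).card := by
  have h1 : (F \ S).filter pr = F.filter pr \ S.filter pr := by
    ext a
    simp only [Finset.mem_sdiff, Finset.mem_filter]
    tauto
  have h2 : S.filter pr ⊆ F.filter pr := Finset.filter_subset_filter _ (by
    intro a ha; exact hSF ha)
  exact ⟨by rw [h1, Finset.card_sdiff_of_subset h2], Finset.card_le_card h2⟩


theorem main_aux {V : Type*} [DecidableEq V] (E : Finset (V × V)) (s t : V) (hst : s ≠ t) :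
    ∀ (n : ℕ) (F : Finset (V × V)), F.card ≤ n → F ⊆ E →
      (∀ v : V, v ≠ s → v ≠ t →
        (F.filter (fun a => a.2 = v)).card = (F.filter (fun a => a.1 = v)).card) →
      (∀ a ∈ F, a.2 ≠ s) → (∀ a ∈ F, a.1 ≠ t) →
      ∃ P : Finset (List V), P.card = (F.filter (fun a => a.1 = s)).card ∧
        (∀ p ∈ P, IsPath E s t p ∧ ∀ a ∈ pathArcs p, a ∈ F) ∧
        (P : Set (List V)).Pairwise EdgeDisjoint := by
  intro n
  induction n with
  | zero =>
    intro F hcard _ _ _ _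
    have : F = ∅ := Finset.card_eq_zero.1 (Nat.le_zero.1 hcard)
    subst this
    exact ⟨∅, by simp, by simp, by simp⟩
  | succ n ih =>
    intro F hcard hFE hcons hs ht
    by_cases hk : F.filter (fun a => a.1 = s) = ∅
    · exact ⟨∅, by simp [hk], by simp, by simp⟩
    · obtain ⟨a0, ha0⟩ := Finset.nonempty_of_ne_empty hk
      obtain ⟨ha0F, ha0s⟩ := Finset.mem_filter.1 ha0
      have hsx : (s, a0.2) ∈ F := by rwa [show (s, a0.2) = a0 from by rw [← ha0s]]
      obtain ⟨w, wch, wh, wl⟩ := walk_exists F s t hcons hs hsx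
      obtain ⟨p, pnd, pch, ph, pl, parcs, -⟩ :=
        extract_path w.length w le_rfl wch wh wl
      have warcF : ∀ a ∈ pathArcs w, a ∈ F := by
        intro a ha
        have := (chain'_iff_pathArcs _ w).1 wch a ha
        simpa using this
      have parcF : ∀ a ∈ pathArcs p, a ∈ F := fun a ha => warcF a (parcs a ha)
      -- shape of p
      obtain ⟨q, rfl⟩ : ∃ q, p = s :: q := by
        cases p with
        | nil => simp at ph
        | cons z q =>
          have : z = s := by simpa using ph
          exact ⟨q, by rw [this]⟩
      have hq : q ≠ [] := by
        rintro rfl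
        have : s = t := by simpa using pl
        exact hst this
      have hsq : s ∉ q := (List.nodup_cons.1 pnd).1
      have hqlast : q.getLast hq = t := by
        have h1 : (s :: q).getLast? = some (q.getLast hq) := by
          rw [List.getLast?_eq_getLast (l := s :: q) (by simp), List.getLast_cons hq]
        rw [h1] at pl
        exact (Option.some_inj.1 pl.symm).symm
      have hqdec : q = q.dropLast ++ [t] := by
        conv_lhs => rw [← List.dropLast_append_getLast hq]
        rw [hqlast]
      have hdl : (s :: q).dropLast = s :: q.dropLast := by
        cases q with
        | nil => exact absurd rfl hq
        | cons b qs => rfl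
      set S : Finset (V × V) := (pathArcs (s :: q)).toFinset with hS
      have hSF : S ⊆ F := fun a ha => parcF a (List.mem_toFinset.1 ha)
      have hSn : (pathArcs (s :: q)).Nodup := pathArcs_nodup pnd
      -- counts
      have hc_in : ∀ v : V, (S.filter (fun a => a.2 = v)).card = q.countP (fun u => u = v) := by
        intro v
        rw [hS, card_filter_toFinset hSn, countP_snd]
        rfl
      have hc_out : ∀ v : V,
          (S.filter (fun a => a.1 = v)).card = (s :: q.dropLast).countP (fun u => u = v) := by
        intro v
        rw [hS, card_filter_toFinset hSn, countP_fst]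
        rw [show (s :: q).dropLast = s :: q.dropLast from hdl]
      have hout_s : (S.filter (fun a => a.1 = s)).card = 1 := by
        rw [hc_out s, List.countP_cons]
        have : q.dropLast.countP (fun u => u = s) = 0 :=
          List.countP_eq_zero.2 (fun u hu => by
            simp only [decide_eq_true_eq]
            rintro rfl
            exact hsq ((List.dropLast_sublist q).subset hu))
        simp [this]
      have hmid : ∀ v : V, v ≠ s → v ≠ t →
          (S.filter (fun a => a.2 = v)).card = (S.filter (fun a => a.1 = v)).card := by
        intro v hvs hvt
        rw [hc_in v, hc_out v, List.countP_cons]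
        conv_lhs => rw [hqdec]
        rw [List.countP_append]
        simp [Ne.symm hvs, Ne.symm hvt]
      set F' : Finset (V × V) := F \ S with hF'
      have hF'F : F' ⊆ F := Finset.sdiff_subset
      -- apply IH
      have hScard : 1 ≤ S.card := by
        have h1 : (S.filter (fun a => a.1 = s)).card ≤ S.card :=
          Finset.card_le_card (Finset.filter_subset _ _)
        omega
      have hF'card : F'.card ≤ n := by
        rw [hF', Finset.card_sdiff_of_subset hSF]
        have := Finset.card_le_card hSF
        omega
      obtain ⟨P', hP'card, hP'path, hP'pw⟩ := ih F' hF'card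
        (fun a ha => hFE (hF'F ha))
        (fun v hvs hvt => by
          obtain ⟨e1, e2⟩ := filter_sdiff_card hSF (fun a : V × V => a.2 = v)
          obtain ⟨f1, f2⟩ := filter_sdiff_card hSF (fun a : V × V => a.1 = v)
          rw [← hF'] at e1 f1
          rw [e1, f1, hcons v hvs hvt, hmid v hvs hvt]
        )
        (fun a ha => hs a (hF'F ha))
        (fun a ha => ht a (hF'F ha))
      have hk' : P'.card = (F.filter (fun a => a.1 = s)).card - 1 := by
        obtain ⟨f1, f2⟩ := filter_sdiff_card hSF (fun a : V × V => a.1 = s)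
        rw [← hF'] at f1
        rw [hP'card, f1, hout_s]
      have hkpos : 1 ≤ (F.filter (fun a => a.1 = s)).card := by
        obtain ⟨-, f2⟩ := filter_sdiff_card hSF (fun a : V × V => a.1 = s)
        omega
      -- first arc
      obtain ⟨b, qs, rfl⟩ : ∃ b qs, q = b :: qs := by
        cases q with
        | nil => exact absurd rfl hq
        | cons b qs => exact ⟨b, qs, rfl⟩
      have harc0 : (s, b) ∈ pathArcs (s :: b :: qs) := by
        rw [pathArcs_cons₂]; exact List.mem_cons_self
      have harc0S : (s, b) ∈ S := List.mem_toFinset.2 harc0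
      have hpnot : (s :: b :: qs) ∉ P' := by
        intro hmem
        have := (hP'path _ hmem).2 (s, b) harc0
        rw [hF', Finset.mem_sdiff] at this
        exact this.2 harc0S
      refine ⟨insert (s :: b :: qs) P', ?_, ?_, ?_⟩
      · rw [Finset.card_insert_of_notMem hpnot, hk']
        omega
      · intro r hr
        rcases Finset.mem_insert.1 hr with rfl | hr'
        · exact ⟨⟨pnd, pch.imp (fun a b hab => hFE hab), ph, pl⟩, parcF⟩
        · exact ⟨(hP'path r hr').1, fun a ha => hF'F ((hP'path r hr').2 a ha)⟩
      · rw [Finset.coe_insert]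
        rw [Set.pairwise_insert]
        refine ⟨hP'pw, ?_⟩
        intro r hr _
        have hrF' : ∀ a ∈ pathArcs r, a ∈ F' := (hP'path r hr).2
        constructor
        · intro a hap har
          have haS : a ∈ S := List.mem_toFinset.2 hap
          have := hrF' a har
          rw [hF', Finset.mem_sdiff] at this
          exact this.2 haS
        · intro a har hap
          have haS : a ∈ S := List.mem_toFinset.2 hap
          have := hrF' a har
          rw [hF', Finset.mem_sdiff] at this
          exact this.2 haS

end FlowAux

/-- **Flow decomposition.** If `F ⊆ E` is a set of arcs in which every vertex other than
`s` and `t` has equally many incoming and outgoing arcs, `s` has no incoming arcs and `t`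
has no outgoing arcs, and `k` is the number of arcs of `F` leaving `s`, then there exist
`k` pairwise edge-disjoint directed `s`–`t` paths all of whose arcs belong to `F`. -/
theorem flow_decomposes_into_paths {V : Type*} [Fintype V] [DecidableEq V]
    (E F : Finset (V × V)) (s t : V) (hst : s ≠ t) (hFE : F ⊆ E)
    (hcons : ∀ v : V, v ≠ s → v ≠ t →
      (F.filter (fun a => a.2 = v)).card = (F.filter (fun a => a.1 = v)).card)
    (hs : ∀ a ∈ F, a.2 ≠ s) (ht : ∀ a ∈ F, a.1 ≠ t) :
    ∃ P : Finset (List V), P.card = (F.filter (fun a => a.1 = s)).card ∧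
      (∀ p ∈ P, IsPath E s t p ∧ ∀ a ∈ pathArcs p, a ∈ F) ∧
      (P : Set (List V)).Pairwise EdgeDisjoint := by
  exact FlowAux.main_aux E s t hst F.card F le_rfl hFE hcons hs ht
end

section
/- Let G = (V, E) be a finite digraph and s, t ∈ V with s ≠ t. For a set A of out-neighbors of s, let f(A) denote the maximum cardinality of a set of pairwise edge-disjoint directed paths from s to t each of whose first arc is (s, v) for some v ∈ A. If A ⊆ B are sets of out-neighbors of s and v is an out-neighbor of s with v ∉ B and f(A ∪ {v}) = f(A), then f(B ∪ {v}) = f(B). -/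
/-- `fMax E s t A` is the maximum cardinality of a set of pairwise edge-disjoint directed
paths from `s` to `t` each of whose first arc is `(s, v)` for some `v ∈ A`. -/
noncomputable def fMax {V : Type*} (E : Finset (V × V)) (s t : V) (A : Finset V) : ℕ :=
  sSup {n | ∃ P : Finset (List V), P.card = n ∧ IsEdgeDisjointFamily E s t P ∧
    ∀ p ∈ P, ∃ v ∈ A, (pathArcs p).head? = some (s, v)}

set_option linter.unusedSectionVars false
namespace FP
section
variable {V : Type*} [DecidableEq V]

@[simp] lemma pathArcs_nil : pathArcs ([] : List V) = [] := rfl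
@[simp] lemma pathArcs_single (a : V) : pathArcs [a] = [] := rfl
@[simp] lemma pathArcs_cons₂ (a b : V) (l : List V) :
    pathArcs (a :: b :: l) = (a, b) :: pathArcs (b :: l) := rfl

lemma mem_pathArcs_fst {p : List V} {e : V × V} (h : e ∈ pathArcs p) : e.1 ∈ p := by
  obtain ⟨x, y⟩ := e
  exact (List.of_mem_zip h).1

lemma mem_pathArcs_snd {p : List V} {e : V × V} (h : e ∈ pathArcs p) : e.2 ∈ p.tail := by
  obtain ⟨x, y⟩ := e
  exact (List.of_mem_zip h).2

lemma chain'_of_pathArcs_rel {r : V → V → Prop} {p : List V}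
    (h : p.Chain' r) {e : V × V} (he : e ∈ pathArcs p) : r e.1 e.2 := by
  induction p with
  | nil => simp at he
  | cons a l ih =>
    cases l with
    | nil => simp at he
    | cons b m =>
      rw [pathArcs_cons₂] at he
      rcases List.mem_cons.mp he with h1 | h2
      · subst h1; exact (List.isChain_cons_cons.mp h).1
      · exact ih (List.isChain_cons_cons.mp h).2 h2

lemma pathArcs_nodup {p : List V} (h : p.Nodup) : (pathArcs p).Nodup := by
  induction p with
  | nil => simp
  | cons a l ih =>
    cases l with
    | nil => simp
    | cons b m =>
      rw [pathArcs_cons₂]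
      refine List.nodup_cons.mpr ⟨?_, ih (List.nodup_cons.mp h).2⟩
      intro hmem
      exact (List.nodup_cons.mp h).1 (mem_pathArcs_fst hmem)

/-- number of arcs of a nodup path entering `w` -/
lemma count_arcs_snd {p : List V} (h : p.Nodup) (w : V) :
    ((pathArcs p).toFinset.filter (fun a => a.2 = w)).card
      = if w ∈ p.tail then 1 else 0 := by
  induction p with
  | nil => simp
  | cons a l ih =>
    cases l with
    | nil => simp
    | cons b m =>
      rw [pathArcs_cons₂]
      have hnd : (pathArcs (b :: m)).Nodup := pathArcs_nodup (List.nodup_cons.mp h).2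
      have hab : (a, b) ∉ pathArcs (b :: m) := by
        intro hmem
        exact (List.nodup_cons.mp h).1 (mem_pathArcs_fst hmem)
      rw [List.toFinset_cons, Finset.filter_insert]
      have ihm := ih (List.nodup_cons.mp h).2
      by_cases hw : b = w
      · subst hw
        have h0 : b ∉ (b :: m).tail := by
          simp only [List.tail_cons]
          exact fun hm => (List.nodup_cons.mp (List.nodup_cons.mp h).2).1 hm
        rw [if_pos rfl]
        rw [if_neg h0] at ihm
        have hmem2 : b ∈ (a :: b :: m).tail := by simp
        rw [if_pos hmem2]
        rw [Finset.card_insert_of_notMem, ihm]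
        simp only [Finset.mem_filter, List.mem_toFinset]
        exact fun hc => hab hc.1
      · rw [if_neg hw, ihm]
        have : (w ∈ (a :: b :: m).tail) ↔ (w ∈ (b :: m).tail) := by
          simp only [List.tail_cons, List.mem_cons]
          constructor
          · rintro (h1 | h2); · exact absurd h1.symm hw
            · exact h2
          · exact Or.inr
        rw [if_congr this rfl rfl]

/-- number of arcs of a nodup path leaving `w` -/
lemma count_arcs_fst {p : List V} (h : p.Nodup) (w : V) :
    ((pathArcs p).toFinset.filter (fun a => a.1 = w)).card
      = if w ∈ p.dropLast then 1 else 0 := by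
  induction p with
  | nil => simp
  | cons a l ih =>
    cases l with
    | nil => simp
    | cons b m =>
      rw [pathArcs_cons₂]
      have hab : (a, b) ∉ pathArcs (b :: m) := by
        intro hmem
        exact (List.nodup_cons.mp h).1 (mem_pathArcs_fst hmem)
      rw [List.toFinset_cons, Finset.filter_insert]
      have ihm := ih (List.nodup_cons.mp h).2
      have hdl : (a :: b :: m).dropLast = a :: (b :: m).dropLast := by
        simp [List.dropLast_cons₂]
      by_cases hw : a = w
      · subst hw
        have h0 : a ∉ (b :: m).dropLast := by
          intro hm
          exact (List.nodup_cons.mp h).1 (List.dropLast_subset _ hm)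
        rw [if_pos rfl]
        rw [if_neg h0] at ihm
        rw [hdl, if_pos (List.mem_cons_self)]
        rw [Finset.card_insert_of_notMem, ihm]
        simp only [Finset.mem_filter, List.mem_toFinset]
        exact fun hc => hab hc.1
      · rw [if_neg hw, ihm, hdl]
        have : (w ∈ a :: (b :: m).dropLast) ↔ (w ∈ (b :: m).dropLast) := by
          simp only [List.mem_cons]
          constructor
          · rintro (h1 | h2); · exact absurd h1.symm hw
            · exact h2
          · exact Or.inr
        rw [if_congr this rfl rfl]


lemma mem_tail_iff {p : List V} (hnd : p.Nodup) {s w : V} (hh : p.head? = some s) :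
    w ∈ p.tail ↔ (w ∈ p ∧ w ≠ s) := by
  cases p with
  | nil => simp at hh
  | cons a l =>
    have : a = s := by simpa using hh
    subst this
    simp only [List.tail_cons, List.mem_cons]
    constructor
    · intro hw
      refine ⟨Or.inr hw, ?_⟩
      rintro rfl
      exact (List.nodup_cons.mp hnd).1 hw
    · rintro ⟨h1 | h2, hne⟩
      · exact absurd h1 hne
      · exact h2

lemma mem_dropLast_iff {p : List V} (hnd : p.Nodup) {t w : V} (hl : p.getLast? = some t) :
    w ∈ p.dropLast ↔ (w ∈ p ∧ w ≠ t) := by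
  have hpne : p ≠ [] := by rintro rfl; simp at hl
  have hdec : p = p.dropLast ++ [t] := by
    conv_lhs => rw [← List.dropLast_append_getLast hpne]
    rw [List.getLast?_eq_getLast hpne] at hl
    rw [Option.some_inj] at hl
    rw [hl]
  have hnd2 : (p.dropLast ++ [t]).Nodup := by rw [← hdec]; exact hnd
  have htnot : t ∉ p.dropLast := by
    have := List.disjoint_of_nodup_append hnd2
    intro hc; exact this hc (by simp)
  constructor
  · intro hw
    refine ⟨List.dropLast_subset _ hw, ?_⟩
    rintro rfl; exact htnot hw
  · rintro ⟨h1, hne⟩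
    rw [hdec] at h1
    rcases List.mem_append.mp h1 with h | h
    · exact h
    · simp at h; exact absurd h hne

/-- From reflexive-transitive reachability extract a nodup chain. -/
lemma exists_nodup_chain {r : V → V → Prop} {x y : V} (h : Relation.ReflTransGen r x y) :
    ∃ p : List V, p.Nodup ∧ p.Chain' r ∧ p.head? = some x ∧ p.getLast? = some y := by
  induction h with
  | refl => exact ⟨[x], by simp, List.isChain_singleton _, rfl, rfl⟩
  | tail hxb hbc ih =>
    rename_i b c
    obtain ⟨p, hnd, hch, hh, hl⟩ := ih
    have hpne : p ≠ [] := by rintro rfl; simp at hh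
    by_cases hcp : c ∈ p
    · -- trim: take prefix of p up to first occurrence of c
      set tw := p.takeWhile (fun z => z ≠ c) with htw
      have hdwne : p.dropWhile (fun z => z ≠ c) ≠ [] := by
        rw [Ne, List.dropWhile_eq_nil_iff]
        intro hall
        have := hall c hcp
        simp at this
      have hdwhead : (p.dropWhile (fun z => z ≠ c)).head hdwne = c := by
        have := List.head_dropWhile_not (fun z => z ≠ c) hdwne
        simpa using this
      obtain ⟨rest, hrest⟩ : ∃ rest, p.dropWhile (fun z => z ≠ c) = c :: rest := by
        refine ⟨(p.dropWhile (fun z => z ≠ c)).tail, ?_⟩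
        conv_lhs => rw [← List.cons_head_tail hdwne]
        rw [hdwhead]
      have hpdec : p = tw ++ c :: rest := by
        rw [htw, ← hrest, List.takeWhile_append_dropWhile]
      refine ⟨tw ++ [c], ?_, ?_, ?_, List.getLast?_concat⟩
      · have : (tw ++ [c]).Sublist p := by
          rw [hpdec]
          exact (List.append_sublist_append_left tw).mpr (by simp)
        exact this.nodup hnd
      · have : p.Chain' r := hch
        rw [hpdec] at this
        have h2 : (tw ++ [c] ++ rest).Chain' r := by simpa using this
        exact (List.isChain_append.mp h2).1
      · cases htwn : tw with
        | nil =>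
          have : p.head? = some c := by rw [hpdec, htwn]; rfl
          rw [hh] at this
          simp only [Option.some_inj] at this
          simp [htwn, this]
        | cons a l =>
          have : p.head? = some a := by rw [hpdec, htwn]; rfl
          rw [hh] at this
          simp only [Option.some_inj] at this
          simp [htwn, this]
    · refine ⟨p ++ [c], ?_, ?_, ?_, List.getLast?_concat⟩
      · rw [List.nodup_append]
        exact ⟨hnd, by simp, fun a ha b hb hab => hcp (by simp at hb; rw [← hb, ← hab]; exact ha)⟩
      · refine List.isChain_append.mpr ?_
        refine ⟨hch, by simp, ?_⟩
        intro u hu v hv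
        rw [hl] at hu
        simp only [Option.mem_def, Option.some_inj] at hu hv
        subst hu
        have hvc : c = v := by simpa using hv
        subst hvc
        exact hbc
      · cases p with
        | nil => exact absurd rfl hpne
        | cons a l => simpa using hh

/-- a path starting inside W and ending outside W has a crossing arc -/
lemma exists_crossing_arc {p : List V} {W : Finset V} {s t : V}
    (hh : p.head? = some s) (hl : p.getLast? = some t) (hs : s ∈ W) (ht : t ∉ W) :
    ∃ e ∈ pathArcs p, e.1 ∈ W ∧ e.2 ∉ W := by
  induction p generalizing s with
  | nil => simp at hh
  | cons a l ih =>
    have ha : a = s := by simpa using hh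
    subst ha
    cases l with
    | nil =>
      have : a = t := by simpa using hl
      subst this
      exact absurd hs ht
    | cons b m =>
      by_cases hb : b ∈ W
      · have hl' : (b :: m).getLast? = some t := by
          rw [← hl]; rw [List.getLast?_cons_cons]
        obtain ⟨e, he, hcr⟩ := ih (s := b) rfl hl' hb
        exact ⟨e, by rw [pathArcs_cons₂]; exact List.mem_cons_of_mem _ he, hcr⟩
      · exact ⟨(a, b), by rw [pathArcs_cons₂]; exact List.mem_cons_self, hs, hb⟩

end

section
variable {V : Type*} [Fintype V] [DecidableEq V]

/-- in-degree of vertex w in arc set F -/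
def din (F : Finset (V × V)) (w : V) : ℕ := (F.filter fun a => a.2 = w).card
/-- out-degree -/
def dout (F : Finset (V × V)) (w : V) : ℕ := (F.filter fun a => a.1 = w).card

lemma din_mono {F G : Finset (V × V)} (h : F ⊆ G) (w : V) : din F w ≤ din G w :=
  Finset.card_le_card (Finset.filter_subset_filter _ h)

lemma dout_mono {F G : Finset (V × V)} (h : F ⊆ G) (w : V) : dout F w ≤ dout G w :=
  Finset.card_le_card (Finset.filter_subset_filter _ h)

lemma din_union {F G : Finset (V × V)} (h : Disjoint F G) (w : V) :
    din (F ∪ G) w = din F w + din G w := by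
  unfold din
  rw [Finset.filter_union]
  exact Finset.card_union_of_disjoint (Finset.disjoint_filter_filter h)

lemma dout_union {F G : Finset (V × V)} (h : Disjoint F G) (w : V) :
    dout (F ∪ G) w = dout F w + dout G w := by
  unfold dout
  rw [Finset.filter_union]
  exact Finset.card_union_of_disjoint (Finset.disjoint_filter_filter h)

lemma din_sdiff {F G : Finset (V × V)} (h : G ⊆ F) (w : V) :
    din (F \ G) w = din F w - din G w := by
  unfold din
  rw [show (F \ G).filter (fun a => a.2 = w) = F.filter (fun a => a.2 = w) \ G.filter (fun a => a.2 = w) by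
    ext a; simp [Finset.mem_filter, Finset.mem_sdiff]; tauto]
  rw [Finset.card_sdiff_of_subset (Finset.filter_subset_filter _ h)]

lemma dout_sdiff {F G : Finset (V × V)} (h : G ⊆ F) (w : V) :
    dout (F \ G) w = dout F w - dout G w := by
  unfold dout
  rw [show (F \ G).filter (fun a => a.1 = w) = F.filter (fun a => a.1 = w) \ G.filter (fun a => a.1 = w) by
    ext a; simp [Finset.mem_filter, Finset.mem_sdiff]; tauto]
  rw [Finset.card_sdiff_of_subset (Finset.filter_subset_filter _ h)]

lemma din_image_swap (F : Finset (V × V)) (w : V) :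
    din (F.image Prod.swap) w = dout F w := by
  unfold din dout
  rw [Finset.filter_image]
  rw [Finset.card_image_of_injective _ Prod.swap_injective]
  rfl

lemma dout_image_swap (F : Finset (V × V)) (w : V) :
    dout (F.image Prod.swap) w = din F w := by
  unfold din dout
  rw [Finset.filter_image]
  rw [Finset.card_image_of_injective _ Prod.swap_injective]
  rfl

lemma sum_dout (F : Finset (V × V)) (W : Finset V) :
    ∑ w ∈ W, dout F w = (F.filter fun a => a.1 ∈ W).card := by
  unfold dout
  rw [Finset.card_filter]
  have hc : ∀ w, (F.filter fun a => a.1 = w).card = ∑ a ∈ F, if a.1 = w then 1 else 0 :=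
    fun w => Finset.card_filter _ _
  simp_rw [hc]
  rw [Finset.sum_comm]
  refine Finset.sum_congr rfl fun a _ => ?_
  simp [Finset.sum_ite_eq W a.1 (fun _ => 1)]

lemma sum_din (F : Finset (V × V)) (W : Finset V) :
    ∑ w ∈ W, din F w = (F.filter fun a => a.2 ∈ W).card := by
  unfold din
  rw [Finset.card_filter]
  have hc : ∀ w, (F.filter fun a => a.2 = w).card = ∑ a ∈ F, if a.2 = w then 1 else 0 :=
    fun w => Finset.card_filter _ _
  simp_rw [hc]
  rw [Finset.sum_comm]
  refine Finset.sum_congr rfl fun a _ => ?_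
  simp [Finset.sum_ite_eq W a.2 (fun _ => 1)]


/-- `F` is an integral unit-capacity flow in network `N`. -/
def IsFlow (N : Finset (V × V)) (s t : V) (F : Finset (V × V)) : Prop :=
  F ⊆ N ∧ ∀ w, w ≠ s → w ≠ t → din F w = dout F w

/-- a network with no arcs into `s` nor out of `t` -/
def GoodNet (N : Finset (V × V)) (s t : V) : Prop := ∀ a ∈ N, a.2 ≠ s ∧ a.1 ≠ t

lemma din_source_eq_zero {N F : Finset (V × V)} {s t : V} (hG : GoodNet N s t)
    (hFN : F ⊆ N) : din F s = 0 := by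
  unfold din
  rw [Finset.card_eq_zero, Finset.filter_eq_empty_iff]
  exact fun a ha => (hG a (hFN ha)).1

lemma flow_across {N F : Finset (V × V)} {s t : V} (hG : GoodNet N s t)
    (hF : IsFlow N s t F) {W : Finset V} (hs : s ∈ W) (ht : t ∉ W) :
    (F.filter fun a => a.1 ∈ W ∧ a.2 ∉ W).card
      = (F.filter fun a => ¬ a.1 ∈ W ∧ a.2 ∈ W).card + dout F s := by
  have hsum : ∑ w ∈ W, dout F w = ∑ w ∈ W, din F w + dout F s := by
    rw [← Finset.add_sum_erase W (dout F) hs, ← Finset.add_sum_erase W (din F) hs]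
    rw [din_source_eq_zero hG hF.1]
    have : ∑ w ∈ W.erase s, dout F w = ∑ w ∈ W.erase s, din F w := by
      refine Finset.sum_congr rfl fun w hw => ?_
      have hws : w ≠ s := Finset.ne_of_mem_erase hw
      have hwt : w ≠ t := by rintro rfl; exact ht (Finset.mem_of_mem_erase hw)
      exact (hF.2 w hws hwt).symm
    omega
  rw [sum_dout, sum_din] at hsum
  have h1 : (F.filter fun a => a.1 ∈ W).card
      = (F.filter fun a => a.1 ∈ W ∧ a.2 ∈ W).card
        + (F.filter fun a => a.1 ∈ W ∧ a.2 ∉ W).card := by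
    rw [← Finset.filter_filter, ← Finset.filter_filter]
    exact (Finset.card_filter_add_card_filter_not
      (s := F.filter fun a => a.1 ∈ W) (fun a => a.2 ∈ W)).symm
  have h2 : (F.filter fun a => a.2 ∈ W).card
      = (F.filter fun a => a.1 ∈ W ∧ a.2 ∈ W).card
        + (F.filter fun a => ¬ a.1 ∈ W ∧ a.2 ∈ W).card := by
    have := Finset.card_filter_add_card_filter_not
      (s := F.filter fun a => a.2 ∈ W) (fun a => a.1 ∈ W)
    rw [Finset.filter_filter, Finset.filter_filter] at this
    rw [← this]
    congr 1
    · congr 1; ext a; simp only [Finset.mem_filter]; tauto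
    · congr 1; ext a; simp only [Finset.mem_filter]; tauto
  omega

open Classical in
/-- if the flow has positive value, `t` is reachable from `s` along flow arcs -/
lemma reach_sink {N F : Finset (V × V)} {s t : V} (hG : GoodNet N s t)
    (hF : IsFlow N s t F) (hpos : 0 < dout F s) :
    Relation.ReflTransGen (fun x y => (x, y) ∈ F) s t := by
  by_contra hnr
  classical
  set W : Finset V := Finset.univ.filter
    (fun w => Relation.ReflTransGen (fun x y => (x, y) ∈ F) s w) with hW
  have hs : s ∈ W := by
    simp only [hW, Finset.mem_filter, Finset.mem_univ, true_and]
    exact Relation.ReflTransGen.refl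
  have ht : t ∉ W := by
    simp only [hW, Finset.mem_filter, Finset.mem_univ, true_and]
    exact hnr
  have hclosed : ∀ a ∈ F, a.1 ∈ W → a.2 ∈ W := by
    intro a ha h1
    simp only [hW, Finset.mem_filter, Finset.mem_univ, true_and] at h1 ⊢
    exact h1.tail ha
  have hempty : (F.filter fun a => a.1 ∈ W ∧ a.2 ∉ W) = ∅ := by
    rw [Finset.filter_eq_empty_iff]
    rintro a ha ⟨h1, h2⟩
    exact h2 (hclosed a ha h1)
  have := flow_across hG hF hs ht
  rw [hempty] at this
  simp at this
  omega


lemma augment {N F : Finset (V × V)} {s t : V} (hG : GoodNet N s t)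
    (hF : IsFlow N s t F) (hst : s ≠ t)
    (hreach : Relation.ReflTransGen
      (fun x y => ((x, y) ∈ N ∧ (x, y) ∉ F) ∨ (y, x) ∈ F) s t) :
    ∃ F', IsFlow N s t F' ∧ dout F' s = dout F s + 1 := by
  classical
  obtain ⟨q, hnd, hch, hh, hl⟩ := exists_nodup_chain hreach
  set Aq := (pathArcs q).toFinset with hAq
  set Fw := Aq.filter (fun a => a ∈ N ∧ a ∉ F) with hFw
  set Bw := Aq.filter (fun a => ¬(a ∈ N ∧ a ∉ F)) with hBw
  set Rv := Bw.image Prod.swap with hRv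
  have hBwF : ∀ a ∈ Bw, (a.2, a.1) ∈ F := by
    intro a ha
    rw [hBw, Finset.mem_filter] at ha
    have hrel := chain'_of_pathArcs_rel hch
      (by rw [hAq] at ha; exact List.mem_toFinset.mp ha.1)
    rcases hrel with h1 | h2
    · exact absurd h1 ha.2
    · exact h2
  have hRvF : Rv ⊆ F := by
    intro a ha
    rw [hRv] at ha
    obtain ⟨b, hb, rfl⟩ := Finset.mem_image.mp ha
    exact hBwF b hb
  have hFwN : Fw ⊆ N := fun a ha => ((Finset.mem_filter.mp ha).2).1
  have hFwF : ∀ a ∈ Fw, a ∉ F := fun a ha => ((Finset.mem_filter.mp ha).2).2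
  have hdisj : Disjoint (F \ Rv) Fw := by
    rw [Finset.disjoint_right]
    intro a haFw haSd
    exact hFwF a haFw (Finset.mem_sdiff.mp haSd).1
  set F' := (F \ Rv) ∪ Fw with hF'
  have hsub : F' ⊆ N := by
    intro a ha
    rcases Finset.mem_union.mp ha with h1 | h2
    · exact hF.1 (Finset.mem_sdiff.mp h1).1
    · exact hFwN h2
  have hdinF' : ∀ w, din F' w = din F w - dout Bw w + din Fw w := by
    intro w
    rw [hF', din_union hdisj, din_sdiff hRvF, hRv, din_image_swap]
  have hdoutF' : ∀ w, dout F' w = dout F w - din Bw w + dout Fw w := by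
    intro w
    rw [hF', dout_union hdisj, dout_sdiff hRvF, hRv, dout_image_swap]
  have hpart_in : ∀ w, din Fw w + din Bw w = din Aq w := by
    intro w
    unfold din
    rw [hFw, hBw, Finset.filter_comm, Finset.filter_comm (fun a => ¬(a ∈ N ∧ a ∉ F))]
    exact Finset.card_filter_add_card_filter_not _
  have hpart_out : ∀ w, dout Fw w + dout Bw w = dout Aq w := by
    intro w
    unfold dout
    rw [hFw, hBw, Finset.filter_comm, Finset.filter_comm (fun a => ¬(a ∈ N ∧ a ∉ F))]
    exact Finset.card_filter_add_card_filter_not _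
  have hAq_in : ∀ w, din Aq w = if w ∈ q.tail then 1 else 0 := fun w => count_arcs_snd hnd w
  have hAq_out : ∀ w, dout Aq w = if w ∈ q.dropLast then 1 else 0 := fun w => count_arcs_fst hnd w
  have hRle : ∀ w, dout Bw w ≤ din F w := by
    intro w
    have := din_mono hRvF w
    rw [hRv, din_image_swap] at this
    exact this
  have hRle2 : ∀ w, din Bw w ≤ dout F w := by
    intro w
    have := dout_mono hRvF w
    rw [hRv, dout_image_swap] at this
    exact this
  refine ⟨F', ⟨hsub, ?_⟩, ?_⟩
  · intro w hws hwt
    have hin := hdinF' w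
    have hout := hdoutF' w
    have hcons := hF.2 w hws hwt
    have hi := hpart_in w
    have ho := hpart_out w
    have heq : din Aq w = dout Aq w := by
      rw [hAq_in, hAq_out]
      have e1 : w ∈ q.tail ↔ (w ∈ q ∧ w ≠ s) := mem_tail_iff hnd hh
      have e2 : w ∈ q.dropLast ↔ (w ∈ q ∧ w ≠ t) := mem_dropLast_iff hnd hl
      have : (w ∈ q.tail) ↔ (w ∈ q.dropLast) := by
        rw [e1, e2]
        constructor
        · rintro ⟨h1, _⟩; exact ⟨h1, hwt⟩
        · rintro ⟨h1, _⟩; exact ⟨h1, hws⟩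
      rw [if_congr this rfl rfl]
    have hr1 := hRle w
    have hr2 := hRle2 w
    omega
  · have hin0 : din Aq s = 0 := by
      rw [hAq_in]
      rw [if_neg]
      rw [mem_tail_iff hnd hh]
      rintro ⟨_, h2⟩; exact h2 rfl
    have hout1 : dout Aq s = 1 := by
      rw [hAq_out, if_pos]
      rw [mem_dropLast_iff hnd hl]
      exact ⟨List.mem_of_mem_head? (by rw [hh]; rfl), hst⟩
    have hBw_out_s : dout Bw s = 0 := by
      unfold dout
      rw [Finset.card_eq_zero, Finset.filter_eq_empty_iff]
      intro a ha hfst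
      have h2 := hBwF a ha
      have := (hG _ (hF.1 h2)).1
      simp only at this
      exact this hfst
    have hBw_in_s : din Bw s = 0 := by
      have := hpart_in s
      omega
    have hFw_out_s : dout Fw s = 1 := by
      have := hpart_out s
      omega
    have := hdoutF' s
    have hr2 := hRle2 s
    omega


lemma edgeDisjoint_symm : Symmetric (EdgeDisjoint (V := V)) :=
  fun p q h a haq hap => h a hap haq

lemma decompose {N : Finset (V × V)} {s t : V} {E : Finset (V × V)} (hNE : N ⊆ E)
    (hG : GoodNet N s t) (hst : s ≠ t) :
    ∀ (m : ℕ) (F : Finset (V × V)), IsFlow N s t F → dout F s = m →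
    ∃ P : Finset (List V), P.card = m ∧ IsEdgeDisjointFamily E s t P ∧
      (∀ p ∈ P, ∃ u, (pathArcs p).head? = some (s, u) ∧ (s, u) ∈ F) ∧
      (∀ p ∈ P, ∀ a ∈ pathArcs p, a ∈ F) := by
  intro m
  induction m with
  | zero =>
    intro F hF hval
    exact ⟨∅, rfl, ⟨fun p hp => absurd hp (Finset.notMem_empty p), by simp⟩,
      fun p hp => absurd hp (Finset.notMem_empty p),
      fun p hp => absurd hp (Finset.notMem_empty p)⟩
  | succ m ih =>
    intro F hF hval
    have hreach := reach_sink hG hF (by omega)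
    obtain ⟨p, hnd, hch, hh, hl⟩ := exists_nodup_chain hreach
    have harcsF : ∀ a ∈ pathArcs p, a ∈ F := by
      intro a ha
      have := chain'_of_pathArcs_rel hch ha
      simpa using this
    set arcsP := (pathArcs p).toFinset with harcsP
    have harcsPF : arcsP ⊆ F := by
      intro a ha
      exact harcsF a (List.mem_toFinset.mp ha)
    have hsp : s ∈ p := List.mem_of_mem_head? (by rw [hh]; rfl)
    have htp : t ∈ p := by
      have hpne : p ≠ [] := by rintro rfl; simp at hh
      have := List.getLast?_eq_getLast hpne
      rw [this, Option.some_inj] at hl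
      rw [← hl]
      exact List.getLast_mem hpne
    -- the head structure of p
    obtain ⟨b, rest, hpdec⟩ : ∃ b rest, p = s :: b :: rest := by
      cases p with
      | nil => simp at hh
      | cons a l =>
        have ha : a = s := by simpa using hh
        subst ha
        cases l with
        | nil =>
          exfalso
          have : a = t := by simpa using hl
          exact hst this
        | cons b rest => exact ⟨b, rest, rfl⟩
    have harc_head : (pathArcs p).head? = some (s, b) := by rw [hpdec]; rfl
    have hfirstmem : (s, b) ∈ arcsP := by
      rw [harcsP, List.mem_toFinset, hpdec]
      exact List.mem_cons_self
    set F2 := F \ arcsP with hF2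
    have hF2flow : IsFlow N s t F2 := by
      refine ⟨fun a ha => hF.1 (Finset.mem_sdiff.mp ha).1, ?_⟩
      intro w hws hwt
      rw [hF2, din_sdiff harcsPF, dout_sdiff harcsPF]
      have hi := count_arcs_snd hnd w
      have ho := count_arcs_fst hnd w
      have heq : din arcsP w = dout arcsP w := by
        have hi' : din arcsP w = if w ∈ p.tail then 1 else 0 := count_arcs_snd hnd w
        have ho' : dout arcsP w = if w ∈ p.dropLast then 1 else 0 := count_arcs_fst hnd w
        rw [hi', ho']
        have e1 : w ∈ p.tail ↔ (w ∈ p ∧ w ≠ s) := mem_tail_iff hnd hh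
        have e2 : w ∈ p.dropLast ↔ (w ∈ p ∧ w ≠ t) := mem_dropLast_iff hnd hl
        have : (w ∈ p.tail) ↔ (w ∈ p.dropLast) := by
          rw [e1, e2]
          constructor
          · rintro ⟨h1, _⟩; exact ⟨h1, hwt⟩
          · rintro ⟨h1, _⟩; exact ⟨h1, hws⟩
        rw [if_congr this rfl rfl]
      have h1 := din_mono harcsPF w
      have h2 := dout_mono harcsPF w
      have := hF.2 w hws hwt
      omega
    have hval2 : dout F2 s = m := by
      rw [hF2, dout_sdiff harcsPF]
      have ho : dout arcsP s = 1 := by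
        have ho' : dout arcsP s = if s ∈ p.dropLast then 1 else 0 := count_arcs_fst hnd s
        rw [ho', if_pos]
        rw [mem_dropLast_iff hnd hl]
        exact ⟨hsp, hst⟩
      have h2 := dout_mono harcsPF s
      omega
    obtain ⟨P2, hcard, ⟨hpaths, hpair⟩, hfirst, harcs⟩ := ih F2 hF2flow hval2
    have hpnotP2 : p ∉ P2 := by
      intro hmem
      have := harcs p hmem (s, b) (by rw [hpdec]; exact List.mem_cons_self)
      rw [hF2, Finset.mem_sdiff] at this
      exact this.2 hfirstmem
    refine ⟨insert p P2, ?_, ⟨?_, ?_⟩, ?_, ?_⟩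
    · rw [Finset.card_insert_of_notMem hpnotP2, hcard]
    · intro q hq
      rcases Finset.mem_insert.mp hq with rfl | hq2
      · exact ⟨hnd, hch.imp (fun a c hac => hNE (hF.1 hac)), hh, hl⟩
      · exact hpaths q hq2
    · rw [Finset.coe_insert]
      have : Std.Symm (EdgeDisjoint (V := V)) := ⟨fun _ _ h => edgeDisjoint_symm h⟩
      rw [Set.pairwise_insert_of_symm]
      refine ⟨hpair, ?_⟩
      intro q hq hne a hap haq
      have h1 : a ∈ F2 := harcs q hq a haq
      rw [hF2, Finset.mem_sdiff] at h1
      exact h1.2 (by rw [harcsP, List.mem_toFinset]; exact hap)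
    · intro q hq
      rcases Finset.mem_insert.mp hq with rfl | hq2
      · exact ⟨b, harc_head, harcsPF hfirstmem⟩
      · obtain ⟨u, h1, h2⟩ := hfirst q hq2
        exact ⟨u, h1, (Finset.sdiff_subset (s := F) (t := arcsP)) (by rw [← hF2]; exact h2)⟩
    · intro q hq a ha
      rcases Finset.mem_insert.mp hq with rfl | hq2
      · exact harcsF a ha
      · have := harcs q hq2 a ha
        rw [hF2, Finset.mem_sdiff] at this
        exact this.1


lemma exists_tight_cut {N E : Finset (V × V)} {s t : V} (hNE : N ⊆ E)
    (hG : GoodNet N s t) (hst : s ≠ t) :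
    ∃ (W : Finset V) (P : Finset (List V)), s ∈ W ∧ t ∉ W ∧
      P.card = (N.filter fun a => a.1 ∈ W ∧ a.2 ∉ W).card ∧
      IsEdgeDisjointFamily E s t P ∧
      (∀ p ∈ P, ∃ u, (pathArcs p).head? = some (s, u) ∧ (s, u) ∈ N) := by
  classical
  set vals : Set ℕ := {n | ∃ F, IsFlow N s t F ∧ dout F s = n} with hvals
  have h0 : 0 ∈ vals := by
    refine ⟨∅, ⟨Finset.empty_subset N, fun w _ _ => by simp [din, dout]⟩, by simp [dout]⟩
  have hbdd : BddAbove vals := by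
    refine ⟨N.card, ?_⟩
    rintro n ⟨F, hF, rfl⟩
    calc dout F s ≤ F.card := Finset.card_filter_le _ _
    _ ≤ N.card := Finset.card_le_card hF.1
  obtain ⟨F, hF, hFv⟩ := Nat.sSup_mem ⟨0, h0⟩ hbdd
  have hmax : ∀ F', IsFlow N s t F' → dout F' s ≤ dout F s := by
    intro F' hF'
    rw [hFv]
    exact le_csSup hbdd ⟨F', hF', rfl⟩
  set resid : V → V → Prop := fun x y => ((x, y) ∈ N ∧ (x, y) ∉ F) ∨ (y, x) ∈ F with hresid
  set W : Finset V := Finset.univ.filter (fun w => Relation.ReflTransGen resid s w) with hW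
  have hsW : s ∈ W := by
    simp only [hW, Finset.mem_filter, Finset.mem_univ, true_and]
    exact Relation.ReflTransGen.refl
  have htW : t ∉ W := by
    simp only [hW, Finset.mem_filter, Finset.mem_univ, true_and]
    intro hreach
    obtain ⟨F', hF', hv'⟩ := augment hG hF hst hreach
    have := hmax F' hF'
    omega
  have hWstep : ∀ x y, x ∈ W → resid x y → y ∈ W := by
    intro x y hx hr
    simp only [hW, Finset.mem_filter, Finset.mem_univ, true_and] at hx ⊢
    exact hx.tail hr
  have hNoutF : ∀ a ∈ N, a.1 ∈ W → a.2 ∉ W → a ∈ F := by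
    intro a ha h1 h2
    by_contra hnF
    exact h2 (hWstep a.1 a.2 h1 (Or.inl ⟨ha, hnF⟩))
  have hFnoback : (F.filter fun a => ¬ a.1 ∈ W ∧ a.2 ∈ W) = ∅ := by
    rw [Finset.filter_eq_empty_iff]
    rintro a ha ⟨h1, h2⟩
    exact h1 (hWstep a.2 a.1 h2 (Or.inr (by simpa using ha)))
  have hacross := flow_across hG hF hsW htW
  rw [hFnoback] at hacross
  simp only [Finset.card_empty, zero_add] at hacross
  have hcuteq : (N.filter fun a => a.1 ∈ W ∧ a.2 ∉ W) = (F.filter fun a => a.1 ∈ W ∧ a.2 ∉ W) := by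
    apply Finset.Subset.antisymm
    · intro a ha
      rw [Finset.mem_filter] at ha ⊢
      exact ⟨hNoutF a ha.1 ha.2.1 ha.2.2, ha.2⟩
    · exact Finset.filter_subset_filter _ hF.1
  obtain ⟨P, hcard, hfam, hfirst, harcs⟩ := decompose hNE hG hst (dout F s) F hF rfl
  refine ⟨W, P, hsW, htW, ?_, hfam, ?_⟩
  · rw [hcuteq, hacross]; exact hcard
  · intro p hp
    obtain ⟨u, h1, h2⟩ := hfirst p hp
    exact ⟨u, h1, hF.1 h2⟩


variable (E : Finset (V × V)) (s t : V)

/-- the network of arcs usable by paths with first arc into `S` -/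
def net (S : Finset V) : Finset (V × V) :=
  E.filter (fun a => a.2 ≠ s ∧ a.1 ≠ t ∧ (a.1 = s → a.2 ∈ S))

def capN (S : Finset V) (W : Finset V) : ℕ :=
  ((net E s t S).filter (fun a => a.1 ∈ W ∧ a.2 ∉ W)).card

def srcCount (S W : Finset V) : ℕ := (S.filter (fun u => u ≠ s ∧ u ∉ W)).card

def dpart (W : Finset V) : ℕ :=
  (E.filter (fun a => a.1 ≠ s ∧ a.2 ≠ s ∧ a.1 ≠ t ∧ a.1 ∈ W ∧ a.2 ∉ W)).card

lemma goodNet_net (S : Finset V) : GoodNet (net E s t S) s t := by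
  intro a ha
  rw [net, Finset.mem_filter] at ha
  exact ⟨ha.2.1, ha.2.2.1⟩

lemma net_subset (S : Finset V) : net E s t S ⊆ E := Finset.filter_subset _ _

lemma net_mono {S T : Finset V} (h : S ⊆ T) : net E s t S ⊆ net E s t T := by
  intro a ha
  rw [net, Finset.mem_filter] at ha ⊢
  exact ⟨ha.1, ha.2.1, ha.2.2.1, fun h1 => h (ha.2.2.2 h1)⟩

lemma capN_mono_S {S T : Finset V} (h : S ⊆ T) (W : Finset V) :
    capN E s t S W ≤ capN E s t T W :=
  Finset.card_le_card (Finset.filter_subset_filter _ (net_mono E s t h))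

lemma mem_pathArcs_fst_dropLast {p : List V} {e : V × V} (h : e ∈ pathArcs p) :
    e.1 ∈ p.dropLast := by
  induction p with
  | nil => simp [pathArcs] at h
  | cons a l ih =>
    cases l with
    | nil => simp [pathArcs] at h
    | cons b m =>
      rw [pathArcs_cons₂] at h
      rcases List.mem_cons.mp h with h1 | h2
      · subst h1
        simp [List.dropLast_cons₂]
      · have := ih h2
        rw [List.dropLast_cons₂]
        exact List.mem_cons_of_mem _ this

lemma head_arc_of_fst_eq_source {p : List V} (hnd : p.Nodup) (hh : p.head? = some s)
    {e : V × V} (he : e ∈ pathArcs p) (hfst : e.1 = s) :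
    (pathArcs p).head? = some e := by
  cases p with
  | nil => simp [pathArcs] at he
  | cons a l =>
    have ha : a = s := by simpa using hh
    subst ha
    cases l with
    | nil => simp [pathArcs] at he
    | cons b m =>
      rw [pathArcs_cons₂] at he ⊢
      rcases List.mem_cons.mp he with h1 | h2
      · rw [h1]; rfl
      · exfalso
        have : e.1 ∈ (b :: m) := mem_pathArcs_fst h2
        rw [hfst] at this
        exact (List.nodup_cons.mp hnd).1 this

/-- arcs of a path with first arc into `S` all lie in `net S`. -/
lemma path_arcs_mem_net {S : Finset V} {p : List V} (hp : IsPath E s t p)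
    {u : V} (hu : u ∈ S) (hhead : (pathArcs p).head? = some (s, u)) :
    ∀ e ∈ pathArcs p, e ∈ net E s t S := by
  obtain ⟨hnd, hch, hh, hl⟩ := hp
  intro e he
  rw [net, Finset.mem_filter]
  refine ⟨chain'_of_pathArcs_rel hch he, ?_, ?_, ?_⟩
  · have h2 : e.2 ∈ p.tail := mem_pathArcs_snd he
    rw [mem_tail_iff hnd hh] at h2
    exact h2.2
  · have h1 : e.1 ∈ p.dropLast := mem_pathArcs_fst_dropLast he
    rw [mem_dropLast_iff hnd hl] at h1
    exact h1.2
  · intro hfst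
    have := head_arc_of_fst_eq_source s hnd hh he hfst
    rw [hhead, Option.some_inj] at this
    rw [← this]
    exact hu

/-- weak duality: an edge-disjoint family is no larger than any cut -/
lemma family_le_capN {S : Finset V} {W : Finset V} (hsW : s ∈ W) (htW : t ∉ W)
    {P : Finset (List V)} (hfam : IsEdgeDisjointFamily E s t P)
    (hfirst : ∀ p ∈ P, ∃ u ∈ S, (pathArcs p).head? = some (s, u)) :
    P.card ≤ capN E s t S W := by
  classical
  have hex : ∀ p : List V, ∃ e : V × V, p ∈ P →
      e ∈ pathArcs p ∧ e ∈ net E s t S ∧ e.1 ∈ W ∧ e.2 ∉ W := by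
    intro p
    by_cases hp : p ∈ P
    · obtain ⟨u, hu, hhead⟩ := hfirst p hp
      have hpath := hfam.1 p hp
      obtain ⟨e, he, hcr⟩ := exists_crossing_arc hpath.2.2.1 hpath.2.2.2 hsW htW
      exact ⟨e, fun _ => ⟨he, path_arcs_mem_net E s t hpath hu hhead e he, hcr⟩⟩
    · exact ⟨(s, s), fun h => absurd h hp⟩
  choose f hf using hex
  show P.card ≤ ((net E s t S).filter (fun a => a.1 ∈ W ∧ a.2 ∉ W)).card
  apply Finset.card_le_card_of_injOn f
  · intro p hp
    rw [Finset.mem_coe, Finset.mem_filter]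
    obtain ⟨_, h2, h3, h4⟩ := hf p hp
    exact ⟨h2, h3, h4⟩
  · intro p hp q hq hfe
    by_contra hne
    have hdis := hfam.2 hp hq hne
    have h1 := (hf p hp).1
    have h2 := (hf q hq).1
    rw [hfe] at h1
    exact hdis (f q) h1 h2


lemma capN_split {S : Finset V} (hS : ∀ u ∈ S, (s, u) ∈ E) (hst : s ≠ t)
    {W : Finset V} (hsW : s ∈ W) :
    capN E s t S W = srcCount s S W + dpart E s t W := by
  classical
  show ((net E s t S).filter (fun a => a.1 ∈ W ∧ a.2 ∉ W)).card = _
  set base := (net E s t S).filter (fun a => a.1 ∈ W ∧ a.2 ∉ W) with hbase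
  have hsplit := Finset.card_filter_add_card_filter_not
    (s := base) (fun a => a.1 = s)
  have hX1 : base.filter (fun a => a.1 = s)
      = (S.filter (fun u => u ≠ s ∧ u ∉ W)).image (fun u => (s, u)) := by
    ext a
    obtain ⟨x, y⟩ := a
    simp only [hbase, net, Finset.mem_filter, Finset.mem_image]
    constructor
    · rintro ⟨⟨⟨hE, hy, hx, himp⟩, hxW, hyW⟩, hxs⟩
      subst hxs
      exact ⟨y, ⟨himp rfl, hy, hyW⟩, rfl⟩
    · rintro ⟨u, ⟨huS, hus, huW⟩, heq⟩
      obtain ⟨rfl, rfl⟩ := Prod.mk.injEq .. ▸ heq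
      exact ⟨⟨⟨hS _ huS, hus, hst, fun _ => huS⟩, hsW, huW⟩, rfl⟩
  have hX2 : base.filter (fun a => ¬ a.1 = s)
      = E.filter (fun a => a.1 ≠ s ∧ a.2 ≠ s ∧ a.1 ≠ t ∧ a.1 ∈ W ∧ a.2 ∉ W) := by
    ext a
    simp only [hbase, net, Finset.mem_filter]
    tauto
  have hcard1 : (base.filter (fun a => a.1 = s)).card = srcCount s S W := by
    rw [hX1, Finset.card_image_of_injective _ (fun u u' h => by
      simpa using h)]
    rfl
  have hcard2 : (base.filter (fun a => ¬ a.1 = s)).card = dpart E s t W := by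
    rw [hX2]; rfl
  omega

lemma srcCount_union_inter (S X Y : Finset V) :
    srcCount s S (X ∪ Y) + srcCount s S (X ∩ Y) = srcCount s S X + srcCount s S Y := by
  classical
  unfold srcCount
  rw [Finset.card_filter, Finset.card_filter, Finset.card_filter, Finset.card_filter]
  rw [← Finset.sum_add_distrib, ← Finset.sum_add_distrib]
  refine Finset.sum_congr rfl fun u _ => ?_
  by_cases hus : u = s <;>
    by_cases hx : u ∈ X <;>
      by_cases hy : u ∈ Y <;>
        simp [hus, hx, hy, Finset.mem_union, Finset.mem_inter]

lemma srcCount_anti (S : Finset V) {W₁ W₂ : Finset V} (h : W₁ ⊆ W₂) :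
    srcCount s S W₂ ≤ srcCount s S W₁ := by
  apply Finset.card_le_card
  intro u hu
  rw [Finset.mem_filter] at hu ⊢
  exact ⟨hu.1, hu.2.1, fun hc => hu.2.2 (h hc)⟩

lemma srcCount_split {S T : Finset V} (hST : S ⊆ T) (W : Finset V) :
    srcCount s T W = srcCount s S W + srcCount s (T \ S) W := by
  classical
  unfold srcCount
  rw [← Finset.card_union_of_disjoint, ← Finset.filter_union,
    Finset.union_sdiff_of_subset hST]
  exact Finset.disjoint_filter_filter (Finset.disjoint_sdiff)

lemma srcCount_insert {S : Finset V} {u : V} (hu : u ∉ S) (W : Finset V) :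
    srcCount s (insert u S) W = srcCount s S W + (if u ≠ s ∧ u ∉ W then 1 else 0) := by
  classical
  unfold srcCount
  rw [Finset.filter_insert]
  by_cases hc : u ≠ s ∧ u ∉ W
  · rw [if_pos hc, if_pos hc, Finset.card_insert_of_notMem (fun hmem =>
      hu (Finset.mem_of_mem_filter u hmem))]
  · rw [if_neg hc, if_neg hc]
    omega

lemma dpart_submodular (X Y : Finset V) :
    dpart E s t (X ∪ Y) + dpart E s t (X ∩ Y) ≤ dpart E s t X + dpart E s t Y := by
  classical
  unfold dpart
  rw [Finset.card_filter, Finset.card_filter, Finset.card_filter, Finset.card_filter]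
  rw [← Finset.sum_add_distrib, ← Finset.sum_add_distrib]
  refine Finset.sum_le_sum fun a _ => ?_
  by_cases h1 : a.1 ∈ X <;> by_cases h2 : a.1 ∈ Y <;>
    by_cases h3 : a.2 ∈ X <;> by_cases h4 : a.2 ∈ Y <;>
      by_cases hb1 : a.1 ≠ s <;> by_cases hb2 : a.2 ≠ s <;> by_cases hb3 : a.1 ≠ t <;>
        simp [h1, h2, h3, h4, hb1, hb2, hb3, Finset.mem_union, Finset.mem_inter]

/-- the defining set of `fMax` -/
def famSet (S : Finset V) : Set ℕ :=
  {n | ∃ P : Finset (List V), P.card = n ∧ IsEdgeDisjointFamily E s t P ∧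
    ∀ p ∈ P, ∃ v ∈ S, (pathArcs p).head? = some (s, v)}

lemma fMax_eq_sSup (S : Finset V) : fMax E s t S = sSup (famSet E s t S) := rfl

lemma zero_mem_famSet (S : Finset V) : 0 ∈ famSet E s t S := by
  refine ⟨∅, rfl, ⟨fun p hp => absurd hp (Finset.notMem_empty p), by simp⟩,
    fun p hp => absurd hp (Finset.notMem_empty p)⟩

lemma famSet_le_capN {S : Finset V} {W : Finset V} (hsW : s ∈ W) (htW : t ∉ W)
    {n : ℕ} (hn : n ∈ famSet E s t S) : n ≤ capN E s t S W := by
  obtain ⟨P, rfl, hfam, hfirst⟩ := hn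
  exact family_le_capN E s t hsW htW hfam hfirst

lemma famSet_bddAbove (hst : s ≠ t) (S : Finset V) : BddAbove (famSet E s t S) := by
  refine ⟨capN E s t S (Finset.univ.erase t), ?_⟩
  intro n hn
  exact famSet_le_capN E s t (Finset.mem_erase.mpr ⟨hst, Finset.mem_univ s⟩)
    (fun hc => (Finset.mem_erase.mp hc).1 rfl) hn

lemma fMax_le_capN (hst : s ≠ t) {S : Finset V} {W : Finset V}
    (hsW : s ∈ W) (htW : t ∉ W) : fMax E s t S ≤ capN E s t S W := by
  rw [fMax_eq_sSup]
  exact csSup_le ⟨0, zero_mem_famSet E s t S⟩ (fun n hn => famSet_le_capN E s t hsW htW hn)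

lemma le_fMax (hst : s ≠ t) {S : Finset V} {n : ℕ} (hn : n ∈ famSet E s t S) :
    n ≤ fMax E s t S := by
  rw [fMax_eq_sSup]
  exact le_csSup (famSet_bddAbove E s t hst S) hn

lemma fMax_mono (hst : s ≠ t) {S T : Finset V} (h : S ⊆ T) :
    fMax E s t S ≤ fMax E s t T := by
  rw [fMax_eq_sSup, fMax_eq_sSup]
  apply csSup_le_csSup (famSet_bddAbove E s t hst T) ⟨0, zero_mem_famSet E s t S⟩
  rintro n ⟨P, hcard, hfam, hfirst⟩
  refine ⟨P, hcard, hfam, fun p hp => ?_⟩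
  obtain ⟨u, hu, hh⟩ := hfirst p hp
  exact ⟨u, h hu, hh⟩


lemma head_arc_ne_source {p : List V} (hp : IsPath E s t p) {u : V}
    (hh : (pathArcs p).head? = some (s, u)) : u ≠ s := by
  intro hus
  have hmem : (s, u) ∈ pathArcs p := List.mem_of_mem_head? (by rw [hh]; rfl)
  have h2 : u ∈ p.tail := mem_pathArcs_snd hmem
  rw [mem_tail_iff hp.1 hp.2.2.1] at h2
  exact h2.2 hus

end
end FP

/-- If `A ⊆ B` are sets of out-neighbors of `s`, `v` is an out-neighbor of `s` not in
`B`, and adding `v` to `A` does not increase `f`, then adding `v` to `B` does not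
increase `f` either. -/
theorem fMax_failed_arc_stays_failed {V : Type*} [Fintype V] [DecidableEq V]
    (E : Finset (V × V)) (s t : V) (hst : s ≠ t)
    (A B : Finset V) (v : V)
    (hA : ∀ u ∈ A, (s, u) ∈ E) (hB : ∀ u ∈ B, (s, u) ∈ E) (hv : (s, v) ∈ E)
    (hAB : A ⊆ B) (hvB : v ∉ B)
    (h : fMax E s t (insert v A) = fMax E s t A) :
    fMax E s t (insert v B) = fMax E s t B := by
  classical
  open FP in
  by_cases hvs : v = s
  · -- a first arc can never be `(s, s)`, so inserting `s` changes nothing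
    subst hvs
    rw [FP.fMax_eq_sSup, FP.fMax_eq_sSup]
    congr 1
    ext n
    constructor
    · rintro ⟨P, hcard, hfam, hfirst⟩
      refine ⟨P, hcard, hfam, fun p hp => ?_⟩
      obtain ⟨u, hu, hh⟩ := hfirst p hp
      rcases Finset.mem_insert.mp hu with rfl | huB
      · exact absurd rfl (FP.head_arc_ne_source E u t (hfam.1 p hp) hh)
      · exact ⟨u, huB, hh⟩
    · rintro ⟨P, hcard, hfam, hfirst⟩
      refine ⟨P, hcard, hfam, fun p hp => ?_⟩
      obtain ⟨u, hu, hh⟩ := hfirst p hp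
      exact ⟨u, Finset.mem_insert_of_mem hu, hh⟩
  · have hvA : v ∉ A := fun hc => hvB (hAB hc)
    have hAv : ∀ u ∈ insert v A, (s, u) ∈ E := by
      intro u hu
      rcases Finset.mem_insert.mp hu with rfl | h2
      · exact hv
      · exact hA u h2
    have hBv : ∀ u ∈ insert v B, (s, u) ∈ E := by
      intro u hu
      rcases Finset.mem_insert.mp hu with rfl | h2
      · exact hv
      · exact hB u h2
    have hBA : ∀ u ∈ B \ A, (s, u) ∈ E := fun u hu => hB u (Finset.mem_sdiff.mp hu).1
    -- tight cut for `insert v A`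
    obtain ⟨X, PX, hsX, htX, hcardX, hfamX, hfirstX⟩ :=
      FP.exists_tight_cut (N := FP.net E s t (insert v A)) (E := E)
        (FP.net_subset E s t _) (FP.goodNet_net E s t _) hst
    have hfirstX' : ∀ p ∈ PX, ∃ u ∈ insert v A, (pathArcs p).head? = some (s, u) := by
      intro p hp
      obtain ⟨u, h1, h2⟩ := hfirstX p hp
      rw [FP.net, Finset.mem_filter] at h2
      exact ⟨u, h2.2.2.2 rfl, h1⟩
    have hcapX : FP.capN E s t (insert v A) X = PX.card := hcardX.symm
    have hPXmem : PX.card ∈ FP.famSet E s t (insert v A) := ⟨PX, rfl, hfamX, hfirstX'⟩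
    have hle1 : FP.capN E s t (insert v A) X ≤ fMax E s t A := by
      rw [← h]
      rw [hcapX]
      exact FP.le_fMax E s t hst hPXmem
    have hle2 : fMax E s t A ≤ FP.capN E s t A X := FP.fMax_le_capN E s t hst hsX htX
    have hle3 : FP.capN E s t A X ≤ FP.capN E s t (insert v A) X :=
      FP.capN_mono_S E s t (Finset.subset_insert v A) X
    -- splits
    have hsplitAvX := FP.capN_split E s t hAv hst hsX
    have hsplitAX := FP.capN_split E s t hA hst hsX
    have hinsX := FP.srcCount_insert s hvA X
    -- v ∈ X
    have hvX : v ∈ X := by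
      by_contra hvX
      rw [if_pos ⟨hvs, hvX⟩] at hinsX
      omega
    -- capN A X = fMax A
    have hXA : FP.capN E s t A X = fMax E s t A := by omega
    -- tight cut for B
    obtain ⟨Y, PY, hsY, htY, hcardY, hfamY, hfirstY⟩ :=
      FP.exists_tight_cut (N := FP.net E s t B) (E := E)
        (FP.net_subset E s t _) (FP.goodNet_net E s t _) hst
    have hfirstY' : ∀ p ∈ PY, ∃ u ∈ B, (pathArcs p).head? = some (s, u) := by
      intro p hp
      obtain ⟨u, h1, h2⟩ := hfirstY p hp
      rw [FP.net, Finset.mem_filter] at h2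
      exact ⟨u, h2.2.2.2 rfl, h1⟩
    have hcapY : FP.capN E s t B Y = PY.card := hcardY.symm
    have hYB : FP.capN E s t B Y ≤ fMax E s t B := by
      rw [hcapY]
      exact FP.le_fMax E s t hst ⟨PY, rfl, hfamY, hfirstY'⟩
    -- the combined cut
    have hsZ : s ∈ X ∪ Y := Finset.mem_union_left Y hsX
    have htZ : t ∉ X ∪ Y := fun hc => (Finset.mem_union.mp hc).elim htX htY
    have hsI : s ∈ X ∩ Y := Finset.mem_inter.mpr ⟨hsX, hsY⟩
    have htI : t ∉ X ∩ Y := fun hc => htX (Finset.mem_inter.mp hc).1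
    -- weak duality for B ∪ v at Z
    have hwd : fMax E s t (insert v B) ≤ FP.capN E s t (insert v B) (X ∪ Y) :=
      FP.fMax_le_capN E s t hst hsZ htZ
    -- all the splits
    have hsplitBvZ := FP.capN_split E s t hBv hst hsZ
    have hsplitBZ := FP.capN_split E s t hB hst hsZ
    have hsplitBX := FP.capN_split E s t hB hst hsX
    have hsplitBY := FP.capN_split E s t hB hst hsY
    have hsplitBI := FP.capN_split E s t hB hst hsI
    have hsplitAI := FP.capN_split E s t hA hst hsI
    have hinsZ := FP.srcCount_insert s (show v ∉ B from hvB) (X ∪ Y)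
    rw [if_neg (fun hc => hc.2 (Finset.mem_union_left Y hvX))] at hinsZ
    -- modularity / submodularity
    have hmod := FP.srcCount_union_inter s B X Y
    have hsub := FP.dpart_submodular E s t X Y
    -- srcCount splitting along A ⊆ B
    have hsp1 := FP.srcCount_split s hAB X
    have hsp2 := FP.srcCount_split s hAB (X ∩ Y)
    have hanti := FP.srcCount_anti s (B \ A) (Finset.inter_subset_left (s₁ := X) (s₂ := Y))
    -- f A ≤ capN A (X ∩ Y)
    have hwdI : fMax E s t A ≤ FP.capN E s t A (X ∩ Y) := FP.fMax_le_capN E s t hst hsI htI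
    -- conclude
    have hfinal : fMax E s t (insert v B) ≤ fMax E s t B := by omega
    have hmono : fMax E s t B ≤ fMax E s t (insert v B) :=
      FP.fMax_mono E s t hst (Finset.subset_insert v B)
    omega
end

section
/- Let G = (V, E) be a finite digraph and s, t ∈ V with s ≠ t, and let v_1, …, v_d be an enumeration of the out-neighbors of s. For a set A of out-neighbors of s, let f(A) denote the maximum cardinality of a set of pairwise edge-disjoint directed paths from s to t each of whose first arc is (s, v) for some v ∈ A. Define S_0 = ∅ and, for j = 1, …, d, let S_j = S_{j−1} ∪ {v_j} if f(S_{j−1} ∪ {v_j}) > f(S_{j−1}), and S_j = S_{j−1} otherwise. Then f(S_d) = |S_d| and |S_d| equals the maximum cardinality of a set of pairwise edge-disjoint directed paths from s to t in G. -/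
set_option linter.unusedSectionVars false

section S1
variable {V : Type*} [DecidableEq V]

lemma pathArcs_cons_cons (a b : V) (r : List V) :
    pathArcs (a :: b :: r) = (a, b) :: pathArcs (b :: r) := rfl

lemma pathArcs_map_fst : ∀ (p : List V), (pathArcs p).map Prod.fst = p.dropLast
  | [] => rfl
  | [_] => rfl
  | a :: b :: r => by
      rw [pathArcs_cons_cons, List.map_cons, pathArcs_map_fst (b :: r)]; rfl

lemma mem_pathArcs_fst {p : List V} {a : V × V} (h : a ∈ pathArcs p) : a.1 ∈ p.dropLast := by
  rw [← pathArcs_map_fst]; exact List.mem_map_of_mem h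

lemma pathArcs_map_snd : ∀ (p : List V), (pathArcs p).map Prod.snd = p.tail
  | [] => rfl
  | [_] => rfl
  | a :: b :: r => by
      rw [pathArcs_cons_cons, List.map_cons, pathArcs_map_snd (b :: r)]; rfl

lemma mem_pathArcs_snd {p : List V} {a : V × V} (h : a ∈ pathArcs p) : a.2 ∈ p.tail := by
  rw [← pathArcs_map_snd]; exact List.mem_map_of_mem h

lemma pathArcs_nodup {p : List V} (h : p.Nodup) : (pathArcs p).Nodup := by
  have h1 : p.dropLast.Nodup := h.sublist (List.dropLast_sublist p)
  rw [← pathArcs_map_fst] at h1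
  exact h1.of_map _

lemma pathArcs_chain {r : V → V → Prop} : ∀ {p : List V}, p.Chain' r →
    ∀ a ∈ pathArcs p, r a.1 a.2
  | [], _, a, ha => by simp [pathArcs] at ha
  | [_], _, a, ha => by simp [pathArcs] at ha
  | x :: y :: q, h, a, ha => by
      rw [pathArcs_cons_cons] at ha
      rcases List.mem_cons.1 ha with h1 | h1
      · subst h1; exact (List.isChain_cons_cons.1 h).1
      · exact pathArcs_chain (List.isChain_cons_cons.1 h).2 a h1

def outdeg (F : Finset (V × V)) (x : V) : ℕ := (F.filter (fun a => a.1 = x)).card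
def indeg (F : Finset (V × V)) (x : V) : ℕ := (F.filter (fun a => a.2 = x)).card

lemma outdeg_pathArcs (w : V) : ∀ (p : List V), p.Nodup →
    outdeg (pathArcs p).toFinset w = if w ∈ p.dropLast then 1 else 0
  | [] , _ => by simp [outdeg, pathArcs]
  | [a], _ => by simp [outdeg, pathArcs]
  | a :: b :: r, h => by
      have hnm : (a, b) ∉ (pathArcs (b :: r)).toFinset := by
        intro hmem
        have := mem_pathArcs_fst (List.mem_toFinset.1 hmem)
        exact (List.nodup_cons.1 h).1 ((b :: r).dropLast_sublist.mem this)
      have ih := outdeg_pathArcs w (b :: r) (List.nodup_cons.1 h).2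
      rw [pathArcs_cons_cons, List.toFinset_cons]
      unfold outdeg at ih ⊢
      rw [Finset.filter_insert]
      have hdl : (a :: b :: r).dropLast = a :: (b :: r).dropLast := rfl
      by_cases haw : a = w
      · have h0 : w ∉ (b :: r).dropLast := by
          intro hmem
          rw [haw] at h
          exact (List.nodup_cons.1 h).1 ((b :: r).dropLast_sublist.mem hmem)
        rw [if_pos (show (a, b).1 = w from haw), hdl, if_pos (by simp [haw])]
        rw [Finset.card_insert_of_notMem (by
          intro hmem; exact hnm (Finset.mem_of_mem_filter _ hmem))]
        rw [ih, if_neg h0]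
      · simp only [if_neg haw, ih, hdl, List.mem_cons]
        by_cases hw : w ∈ (b :: r).dropLast
        · rw [if_pos hw, if_pos (Or.inr hw)]
        · rw [if_neg hw, if_neg (by rintro (h1 | h1); exact haw h1.symm; exact hw h1)]

end S1

section S2
variable {V : Type*} [DecidableEq V]

lemma indeg_pathArcs (w : V) : ∀ (p : List V), p.Nodup →
    indeg (pathArcs p).toFinset w = if w ∈ p.tail then 1 else 0
  | [] , _ => by simp [indeg, pathArcs]
  | [a], _ => by simp [indeg, pathArcs]
  | a :: b :: r, h => by
      have hnm : (a, b) ∉ (pathArcs (b :: r)).toFinset := by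
        intro hmem
        have := mem_pathArcs_fst (List.mem_toFinset.1 hmem)
        exact (List.nodup_cons.1 h).1 ((b :: r).dropLast_sublist.mem this)
      have h2 := (List.nodup_cons.1 h).2
      have ih := indeg_pathArcs w (b :: r) h2
      rw [pathArcs_cons_cons, List.toFinset_cons]
      unfold indeg at ih ⊢
      rw [Finset.filter_insert]
      have htl : (a :: b :: r).tail = b :: r := rfl
      have htl2 : (b :: r).tail = r := rfl
      by_cases hbw : b = w
      · have h0 : w ∉ r := by rw [← hbw]; exact (List.nodup_cons.1 h2).1
        rw [if_pos (show (a, b).2 = w from hbw), if_pos (by simp [hbw])]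
        rw [Finset.card_insert_of_notMem (by
          intro hmem; exact hnm (Finset.mem_of_mem_filter _ hmem))]
        rw [ih, htl2, if_neg h0]
      · rw [if_neg (show ¬ (a, b).2 = w from hbw), ih, htl2]
        by_cases hw : w ∈ r
        · rw [if_pos hw, htl, if_pos (show w ∈ b :: r from List.mem_cons.2 (Or.inr hw))]
        · rw [if_neg hw, htl, if_neg (by
            intro h1
            rcases List.mem_cons.1 h1 with h1 | h1
            · exact hbw h1.symm
            · exact hw h1)]

end S2

section S3
variable {V : Type*} [DecidableEq V] {s t : V}

lemma path_shape {p : List V} (hh : p.head? = some s) (hl : p.getLast? = some t)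
    (hst : s ≠ t) : ∃ b r, p = s :: b :: r := by
  match p, hh with
  | [x], hh =>
    simp only [List.head?_cons, Option.some.injEq] at hh
    simp only [List.getLast?_singleton, Option.some.injEq] at hl
    exact absurd (hh.symm.trans hl) hst
  | x :: y :: r, hh =>
    simp only [List.head?_cons, Option.some.injEq] at hh
    exact ⟨y, r, by rw [hh]⟩

lemma getLast_not_mem_dropLast {p : List V} (hn : p.Nodup) (hl : p.getLast? = some t) :
    t ∉ p.dropLast := by
  have hne : p ≠ [] := by rintro rfl; simp at hl
  have := List.dropLast_append_getLast hne
  have hlt : p.getLast hne = t := by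
    rw [List.getLast?_eq_getLast hne] at hl; exact Option.some_injective _ hl
  rw [hlt] at this
  rw [← this] at hn
  intro hmem
  exact (List.disjoint_of_nodup_append hn) hmem (List.mem_singleton_self t)

lemma head_not_mem_tail {p : List V} (hn : p.Nodup) (hh : p.head? = some s) :
    s ∉ p.tail := by
  match p, hh with
  | x :: r, hh =>
    simp only [List.head?_cons, Option.some.injEq] at hh
    subst hh
    exact (List.nodup_cons.1 hn).1

lemma mem_tail_iff {p : List V} {w : V} (hh : p.head? = some s) (hw : w ≠ s) :
    w ∈ p.tail ↔ w ∈ p := by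
  match p, hh with
  | x :: r, hh =>
    simp only [List.head?_cons, Option.some.injEq] at hh
    subst hh
    simp [List.mem_cons, hw]

lemma mem_dropLast_iff {p : List V} {w : V} (hl : p.getLast? = some t) (hw : w ≠ t) :
    w ∈ p.dropLast ↔ w ∈ p := by
  have hne : p ≠ [] := by rintro rfl; simp at hl
  have hsplit := List.dropLast_append_getLast hne
  have hlt : p.getLast hne = t := by
    rw [List.getLast?_eq_getLast hne] at hl; exact Option.some_injective _ hl
  conv_rhs => rw [← hsplit]
  rw [hlt]
  simp [List.mem_append, hw]

lemma head_mem_dropLast {p : List V} {b : V} {r : List V} (hp : p = s :: b :: r) :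
    s ∈ p.dropLast := by
  subst hp
  rw [show (s :: b :: r).dropLast = s :: (b :: r).dropLast from rfl]
  exact List.mem_cons_self

lemma pathArcs_head {b : V} {r : List V} :
    (pathArcs (s :: b :: r)).head? = some (s, b) := rfl

lemma arc_fst_eq_head {p : List V} {a : V × V} (hn : p.Nodup) (hh : p.head? = some s)
    (ha : a ∈ pathArcs p) (has : a.1 = s) : (pathArcs p).head? = some a := by
  match p, hh with
  | x :: r, hh =>
    simp only [List.head?_cons, Option.some.injEq] at hh
    subst hh
    match r, ha with
    | y :: q, ha =>
      rw [pathArcs_cons_cons] at ha ⊢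
      rcases List.mem_cons.1 ha with h1 | h1
      · rw [h1]; rfl
      · exfalso
        have := mem_pathArcs_fst h1
        rw [has] at this
        exact (List.nodup_cons.1 hn).1 ((y :: q).dropLast_sublist.mem this)
end S3

section S4
variable {V : Type*} [DecidableEq V] {s t : V} {E : Finset (V × V)} {A : Finset V}

def IsFlow (E : Finset (V × V)) (s t : V) (A : Finset V) (F : Finset (V × V)) : Prop :=
  F ⊆ E ∧ (∀ a ∈ F, a.1 = s → a.2 ∈ A) ∧ (∀ a ∈ F, a.2 ≠ s) ∧ (∀ a ∈ F, a.1 ≠ t) ∧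
    ∀ w, w ≠ s → w ≠ t → indeg F w = outdeg F w

lemma flow_of_family (hst : s ≠ t) (P : Finset (List V))
    (hP : IsEdgeDisjointFamily E s t P)
    (hA : ∀ p ∈ P, ∃ v ∈ A, (pathArcs p).head? = some (s, v)) :
    ∃ F : Finset (V × V), IsFlow E s t A F ∧ outdeg F s = P.card := by
  classical
  set F := P.biUnion (fun p => (pathArcs p).toFinset) with hF
  have hmemF : ∀ a ∈ F, ∃ p ∈ P, a ∈ pathArcs p := by
    intro a ha
    rcases Finset.mem_biUnion.1 ha with ⟨p, hp, hap⟩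
    exact ⟨p, hp, List.mem_toFinset.1 hap⟩
  have hdisj : ∀ p ∈ P, ∀ q ∈ P, p ≠ q →
      Disjoint ((pathArcs p).toFinset) ((pathArcs q).toFinset) := by
    intro p hp q hq hpq
    rw [Finset.disjoint_left]
    intro a hap haq
    exact (hP.2 hp hq hpq) a (List.mem_toFinset.1 hap) (List.mem_toFinset.1 haq)
  have hcard : ∀ (pred : V × V → Prop) [DecidablePred pred],
      (F.filter pred).card = ∑ p ∈ P, (((pathArcs p).toFinset).filter pred).card := by
    intro pred _
    rw [hF, Finset.filter_biUnion]
    exact Finset.card_biUnion (fun p hp q hq hpq =>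
      Finset.disjoint_filter_filter (hdisj p hp q hq hpq))
  have hshape : ∀ p ∈ P, ∃ b r, p = s :: b :: r := by
    intro p hp
    exact path_shape (hP.1 p hp).2.2.1 (hP.1 p hp).2.2.2 hst
  refine ⟨F, ⟨?_, ?_, ?_, ?_, ?_⟩, ?_⟩
  · intro a ha
    rcases hmemF a ha with ⟨p, hp, hap⟩
    exact pathArcs_chain (hP.1 p hp).2.1 a hap
  · intro a ha has
    rcases hmemF a ha with ⟨p, hp, hap⟩
    have hhead := arc_fst_eq_head (hP.1 p hp).1 (hP.1 p hp).2.2.1 hap has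
    rcases hA p hp with ⟨v, hv, hv2⟩
    rw [hhead] at hv2
    have : a = (s, v) := by injection hv2
    rw [this]; exact hv
  · intro a ha
    rcases hmemF a ha with ⟨p, hp, hap⟩
    intro h2
    exact head_not_mem_tail (hP.1 p hp).1 (hP.1 p hp).2.2.1 (h2 ▸ mem_pathArcs_snd hap)
  · intro a ha
    rcases hmemF a ha with ⟨p, hp, hap⟩
    intro h1
    exact getLast_not_mem_dropLast (hP.1 p hp).1 (hP.1 p hp).2.2.2
      (h1 ▸ mem_pathArcs_fst hap)
  · intro w hws hwt
    rw [show indeg F w = (F.filter (fun a => a.2 = w)).card from rfl,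
        show outdeg F w = (F.filter (fun a => a.1 = w)).card from rfl,
        hcard, hcard]
    refine Finset.sum_congr rfl fun p hp => ?_
    have h1 := indeg_pathArcs w p (hP.1 p hp).1
    have h2 := outdeg_pathArcs w p (hP.1 p hp).1
    rw [show (Finset.filter (fun a => a.2 = w) (pathArcs p).toFinset).card
          = indeg (pathArcs p).toFinset w from rfl,
        show (Finset.filter (fun a => a.1 = w) (pathArcs p).toFinset).card
          = outdeg (pathArcs p).toFinset w from rfl, h1, h2]
    simp only [mem_tail_iff (hP.1 p hp).2.2.1 hws, mem_dropLast_iff (hP.1 p hp).2.2.2 hwt]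
  · rw [show outdeg F s = (F.filter (fun a => a.1 = s)).card from rfl, hcard]
    rw [Finset.sum_congr rfl (fun p hp => by
      rcases hshape p hp with ⟨b, r, hpr⟩
      rw [show (Finset.filter (fun a => a.1 = s) (pathArcs p).toFinset).card
            = outdeg (pathArcs p).toFinset s from rfl,
          outdeg_pathArcs s p (hP.1 p hp).1, if_pos (head_mem_dropLast hpr)])]
    simp

end S4

section S5
variable {V : Type*} [DecidableEq V] {s t : V} {E : Finset (V × V)} {A B : Finset V}

def fSet (E : Finset (V × V)) (s t : V) (A : Finset V) : Set ℕ :=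
  {n | ∃ P : Finset (List V), P.card = n ∧ IsEdgeDisjointFamily E s t P ∧
    ∀ p ∈ P, ∃ v ∈ A, (pathArcs p).head? = some (s, v)}

lemma fMax_eq_sSup : fMax E s t A = sSup (fSet E s t A) := rfl

lemma zero_mem_fSet : 0 ∈ fSet E s t A :=
  ⟨∅, by simp, ⟨by simp, by simp⟩, by simp⟩

lemma firstArc_mem {P : Finset (List V)} (hP : IsEdgeDisjointFamily E s t P)
    (hA : ∀ p ∈ P, ∃ v ∈ A, (pathArcs p).head? = some (s, v)) {p : List V} (hp : p ∈ P) :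
    ((pathArcs p).head?.getD (s, s)) ∈ pathArcs p := by
  rcases hA p hp with ⟨v, _, hv⟩
  rw [hv]
  exact List.mem_of_mem_head? (by rw [hv]; rfl)

lemma fSet_injOn {P : Finset (List V)} (hP : IsEdgeDisjointFamily E s t P)
    (hA : ∀ p ∈ P, ∃ v ∈ A, (pathArcs p).head? = some (s, v)) :
    Set.InjOn (fun p => (pathArcs p).head?.getD (s, s)) ↑P := by
  intro p hp q hq hpq
  by_contra hne
  have h1 := firstArc_mem hP hA hp
  have h2 := firstArc_mem hP hA hq
  dsimp only at hpq
  rw [hpq] at h1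
  exact (hP.2 hp hq hne) _ h1 h2

lemma fSet_le_card {n : ℕ} (h : n ∈ fSet E s t A) : n ≤ E.card := by
  rcases h with ⟨P, hcard, hP, hA⟩
  rw [← hcard]
  refine Finset.card_le_card_of_injOn (fun p => (pathArcs p).head?.getD (s, s)) ?_
    (fSet_injOn hP hA)
  intro p hp
  have := firstArc_mem hP hA hp
  exact pathArcs_chain (hP.1 p hp).2.1 _ this

lemma fSet_bddAbove : BddAbove (fSet E s t A) := ⟨E.card, fun _ h => fSet_le_card h⟩

lemma fMax_mem : fMax E s t A ∈ fSet E s t A :=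
  Nat.sSup_mem ⟨0, zero_mem_fSet⟩ fSet_bddAbove

lemma le_fMax {n : ℕ} (h : n ∈ fSet E s t A) : n ≤ fMax E s t A :=
  le_csSup fSet_bddAbove h

lemma fMax_le {m : ℕ} (h : ∀ n ∈ fSet E s t A, n ≤ m) : fMax E s t A ≤ m :=
  csSup_le ⟨0, zero_mem_fSet⟩ h

lemma fMax_mono (hAB : A ⊆ B) : fMax E s t A ≤ fMax E s t B := by
  refine fMax_le fun n hn => le_fMax ?_
  rcases hn with ⟨P, h1, h2, h3⟩
  exact ⟨P, h1, h2, fun p hp => by rcases h3 p hp with ⟨v, hv, hv2⟩; exact ⟨v, hAB hv, hv2⟩⟩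

lemma fMax_empty : fMax E s t (∅ : Finset V) = 0 := by
  refine le_antisymm (fMax_le fun n hn => ?_) (Nat.zero_le _)
  rcases hn with ⟨P, h1, _, h3⟩
  have : P = ∅ := by
    rw [Finset.eq_empty_iff_forall_notMem]
    intro p hp
    rcases h3 p hp with ⟨v, hv, _⟩
    simp at hv
  simp [this] at h1
  omega

lemma fMax_insert_le (v : V) : fMax E s t (insert v A) ≤ fMax E s t A + 1 := by
  refine fMax_le fun n hn => ?_
  rcases hn with ⟨P, h1, h2, h3⟩
  classical
  set Pg := P.filter (fun p => ¬ ((pathArcs p).head? = some (s, v))) with hPg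
  set Pb := P.filter (fun p => (pathArcs p).head? = some (s, v)) with hPb
  have hPbcard : Pb.card ≤ 1 := by
    refine Finset.card_le_one.2 fun p hp q hq => ?_
    rcases Finset.mem_filter.1 hp with ⟨hpP, hph⟩
    rcases Finset.mem_filter.1 hq with ⟨hqP, hqh⟩
    by_contra hne
    have h1m : (s, v) ∈ pathArcs p := List.mem_of_mem_head? (by rw [hph]; rfl)
    have h2m : (s, v) ∈ pathArcs q := List.mem_of_mem_head? (by rw [hqh]; rfl)
    exact (h2.2 hpP hqP hne) _ h1m h2m
  have hsplit : P.card ≤ Pg.card + 1 := by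
    have := Finset.card_filter_add_card_filter_not
      (s := P) (p := fun p => (pathArcs p).head? = some (s, v))
    rw [← hPb] at this
    have e2 : (Finset.filter (fun a => ¬(pathArcs a).head? = some (s, v)) P).card = Pg.card := rfl
    rw [e2] at this
    omega
  have hPgmem : Pg.card ∈ fSet E s t A := by
    refine ⟨Pg, rfl, ⟨fun p hp => h2.1 p (Finset.mem_of_mem_filter _ hp),
      h2.2.mono (by intro x hx; exact Finset.mem_of_mem_filter _ hx)⟩, ?_⟩
    intro p hp
    rcases Finset.mem_filter.1 hp with ⟨hpP, hph⟩
    rcases h3 p hpP with ⟨w, hw, hw2⟩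
    rcases Finset.mem_insert.1 hw with rfl | hwA
    · exact absurd hw2 hph
    · exact ⟨w, hwA, hw2⟩
  have := le_fMax hPgmem
  omega

end S5

section S6
variable {V : Type*} [DecidableEq V] {s t : V}

lemma exists_nodup_chain_aux (r : V → V → Prop) :
    ∀ (n : ℕ) (p : List V), p.length ≤ n → p ≠ [] → p.Chain' r →
    ∃ q : List V, q.Chain' r ∧ q.Nodup ∧ q ≠ [] ∧ q.head? = p.head? ∧
      q.getLast? = p.getLast? ∧ ∀ x ∈ q, x ∈ p := by
  intro n
  induction n with
  | zero => intro p hlen hne _; cases p with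
      | nil => exact absurd rfl hne
      | cons x xs => simp at hlen
  | succ n ih =>
    intro p hlen hne hch
    match p with
    | x :: xs =>
      by_cases hx : x ∈ xs
      · rcases List.append_of_mem hx with ⟨u, w, rfl⟩
        have hsuf : (x :: w) <:+ (x :: (u ++ x :: w)) := by
          refine ⟨x :: u, ?_⟩
          simp
        have hch' : (x :: w).Chain' r := hch.suffix hsuf
        have hlen' : (x :: w).length ≤ n := by
          have := hsuf.length_le
          simp only [List.length_cons, List.length_append] at hlen ⊢
          omega
        rcases ih (x :: w) hlen' (List.cons_ne_nil _ _) hch' with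
          ⟨q, hq1, hq2, hq3, hq4, hq5, hq6⟩
        refine ⟨q, hq1, hq2, hq3, ?_, ?_, fun y hy => hsuf.subset (hq6 y hy)⟩
        · rw [hq4]; rfl
        · rw [hq5]
          show (x :: w).getLast? = (x :: (u ++ x :: w)).getLast?
          rw [show x :: (u ++ x :: w) = (x :: u) ++ (x :: w) by simp,
            List.getLast?_append, List.getLast?_eq_getLast (List.cons_ne_nil x w)]
          simp
      · match xs, hne with
        | [], _ => exact ⟨[x], List.isChain_singleton x, by simp, by simp, rfl, rfl, by simp⟩
        | y :: ys, _ =>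
          have hch2 : (y :: ys).Chain' r := (List.isChain_cons.1 hch).2
          have hlen2 : (y :: ys).length ≤ n := by
            simp only [List.length_cons] at hlen ⊢; omega
          rcases ih (y :: ys) hlen2 (List.cons_ne_nil _ _) hch2 with
            ⟨q, hq1, hq2, hq3, hq4, hq5, hq6⟩
          refine ⟨x :: q, ?_, ?_, List.cons_ne_nil _ _, rfl, ?_, ?_⟩
          · refine List.isChain_cons.2 ⟨?_, hq1⟩
            intro y' hy'
            rw [hq4] at hy'
            simp only [List.head?_cons, Option.mem_def, Option.some.injEq] at hy'
            subst hy'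
            exact (List.isChain_cons.1 hch).1 y rfl
          · rw [List.nodup_cons]
            exact ⟨fun hmem => hx (hq6 x hmem), hq2⟩
          · match q, hq3 with
            | z :: zs, _ =>
              rw [List.getLast?_cons_cons, hq5]
              rfl
          · intro y' hy'
            rcases List.mem_cons.1 hy' with rfl | h
            · exact List.mem_cons_self
            · exact List.mem_cons_of_mem _ (hq6 _ h)

lemma reflTransGen_nodup_chain {r : V → V → Prop} (h : Relation.ReflTransGen r s t) :
    ∃ q : List V, q.Chain' r ∧ q.Nodup ∧ q.head? = some s ∧ q.getLast? = some t := by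
  rcases List.exists_isChain_cons_of_relationReflTransGen h with ⟨l, hl1, hl2⟩
  have hch : (s :: l).Chain' r := hl1
  rcases exists_nodup_chain_aux r (s :: l).length (s :: l) le_rfl (List.cons_ne_nil _ _) hch
    with ⟨q, hq1, hq2, hq3, hq4, hq5, _⟩
  refine ⟨q, hq1, hq2, by rw [hq4]; rfl, ?_⟩
  rw [hq5, List.getLast?_eq_getLast (List.cons_ne_nil _ _), hl2]

end S6

section S7
variable {V : Type*} [DecidableEq V] {s t : V} {E : Finset (V × V)} {A U : Finset V}

lemma exists_crossing_arc (U : Finset V) :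
    ∀ (p : List V) (s : V), p.head? = some s → p.getLast? = some t → s ∈ U → t ∉ U →
    ∃ a ∈ pathArcs p, a.1 ∈ U ∧ a.2 ∉ U
  | [], s => by intro h; simp at h
  | [x], s => by
      intro hh hl hsU htU
      simp only [List.head?_cons, Option.some.injEq] at hh
      simp only [List.getLast?_singleton, Option.some.injEq] at hl
      rw [← hh, hl] at hsU
      exact absurd hsU htU
  | x :: y :: rest, s => by
      intro hh hl hsU htU
      simp only [List.head?_cons, Option.some.injEq] at hh
      subst hh
      by_cases hy : y ∈ U
      · rcases exists_crossing_arc U (y :: rest) y rfl (by rw [← hl]; rfl) hy htU with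
          ⟨a, ha1, ha2⟩
        exact ⟨a, by rw [pathArcs_cons_cons]; exact List.mem_cons_of_mem _ ha1, ha2⟩
      · exact ⟨(x, y), by rw [pathArcs_cons_cons]; exact List.mem_cons_self, hsU, hy⟩

def cutCard (E : Finset (V × V)) (s : V) (A U : Finset V) : ℕ :=
  (E.filter (fun a => a.1 ∈ U ∧ a.2 ∉ U ∧ (a.1 = s → a.2 ∈ A))).card

lemma weak_duality (hsU : s ∈ U) (htU : t ∉ U) : fMax E s t A ≤ cutCard E s A U := by
  classical
  refine fMax_le fun n hn => ?_
  rcases hn with ⟨P, hcard, hP, hA⟩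
  rw [← hcard]
  set f : List V → V × V := fun p =>
    if h : ∃ a ∈ pathArcs p, a.1 ∈ U ∧ a.2 ∉ U then h.choose else (s, s) with hf
  have hfp : ∀ p ∈ P, f p ∈ pathArcs p ∧ (f p).1 ∈ U ∧ (f p).2 ∉ U := by
    intro p hp
    have hex : ∃ a ∈ pathArcs p, a.1 ∈ U ∧ a.2 ∉ U :=
      exists_crossing_arc U p s (hP.1 p hp).2.2.1 (hP.1 p hp).2.2.2 hsU htU
    rw [hf]
    simp only [dif_pos hex]
    exact ⟨hex.choose_spec.1, hex.choose_spec.2⟩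
  refine Finset.card_le_card_of_injOn f ?_ ?_
  · intro p hp
    rcases hfp p hp with ⟨h1, h2, h3⟩
    refine Finset.mem_filter.2 ⟨pathArcs_chain (hP.1 p hp).2.1 _ h1, h2, h3, ?_⟩
    intro hfs
    have hhead := arc_fst_eq_head (hP.1 p hp).1 (hP.1 p hp).2.2.1 h1 hfs
    rcases hA p hp with ⟨v, hv, hv2⟩
    rw [hhead] at hv2
    have : f p = (s, v) := by injection hv2
    rw [this]
    exact hv
  · intro p hp q hq hpq
    by_contra hne
    have h1 := (hfp p hp).1
    have h2 := (hfp q hq).1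
    rw [hpq] at h1
    exact (hP.2 hp hq hne) _ h1 h2

end S7

section S8
variable {V : Type*} [Fintype V] [DecidableEq V] {s t : V} {E : Finset (V × V)} {A U : Finset V}

lemma card_filter_fst_mem (F : Finset (V × V)) (U : Finset V) :
    (F.filter (fun a => a.1 ∈ U)).card = ∑ w ∈ U, outdeg F w := by
  classical
  rw [Finset.card_eq_sum_card_fiberwise
    (f := Prod.fst) (s := F.filter (fun a => a.1 ∈ U)) (t := U) (fun a ha => (Finset.mem_filter.1 ha).2)]
  refine Finset.sum_congr rfl fun w hw => ?_
  unfold outdeg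
  rw [Finset.filter_filter]
  congr 1
  apply Finset.filter_congr
  intro a _
  constructor
  · rintro ⟨_, h2⟩; exact h2
  · intro h; exact ⟨h ▸ hw, h⟩

lemma card_filter_snd_mem (F : Finset (V × V)) (U : Finset V) :
    (F.filter (fun a => a.2 ∈ U)).card = ∑ w ∈ U, indeg F w := by
  classical
  rw [Finset.card_eq_sum_card_fiberwise
    (f := Prod.snd) (s := F.filter (fun a => a.2 ∈ U)) (t := U) (fun a ha => (Finset.mem_filter.1 ha).2)]
  refine Finset.sum_congr rfl fun w hw => ?_
  unfold indeg
  rw [Finset.filter_filter]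
  congr 1
  apply Finset.filter_congr
  intro a _
  constructor
  · rintro ⟨_, h2⟩; exact h2
  · intro h; exact ⟨h ▸ hw, h⟩

lemma flow_cross_count {F : Finset (V × V)} (hF : IsFlow E s t A F)
    (hsU : s ∈ U) (htU : t ∉ U) :
    (F.filter (fun a => a.1 ∈ U ∧ a.2 ∉ U)).card
      = outdeg F s + (F.filter (fun a => a.1 ∉ U ∧ a.2 ∈ U)).card := by
  classical
  have hin0 : indeg F s = 0 := by
    unfold indeg
    rw [Finset.card_eq_zero, Finset.filter_eq_empty_iff]
    exact fun a ha => hF.2.2.1 a ha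
  have hsum : ∑ w ∈ U, outdeg F w = outdeg F s + ∑ w ∈ U.erase s, outdeg F w :=
    (Finset.add_sum_erase U (outdeg F) hsU).symm
  have hsum2 : ∑ w ∈ U, indeg F w = indeg F s + ∑ w ∈ U.erase s, indeg F w :=
    (Finset.add_sum_erase U (indeg F) hsU).symm
  have hcons : ∑ w ∈ U.erase s, indeg F w = ∑ w ∈ U.erase s, outdeg F w := by
    refine Finset.sum_congr rfl fun w hw => ?_
    have hws : w ≠ s := (Finset.mem_erase.1 hw).1
    have hwt : w ≠ t := fun h => htU (h ▸ (Finset.mem_erase.1 hw).2)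
    exact hF.2.2.2.2 w hws hwt
  have key : (F.filter (fun a => a.1 ∈ U)).card
      = outdeg F s + (F.filter (fun a => a.2 ∈ U)).card := by
    rw [card_filter_fst_mem, card_filter_snd_mem, hsum, hsum2, hcons, hin0]
    omega
  have split1 : (F.filter (fun a => a.1 ∈ U ∧ a.2 ∈ U)).card
      + (F.filter (fun a => a.1 ∈ U ∧ a.2 ∉ U)).card = (F.filter (fun a => a.1 ∈ U)).card := by
    rw [← Finset.filter_filter (fun a : V × V => a.1 ∈ U) (fun a => a.2 ∈ U),
        ← Finset.filter_filter (fun a : V × V => a.1 ∈ U) (fun a => a.2 ∉ U)]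
    exact Finset.card_filter_add_card_filter_not (s := F.filter (fun a : V × V => a.1 ∈ U)) (p := fun a => a.2 ∈ U)
  have split2 : (F.filter (fun a => a.2 ∈ U ∧ a.1 ∈ U)).card
      + (F.filter (fun a => a.2 ∈ U ∧ a.1 ∉ U)).card = (F.filter (fun a => a.2 ∈ U)).card := by
    rw [← Finset.filter_filter (fun a : V × V => a.2 ∈ U) (fun a => a.1 ∈ U),
        ← Finset.filter_filter (fun a : V × V => a.2 ∈ U) (fun a => a.1 ∉ U)]
    exact Finset.card_filter_add_card_filter_not (s := F.filter (fun a : V × V => a.2 ∈ U)) (p := fun a => a.1 ∈ U)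
  have e1 : (F.filter (fun a => a.1 ∈ U ∧ a.2 ∈ U)).card
      = (F.filter (fun a => a.2 ∈ U ∧ a.1 ∈ U)).card := by
    congr 1; apply Finset.filter_congr; intro a _; tauto
  have e2 : (F.filter (fun a => a.1 ∉ U ∧ a.2 ∈ U)).card
      = (F.filter (fun a => a.2 ∈ U ∧ a.1 ∉ U)).card := by
    congr 1; apply Finset.filter_congr; intro a _; tauto
  omega

end S8

section S9
variable {V : Type*} [Fintype V] [DecidableEq V] {s t : V} {E : Finset (V × V)} {A : Finset V}

lemma filter_sdiff_card {X F : Finset (V × V)} (h : X ⊆ F) (pred : V × V → Prop)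
    [DecidablePred pred] :
    ((F \ X).filter pred).card + (X.filter pred).card = (F.filter pred).card := by
  have he : (F \ X).filter pred = (F.filter pred) \ (X.filter pred) := by
    ext a
    simp only [Finset.mem_filter, Finset.mem_sdiff]
    tauto
  rw [he, Finset.card_sdiff_add_card_eq_card (Finset.filter_subset_filter _ h)]

lemma family_of_flow (hst : s ≠ t) :
    ∀ (n : ℕ) (F : Finset (V × V)), F.card ≤ n → IsFlow E s t A F →
    ∃ P : Finset (List V), P.card = outdeg F s ∧ IsEdgeDisjointFamily E s t P ∧
      (∀ p ∈ P, ∃ v ∈ A, (pathArcs p).head? = some (s, v)) ∧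
      (∀ p ∈ P, ∀ a ∈ pathArcs p, a ∈ F) := by
  intro n
  induction n with
  | zero =>
    intro F hcard hF
    have : F = ∅ := Finset.card_eq_zero.1 (Nat.le_zero.1 hcard)
    subst this
    exact ⟨∅, by simp [outdeg], ⟨by simp, by simp⟩, by simp, by simp⟩
  | succ n ih =>
    intro F hcard hF
    by_cases hval : outdeg F s = 0
    · exact ⟨∅, by simp [hval], ⟨by simp, by simp⟩, by simp, by simp⟩
    · classical
      set r : V → V → Prop := fun x y => (x, y) ∈ F with hr
      set U : Finset V := Finset.univ.filter (fun x => Relation.ReflTransGen r s x) with hU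
      have hsU : s ∈ U := by
        rw [hU]; exact Finset.mem_filter.2 ⟨Finset.mem_univ _, Relation.ReflTransGen.refl⟩
      have htU : t ∈ U := by
        by_contra htU
        have hcross : (F.filter (fun a => a.1 ∈ U ∧ a.2 ∉ U)) = ∅ := by
          rw [Finset.filter_eq_empty_iff]
          rintro a ha ⟨h1, h2⟩
          refine h2 (Finset.mem_filter.2 ⟨Finset.mem_univ _, ?_⟩)
          exact Relation.ReflTransGen.tail
            (Finset.mem_filter.1 (hU ▸ h1)).2 (by rw [hr]; exact ha)
        have := flow_cross_count hF hsU htU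
        rw [hcross] at this
        simp at this
        omega
      have hreach : Relation.ReflTransGen r s t := (Finset.mem_filter.1 (hU ▸ htU)).2
      rcases reflTransGen_nodup_chain hreach with ⟨q, hq1, hq2, hq3, hq4⟩
      have hqpath : IsPath E s t q :=
        ⟨hq2, hq1.imp (fun a b hab => hF.1 hab), hq3, hq4⟩
      have harcsF : ∀ a ∈ pathArcs q, a ∈ F := fun a ha => pathArcs_chain hq1 a ha
      set X : Finset (V × V) := (pathArcs q).toFinset with hX
      have hXF : X ⊆ F := fun a ha => harcsF a (List.mem_toFinset.1 ha)
      rcases path_shape hq3 hq4 hst with ⟨b, rest, hqeq⟩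
      have hsb : (s, b) ∈ pathArcs q := by rw [hqeq]; exact List.mem_cons_self
      have hsbX : (s, b) ∈ X := List.mem_toFinset.2 hsb
      set F' : Finset (V × V) := F \ X with hF'
      have hssub : F' ⊂ F := by
        refine Finset.sdiff_ssubset ?_ ?_
        · exact hXF
        · exact ⟨(s, b), hsbX⟩
      have hcard' : F'.card ≤ n := by
        have := Finset.card_lt_card hssub
        omega
      have hflow' : IsFlow E s t A F' := by
        refine ⟨fun a ha => hF.1 (Finset.mem_sdiff.1 ha).1,
          fun a ha => hF.2.1 a (Finset.mem_sdiff.1 ha).1,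
          fun a ha => hF.2.2.1 a (Finset.mem_sdiff.1 ha).1,
          fun a ha => hF.2.2.2.1 a (Finset.mem_sdiff.1 ha).1, ?_⟩
        intro w hws hwt
        have h1 := filter_sdiff_card hXF (fun a : V × V => a.2 = w)
        have h2 := filter_sdiff_card hXF (fun a : V × V => a.1 = w)
        have hid : indeg X w = if w ∈ q.tail then 1 else 0 := indeg_pathArcs w q hq2
        have hod : outdeg X w = if w ∈ q.dropLast then 1 else 0 := outdeg_pathArcs w q hq2
        have hiff1 : w ∈ q.tail ↔ w ∈ q := mem_tail_iff hq3 hws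
        have hiff2 : w ∈ q.dropLast ↔ w ∈ q := mem_dropLast_iff hq4 hwt
        have hcw := hF.2.2.2.2 w hws hwt
        show indeg F' w = outdeg F' w
        have e1 : indeg F' w + indeg X w = indeg F w := h1
        have e2 : outdeg F' w + outdeg X w = outdeg F w := h2
        by_cases hwq : w ∈ q
        · rw [hid, hod, if_pos (hiff1.2 hwq), if_pos (hiff2.2 hwq)] at *
          omega
        · rw [hid, hod, if_neg (fun c => hwq (hiff1.1 c)),
            if_neg (fun c => hwq (hiff2.1 c))] at *
          omega
      have hval' : outdeg F' s + 1 = outdeg F s := by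
        have h2 := filter_sdiff_card hXF (fun a : V × V => a.1 = s)
        have hod : outdeg X s = if s ∈ q.dropLast then 1 else 0 := outdeg_pathArcs s q hq2
        rw [if_pos (head_mem_dropLast hqeq)] at hod
        show outdeg F' s + 1 = outdeg F s
        have e2 : outdeg F' s + outdeg X s = outdeg F s := h2
        omega
      rcases ih F' hcard' hflow' with ⟨P', hP'card, hP'fam, hP'A, hP'arcs⟩
      have hqnotin : q ∉ P' := by
        intro hq
        have := hP'arcs q hq (s, b) hsb
        rw [hF'] at this
        exact (Finset.mem_sdiff.1 this).2 hsbX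
      refine ⟨insert q P', ?_, ⟨?_, ?_⟩, ?_, ?_⟩
      · rw [Finset.card_insert_of_notMem hqnotin, hP'card]
        omega
      · intro p hp
        rcases Finset.mem_insert.1 hp with rfl | hp'
        · exact hqpath
        · exact hP'fam.1 p hp'
      · rw [Finset.coe_insert]
        refine Set.Pairwise.insert hP'fam.2 ?_
        intro p hp hne
        have hdisj : EdgeDisjoint q p := by
          intro a haq hap
          have := hP'arcs p hp a hap
          rw [hF'] at this
          exact (Finset.mem_sdiff.1 this).2 (List.mem_toFinset.2 haq)
        exact ⟨hdisj, fun a hap haq => hdisj a haq hap⟩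
      · intro p hp
        rcases Finset.mem_insert.1 hp with rfl | hp'
        · refine ⟨b, hF.2.1 (s, b) (harcsF _ hsb) rfl, ?_⟩
          rw [hqeq]
          rfl
        · exact hP'A p hp'
      · intro p hp
        rcases Finset.mem_insert.1 hp with rfl | hp'
        · exact harcsF
        · exact fun a ha => (Finset.mem_sdiff.1 (hP'arcs p hp' a ha)).1

end S9

section S10
variable {V : Type*} [Fintype V] [DecidableEq V] {s t : V} {E : Finset (V × V)} {A : Finset V}

lemma filter_partition_card (X : Finset (V × V)) (pred1 pred2 : V × V → Prop)
    [DecidablePred pred1] [DecidablePred pred2] :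
    ((X.filter pred2).filter pred1).card + ((X.filter (fun a => ¬ pred2 a)).filter pred1).card
      = (X.filter pred1).card := by
  rw [Finset.filter_comm, Finset.filter_comm (fun a => ¬ pred2 a)]
  exact Finset.card_filter_add_card_filter_not (s := X.filter pred1) (p := pred2)

lemma augment {F : Finset (V × V)} (hF : IsFlow E s t A F) (hst : s ≠ t)
    {q : List V}
    (hq1 : q.Chain' (fun x y => ((x, y) ∈ E ∧ (x, y) ∉ F ∧ (x = s → y ∈ A)) ∨ (y, x) ∈ F))
    (hq2 : q.Nodup) (hq3 : q.head? = some s) (hq4 : q.getLast? = some t) :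
    ∃ F' : Finset (V × V), IsFlow E s t A F' ∧ outdeg F' s = outdeg F s + 1 := by
  classical
  set Pa : Finset (V × V) := (pathArcs q).toFinset with hPa
  set Bp : Finset (V × V) := Pa.filter (fun a => (a.2, a.1) ∈ F) with hBp
  set W : Finset (V × V) := Pa.filter (fun a => ¬ (a.2, a.1) ∈ F) with hW
  set B : Finset (V × V) := Bp.image Prod.swap with hB
  set F' : Finset (V × V) := (F \ B) ∪ W with hF'
  have hWfwd : ∀ a ∈ W, a ∈ E ∧ a ∉ F ∧ (a.1 = s → a.2 ∈ A) := by
    intro a ha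
    rcases Finset.mem_filter.1 ha with ⟨haPa, hrev⟩
    have := pathArcs_chain hq1 a (List.mem_toFinset.1 haPa)
    rcases this with h | h
    · exact h
    · exact absurd h hrev
  have hBF : B ⊆ F := by
    intro b hb
    rcases Finset.mem_image.1 hb with ⟨a, ha, rfl⟩
    exact (Finset.mem_filter.1 ha).2
  have hWF : ∀ a ∈ W, a ∉ F := fun a ha => (hWfwd a ha).2.1
  have hdisjW : Disjoint (F \ B) W := by
    rw [Finset.disjoint_right]
    intro a haW haFB
    exact hWF a haW (Finset.mem_sdiff.1 haFB).1
  -- degree identities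
  have hswap : ∀ w : V, outdeg B w = indeg Bp w ∧ indeg B w = outdeg Bp w := by
    intro w
    constructor
    · show (B.filter (fun a => a.1 = w)).card = (Bp.filter (fun a => a.2 = w)).card
      rw [hB, Finset.filter_image, Finset.card_image_of_injective _ Prod.swap_injective]
      rfl
    · show (B.filter (fun a => a.2 = w)).card = (Bp.filter (fun a => a.1 = w)).card
      rw [hB, Finset.filter_image, Finset.card_image_of_injective _ Prod.swap_injective]
      rfl
  have hunion : ∀ (pred : V × V → Prop) [DecidablePred pred],
      (F'.filter pred).card = ((F \ B).filter pred).card + (W.filter pred).card := by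
    intro pred _
    rw [hF', Finset.filter_union]
    exact Finset.card_union_of_disjoint
      (Finset.disjoint_filter_filter hdisjW)
  have e1 : ∀ w, outdeg F' w + outdeg B w = outdeg F w + outdeg W w := by
    intro w
    have h1 := hunion (fun a => a.1 = w)
    have h2 := filter_sdiff_card hBF (fun a : V × V => a.1 = w)
    show outdeg F' w + outdeg B w = outdeg F w + outdeg W w
    unfold outdeg at *
    omega
  have e2 : ∀ w, indeg F' w + indeg B w = indeg F w + indeg W w := by
    intro w
    have h1 := hunion (fun a => a.2 = w)
    have h2 := filter_sdiff_card hBF (fun a : V × V => a.2 = w)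
    unfold indeg at *
    omega
  have e5 : ∀ w, indeg Bp w + indeg W w = indeg Pa w := by
    intro w
    have := filter_partition_card Pa (fun a => a.2 = w) (fun a => (a.2, a.1) ∈ F)
    exact this
  have e6 : ∀ w, outdeg Bp w + outdeg W w = outdeg Pa w := by
    intro w
    have := filter_partition_card Pa (fun a => a.1 = w) (fun a => (a.2, a.1) ∈ F)
    exact this
  have hPain : ∀ w, indeg Pa w = if w ∈ q.tail then 1 else 0 := fun w => indeg_pathArcs w q hq2
  have hPaout : ∀ w, outdeg Pa w = if w ∈ q.dropLast then 1 else 0 :=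
    fun w => outdeg_pathArcs w q hq2
  refine ⟨F', ⟨?_, ?_, ?_, ?_, ?_⟩, ?_⟩
  · intro a ha
    rcases Finset.mem_union.1 ha with h | h
    · exact hF.1 (Finset.mem_sdiff.1 h).1
    · exact (hWfwd a h).1
  · intro a ha
    rcases Finset.mem_union.1 ha with h | h
    · exact hF.2.1 a (Finset.mem_sdiff.1 h).1
    · exact (hWfwd a h).2.2
  · intro a ha
    rcases Finset.mem_union.1 ha with h | h
    · exact hF.2.2.1 a (Finset.mem_sdiff.1 h).1
    · intro h2
      have : a.2 ∈ q.tail := mem_pathArcs_snd (List.mem_toFinset.1 (Finset.mem_filter.1 h).1)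
      rw [h2] at this
      exact head_not_mem_tail hq2 hq3 this
  · intro a ha
    rcases Finset.mem_union.1 ha with h | h
    · exact hF.2.2.2.1 a (Finset.mem_sdiff.1 h).1
    · intro h1
      have : a.1 ∈ q.dropLast := mem_pathArcs_fst (List.mem_toFinset.1 (Finset.mem_filter.1 h).1)
      rw [h1] at this
      exact getLast_not_mem_dropLast hq2 hq4 this
  · intro w hws hwt
    have hcF := hF.2.2.2.2 w hws hwt
    have hiff1 : w ∈ q.tail ↔ w ∈ q := mem_tail_iff hq3 hws
    have hiff2 : w ∈ q.dropLast ↔ w ∈ q := mem_dropLast_iff hq4 hwt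
    have hPaeq : indeg Pa w = outdeg Pa w := by
      rw [hPain w, hPaout w]
      by_cases hwq : w ∈ q
      · rw [if_pos (hiff1.2 hwq), if_pos (hiff2.2 hwq)]
      · rw [if_neg (fun c => hwq (hiff1.1 c)), if_neg (fun c => hwq (hiff2.1 c))]
    have := e1 w
    have := e2 w
    have := e5 w
    have := e6 w
    have := (hswap w).1
    have := (hswap w).2
    omega
  · have hin0 : indeg Pa s = 0 := by
      rw [hPain s, if_neg (head_not_mem_tail hq2 hq3)]
    have hout1 : outdeg Pa s = 1 := by
      rcases path_shape hq3 hq4 hst with ⟨b, rest, hqeq⟩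
      rw [hPaout s, if_pos (head_mem_dropLast hqeq)]
    have hBp0 : outdeg Bp s = 0 := by
      unfold outdeg
      rw [Finset.card_eq_zero, Finset.filter_eq_empty_iff]
      intro a ha has
      exact hF.2.2.1 (a.2, a.1) (Finset.mem_filter.1 ha).2 has
    have := e1 s
    have := e5 s
    have := e6 s
    have := (hswap s).1
    omega

end S10

section S11
variable {V : Type*} [Fintype V] [DecidableEq V] {s t : V} {E : Finset (V × V)} {A : Finset V}

lemma strong_duality (hst : s ≠ t) (E : Finset (V × V)) (A : Finset V) :
    ∃ U : Finset V, s ∈ U ∧ t ∉ U ∧ cutCard E s A U ≤ fMax E s t A := by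
  classical
  rcases fMax_mem (E := E) (s := s) (t := t) (A := A) with ⟨P, hcard, hfam, hA⟩
  rcases flow_of_family hst P hfam hA with ⟨F, hF, hval⟩
  set r : V → V → Prop :=
    fun x y => ((x, y) ∈ E ∧ (x, y) ∉ F ∧ (x = s → y ∈ A)) ∨ (y, x) ∈ F with hr
  set U : Finset V := Finset.univ.filter (fun x => Relation.ReflTransGen r s x) with hU
  have hsU : s ∈ U := by
    rw [hU]; exact Finset.mem_filter.2 ⟨Finset.mem_univ _, Relation.ReflTransGen.refl⟩
  have hstep : ∀ x y, x ∈ U → r x y → y ∈ U := by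
    intro x y hx hxy
    rw [hU]
    exact Finset.mem_filter.2 ⟨Finset.mem_univ _,
      Relation.ReflTransGen.tail (Finset.mem_filter.1 (hU ▸ hx)).2 hxy⟩
  have htU : t ∉ U := by
    intro htU
    have hreach : Relation.ReflTransGen r s t := (Finset.mem_filter.1 (hU ▸ htU)).2
    rcases reflTransGen_nodup_chain hreach with ⟨q, hq1, hq2, hq3, hq4⟩
    rcases augment hF hst hq1 hq2 hq3 hq4 with ⟨F', hF'flow, hF'val⟩
    rcases family_of_flow hst F'.card F' le_rfl hF'flow with ⟨P1, hP1card, hP1fam, hP1A, _⟩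
    have hmem : P1.card ∈ fSet E s t A := ⟨P1, rfl, hP1fam, hP1A⟩
    have := le_fMax hmem
    rw [hP1card, hF'val, hval, hcard] at this
    omega
  refine ⟨U, hsU, htU, ?_⟩
  have hsub : E.filter (fun a => a.1 ∈ U ∧ a.2 ∉ U ∧ (a.1 = s → a.2 ∈ A))
      ⊆ F.filter (fun a => a.1 ∈ U ∧ a.2 ∉ U) := by
    intro a ha
    rcases Finset.mem_filter.1 ha with ⟨haE, h1, h2, h3⟩
    have haF : a ∈ F := by
      by_contra haF
      exact h2 (hstep a.1 a.2 h1 (Or.inl ⟨haE, haF, h3⟩))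
    exact Finset.mem_filter.2 ⟨haF, h1, h2⟩
  have hcrossin : (F.filter (fun a => a.1 ∉ U ∧ a.2 ∈ U)).card = 0 := by
    rw [Finset.card_eq_zero, Finset.filter_eq_empty_iff]
    rintro a ha ⟨h1, h2⟩
    exact h1 (hstep a.2 a.1 h2 (Or.inr ha))
  have hcc := flow_cross_count hF hsU htU
  have hle := Finset.card_le_card hsub
  unfold cutCard
  rw [hval, hcard] at hcc
  omega

end S11

section S12
variable {V : Type*} [Fintype V] [DecidableEq V] {s t : V} {E : Finset (V × V)}

lemma point_ineq (u1a u2a u1b u2b xs yS yT yv : Prop)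
    [Decidable u1a] [Decidable u2a] [Decidable u1b] [Decidable u2b]
    [Decidable xs] [Decidable yS] [Decidable yT] [Decidable yv]
    (h1 : yS → yT) (h2 : yv → u1b) (h3 : yv → ¬yT) (h4 : xs → u1a) (h5 : xs → u2a) :
    (if (u1a ∨ u2a) ∧ ¬(u1b ∨ u2b) ∧ (xs → (yv ∨ yT)) then 1 else 0)
      + (if (u1a ∧ u2a) ∧ ¬(u1b ∧ u2b) ∧ (xs → yS) then 1 else 0)
      ≤ (if u1a ∧ ¬u1b ∧ (xs → (yv ∨ yS)) then 1 else 0)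
      + (if u2a ∧ ¬u2b ∧ (xs → yT) then 1 else 0) := by
  split_ifs <;> first | omega | (exfalso; itauto)

lemma exchange (hst : s ≠ t) {S T : Finset V} {v : V} (hsv : (s, v) ∈ E)
    (hST : S ⊆ T) (hvT : v ∉ T)
    (hle : fMax E s t (insert v S) ≤ fMax E s t S) :
    fMax E s t (insert v T) ≤ fMax E s t T := by
  classical
  rcases strong_duality (t := t) hst E (insert v S) with ⟨U1, hsU1, htU1, hc1⟩
  rcases strong_duality (t := t) hst E T with ⟨U2, hsU2, htU2, hc2⟩
  have hvS : v ∉ S := fun h => hvT (hST h)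
  have hwk1 : fMax E s t S ≤ cutCard E s S U1 := weak_duality hsU1 htU1
  have hvU1 : v ∈ U1 := by
    by_contra hvU1
    have hstrict : E.filter (fun a => a.1 ∈ U1 ∧ a.2 ∉ U1 ∧ (a.1 = s → a.2 ∈ S))
        ⊂ E.filter (fun a => a.1 ∈ U1 ∧ a.2 ∉ U1 ∧ (a.1 = s → a.2 ∈ insert v S)) := by
      refine Finset.ssubset_iff_of_subset ?_ |>.2 ?_
      · intro a ha
        rcases Finset.mem_filter.1 ha with ⟨haE, h1, h2, h3⟩
        exact Finset.mem_filter.2 ⟨haE, h1, h2, fun hs => Finset.mem_insert_of_mem (h3 hs)⟩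
      · refine ⟨(s, v), ?_, ?_⟩
        · exact Finset.mem_filter.2 ⟨hsv, hsU1, hvU1, fun _ => Finset.mem_insert_self _ _⟩
        · intro hmem
          rcases Finset.mem_filter.1 hmem with ⟨_, _, _, h3⟩
          exact hvS (h3 rfl)
    have := Finset.card_lt_card hstrict
    unfold cutCard at hc1 hwk1
    omega
  -- submodular cut inequality
  have hsubmod : cutCard E s (insert v T) (U1 ∪ U2) + cutCard E s S (U1 ∩ U2)
      ≤ cutCard E s (insert v S) U1 + cutCard E s T U2 := by
    unfold cutCard
    rw [Finset.card_filter, Finset.card_filter, Finset.card_filter, Finset.card_filter,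
      ← Finset.sum_add_distrib, ← Finset.sum_add_distrib]
    refine Finset.sum_le_sum ?_
    intro a _
    have hS' : a.2 ∈ S → a.2 ∈ T := fun h => hST h
    have hv1 : a.2 = v → a.2 ∈ U1 := fun h => h ▸ hvU1
    have hvT' : a.2 = v → a.2 ∉ T := fun h => h ▸ hvT
    have hs1 : a.1 = s → a.1 ∈ U1 := fun h => h ▸ hsU1
    have hs2 : a.1 = s → a.1 ∈ U2 := fun h => h ▸ hsU2
    have key := point_ineq (a.1 ∈ U1) (a.1 ∈ U2) (a.2 ∈ U1) (a.2 ∈ U2) (a.1 = s)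
      (a.2 ∈ S) (a.2 ∈ T) (a.2 = v) hS' hv1 hvT' hs1 hs2
    simpa [Finset.mem_union, Finset.mem_inter, Finset.mem_insert] using key
  have hwk3 : fMax E s t S ≤ cutCard E s S (U1 ∩ U2) :=
    weak_duality (Finset.mem_inter.2 ⟨hsU1, hsU2⟩) (fun h => htU1 (Finset.mem_inter.1 h).1)
  have hwk4 : fMax E s t (insert v T) ≤ cutCard E s (insert v T) (U1 ∪ U2) :=
    weak_duality (Finset.mem_union_left _ hsU1)
      (fun h => by rcases Finset.mem_union.1 h with h | h; exact htU1 h; exact htU2 h)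
  omega

end S12


/-- **Greedy correctness.** Let `l = v₁, …, v_d` be an enumeration of the out-neighbors
of `s`, and build `S_0 = ∅`, `S_j = S_{j-1} ∪ {v_j}` if `f(S_{j-1} ∪ {v_j}) > f(S_{j-1})`
and `S_j = S_{j-1}` otherwise. Then `f(S_d) = |S_d|` and `|S_d|` is the maximum
cardinality of a set of pairwise edge-disjoint directed paths from `s` to `t` in `G`. -/
theorem greedy_first_arcs_achieve_max {V : Type*} [Fintype V] [DecidableEq V]
    (E : Finset (V × V)) (s t : V) (hst : s ≠ t)
    (l : List V) (hl : l.Nodup) (hmem : ∀ v : V, v ∈ l ↔ (s, v) ∈ E)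
    (S : ℕ → Finset V) (hS0 : S 0 = ∅)
    (hSstep : ∀ (j : ℕ) (hj : j < l.length),
      S (j + 1) =
        if fMax E s t (S j) < fMax E s t (insert (l.get ⟨j, hj⟩) (S j))
        then insert (l.get ⟨j, hj⟩) (S j) else S j) :
    fMax E s t (S l.length) = (S l.length).card ∧
    IsGreatest {n | ∃ P : Finset (List V), P.card = n ∧ IsEdgeDisjointFamily E s t P}
      (S l.length).card := by
  classical
  have inv : ∀ j, j ≤ l.length → fMax E s t (S j) = (S j).card ∧
      S j ⊆ (l.take j).toFinset ∧
      fMax E s t ((l.take j).toFinset) = fMax E s t (S j) := by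
    intro j
    induction j with
    | zero => intro _; simp [hS0, fMax_empty]
    | succ j ih =>
      intro hj1
      have hj : j < l.length := by omega
      obtain ⟨ih1, ih2, ih3⟩ := ih (le_of_lt hj)
      set v : V := l.get ⟨j, hj⟩ with hv
      have hvl : v ∈ l := by rw [hv]; exact l.get_mem _
      have hsvE : (s, v) ∈ E := (hmem v).1 hvl
      have hvdrop : v ∈ l.drop j := by
        have h0 : 0 < (l.drop j).length := by
          rw [List.length_drop]; omega
        have : (l.drop j)[0] = l[j] := by
          rw [List.getElem_drop]
          norm_num
        rw [hv, List.get_eq_getElem, ← this]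
        exact List.getElem_mem h0
      have hvT : v ∉ (l.take j).toFinset := by
        intro hmemT
        have hnd : (l.take j ++ l.drop j).Nodup := by
          rw [List.take_append_drop]; exact hl
        exact (List.disjoint_of_nodup_append hnd) (List.mem_toFinset.1 hmemT) hvdrop
      have htake : (l.take (j + 1)).toFinset = insert v ((l.take j).toFinset) := by
        rw [List.take_succ]
        have : l[j]? = some v := by
          rw [List.getElem?_eq_getElem hj, hv, List.get_eq_getElem]
        rw [this]
        ext x; simp [or_comm]
      have hstep := hSstep j hj
      rw [← hv] at hstep
      by_cases hacc : fMax E s t (S j) < fMax E s t (insert v (S j))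
      · rw [if_pos hacc] at hstep
        have hvS : v ∉ S j := fun h => hvT (ih2 h)
        have hub := fMax_insert_le (E := E) (s := s) (t := t) (A := S j) v
        have hcard : (insert v (S j)).card = (S j).card + 1 :=
          Finset.card_insert_of_notMem hvS
        have hfS : fMax E s t (S (j + 1)) = (S (j + 1)).card := by
          rw [hstep, hcard]
          omega
        refine ⟨hfS, ?_, ?_⟩
        · rw [hstep, htake]
          exact Finset.insert_subset_insert _ ih2
        · rw [htake, hstep]
          have hmono1 : fMax E s t (insert v (S j)) ≤ fMax E s t (insert v ((l.take j).toFinset)) :=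
            fMax_mono (Finset.insert_subset_insert _ ih2)
          have hub2 := fMax_insert_le (E := E) (s := s) (t := t) (A := (l.take j).toFinset) v
          omega
      · rw [if_neg hacc] at hstep
        have hle : fMax E s t (insert v (S j)) ≤ fMax E s t (S j) := not_lt.1 hacc
        have hex := exchange hst hsvE ih2 hvT hle
        refine ⟨by rw [hstep]; exact ih1, ?_, ?_⟩
        · rw [hstep, htake]
          exact ih2.trans (Finset.subset_insert _ _)
        · rw [htake, hstep]
          have hmono1 : fMax E s t ((l.take j).toFinset)
              ≤ fMax E s t (insert v ((l.take j).toFinset)) :=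
            fMax_mono (Finset.subset_insert _ _)
          omega
  obtain ⟨h1, _, h3⟩ := inv l.length le_rfl
  rw [List.take_length] at h3
  have hGeq : {n | ∃ P : Finset (List V), P.card = n ∧ IsEdgeDisjointFamily E s t P}
      = fSet E s t l.toFinset := by
    ext n
    constructor
    · rintro ⟨P, hc, hf⟩
      refine ⟨P, hc, hf, ?_⟩
      intro p hp
      rcases path_shape (hf.1 p hp).2.2.1 (hf.1 p hp).2.2.2 hst with ⟨b, rest, hpeq⟩
      have hsbE : (s, b) ∈ E := by
        have := (hf.1 p hp).2.1
        rw [hpeq] at this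
        exact (List.isChain_cons_cons.1 this).1
      refine ⟨b, List.mem_toFinset.2 ((hmem b).2 hsbE), ?_⟩
      rw [hpeq]
      rfl
    · rintro ⟨P, hc, hf, _⟩
      exact ⟨P, hc, hf⟩
  have hfin : fMax E s t l.toFinset = (S l.length).card := by rw [h3, h1]
  refine ⟨h1, ?_, ?_⟩
  · rw [hGeq, ← hfin]
    exact fMax_mem
  · intro n hn
    rw [hGeq] at hn
    have := le_fMax hn
    omega
end
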